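/- arXiv:1508.05175 — 7 statements merged into one kernel-verified Lean document; each statement's English description precedes it below -/
import Mathlib

section
/- Under the new placement with distinct demands, if K ≥ m (so that t := K/m satisfies 1 ≤ t ≤ K), then the expected rate satisfies E[R] ≥ K·(1 − 1/m) − F'·K²·exp(−2t·(1 − t/K)·(1 − 1/K)). -/
open MeasureTheory ProbabilityTheory Finset
open scoped ENNReal

private lemma sup_bound' {α : Type*} [DecidableEq α] (S : Finset α) (hS : S.Nonempty) (f : α → ℕ) :
    ∑ k ∈ S, f k ≤ S.sup f + ∑ k ∈ S, ∑ k' ∈ S.erase k, f k * f k' := by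
  obtain ⟨a, ha, hfa⟩ := Finset.exists_mem_eq_sup S hS f
  rw [← Finset.add_sum_erase _ f ha, hfa]
  refine Nat.add_le_add_left ?_ _
  calc ∑ k ∈ S.erase a, f k ≤ ∑ k' ∈ S.erase a, f a * f k' := by
        refine Finset.sum_le_sum fun k hk => ?_
        rcases Nat.eq_zero_or_pos (f k) with h | h
        · simp [h]
        · have hle : f k ≤ f a := hfa ▸ Finset.le_sup (Finset.mem_of_mem_erase hk)
          exact Nat.le_mul_of_pos_left _ (lt_of_lt_of_le h hle)
    _ ≤ ∑ k ∈ S, ∑ k' ∈ S.erase k, f k * f k' :=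
        Finset.single_le_sum (f := fun k => ∑ k' ∈ S.erase k, f k * f k')
          (fun i _ => Nat.zero_le _) ha

private lemma reindex_sum' {K : ℕ} (hK : 2 ≤ K) (x y : ℝ) (hx : 0 ≤ x) (hy : 0 ≤ y) :
    ∑ S ∈ (univ : Finset (Finset (Fin K))).filter (fun S => S.Nonempty),
      ∑ _k ∈ S, ∑ _k' ∈ S.erase _k, x ^ (S.card - 1) * y ^ (K - S.card + 1)
    ≤ (K : ℝ) * (K : ℝ) * ((x * y) * (x + y) ^ (K - 2)) := by
  classical
  set c : Finset (Fin K) → ℝ := fun S => x ^ (S.card - 1) * y ^ (K - S.card + 1) with hc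
  have hCnn : 0 ≤ (x * y) * (x + y) ^ (K - 2) := by positivity
  have hcore : ∀ k k' : Fin K, k' ≠ k →
      ∑ S ∈ (univ : Finset (Finset (Fin K))).filter (fun S => k ∈ S ∧ k' ∈ S.erase k), c S
        = (x * y) * (x + y) ^ (K - 2) := by
    intro k k' hkk
    set u : Finset (Fin K) := (univ.erase k).erase k' with hu'
    have hu : u.card = K - 2 := by
      have h1 : (univ.erase k).card = K - 1 := by
        rw [Finset.card_erase_of_mem (Finset.mem_univ k)]; simp
      have h2 : k' ∈ univ.erase k := Finset.mem_erase.mpr ⟨hkk, Finset.mem_univ _⟩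
      rw [hu', Finset.card_erase_of_mem h2, h1]
      omega
    have hbij : ∑ S ∈ (univ : Finset (Finset (Fin K))).filter (fun S => k ∈ S ∧ k' ∈ S.erase k), c S
        = ∑ T ∈ u.powerset, x ^ (T.card + 1) * y ^ (K - 1 - T.card) := by
      refine Finset.sum_nbij' (fun S => (S.erase k).erase k') (fun T => insert k (insert k' T))
        ?_ ?_ ?_ ?_ ?_
      · intro S hS
        rw [Finset.mem_powerset]
        intro j hj
        have hj1 := Finset.mem_erase.mp hj
        have hj2 := Finset.mem_erase.mp hj1.2
        exact Finset.mem_erase.mpr ⟨hj1.1, Finset.mem_erase.mpr ⟨hj2.1, Finset.mem_univ _⟩⟩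
      · intro T hT
        simp only [Finset.mem_filter, Finset.mem_univ, true_and]
        refine ⟨Finset.mem_insert_self _ _, Finset.mem_erase.mpr ⟨hkk, ?_⟩⟩
        exact Finset.mem_insert_of_mem (Finset.mem_insert_self _ _)
      · intro S hS
        obtain ⟨hkS, hk'S⟩ := Finset.mem_filter.mp hS |>.2
        show insert k (insert k' ((S.erase k).erase k')) = S
        rw [Finset.insert_erase hk'S, Finset.insert_erase hkS]
      · intro T hT
        have hTu := Finset.mem_powerset.mp hT
        have hkT : k ∉ T := fun h => ((Finset.mem_erase.mp (Finset.mem_erase.mp (hTu h)).2).1) rfl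
        have hk'T : k' ∉ T := fun h => (Finset.mem_erase.mp (hTu h)).1 rfl
        have h1 : k ∉ insert k' T := by
          simp only [Finset.mem_insert]
          rintro (h | h)
          · exact hkk h.symm
          · exact hkT h
        show ((insert k (insert k' T)).erase k).erase k' = T
        rw [Finset.erase_insert h1, Finset.erase_insert hk'T]
      · intro S hS
        obtain ⟨hkS, hk'S⟩ := Finset.mem_filter.mp hS |>.2
        have hcard2 : ((S.erase k).erase k').card = S.card - 1 - 1 := by
          rw [Finset.card_erase_of_mem hk'S, Finset.card_erase_of_mem hkS]
        have hS2 : 2 ≤ S.card := by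
          have h3 : 1 ≤ (S.erase k).card := Finset.card_pos.mpr ⟨k', hk'S⟩
          have h4 := Finset.card_erase_of_mem hkS
          omega
        show c S = x ^ (((S.erase k).erase k').card + 1) * y ^ (K - 1 - ((S.erase k).erase k').card)
        rw [hc, hcard2]
        have e1 : S.card - 1 - 1 + 1 = S.card - 1 := by omega
        have e2 : K - 1 - (S.card - 1 - 1) = K - S.card + 1 := by
          have hSK : S.card ≤ K := by simpa using Finset.card_le_univ S
          omega
        rw [e1, e2]
    rw [hbij]
    have hbin : ∑ T ∈ u.powerset, x ^ T.card * y ^ (K - 2 - T.card) = (x + y) ^ (K - 2) := by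
      calc ∑ T ∈ u.powerset, x ^ T.card * y ^ (K - 2 - T.card)
          = ∑ T ∈ u.powerset, (∏ _i ∈ T, x) * ∏ _i ∈ u \ T, y := by
            refine Finset.sum_congr rfl fun T hT => ?_
            rw [Finset.prod_const, Finset.prod_const,
              Finset.card_sdiff_of_subset (Finset.mem_powerset.mp hT), hu]
        _ = ∏ _i ∈ u, (x + y) := (Finset.prod_add _ _ _).symm
        _ = (x + y) ^ (K - 2) := by rw [Finset.prod_const, hu]
    calc ∑ T ∈ u.powerset, x ^ (T.card + 1) * y ^ (K - 1 - T.card)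
        = ∑ T ∈ u.powerset, (x * y) * (x ^ T.card * y ^ (K - 2 - T.card)) := by
          refine Finset.sum_congr rfl fun T hT => ?_
          have hTc : T.card ≤ K - 2 := by
            rw [← hu]; exact Finset.card_le_card (Finset.mem_powerset.mp hT)
          have h1 : K - 1 - T.card = (K - 2 - T.card) + 1 := by omega
          rw [h1, pow_succ, pow_succ]; ring
      _ = (x * y) * ∑ T ∈ u.powerset, x ^ T.card * y ^ (K - 2 - T.card) := by
          rw [Finset.mul_sum]
      _ = (x * y) * (x + y) ^ (K - 2) := by rw [hbin]
  have hexp : ∀ S : Finset (Fin K), (∑ k ∈ S, ∑ k' ∈ S.erase k, c S)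
      = ∑ k : Fin K, ∑ k' : Fin K, if k ∈ S ∧ k' ∈ S.erase k then c S else 0 := by
    intro S
    have h1 : ∀ k : Fin K, (∑ k' : Fin K, if k ∈ S ∧ k' ∈ S.erase k then c S else 0)
        = if k ∈ S then ∑ k' ∈ S.erase k, c S else 0 := by
      intro k
      by_cases hk : k ∈ S
      · simp only [hk, true_and, if_true]
        rw [Finset.sum_ite_mem, Finset.univ_inter]
      · simp [hk]
    rw [Finset.sum_congr rfl (fun k _ => h1 k), Finset.sum_ite_mem, Finset.univ_inter]
  calc ∑ S ∈ (univ : Finset (Finset (Fin K))).filter (fun S => S.Nonempty),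
        ∑ _k ∈ S, ∑ _k' ∈ S.erase _k, c S
      = ∑ S : Finset (Fin K), ∑ k ∈ S, ∑ k' ∈ S.erase k, c S := by
        refine Finset.sum_subset (Finset.filter_subset _ _) fun S _ hS => ?_
        have : S = ∅ := by
          by_contra h
          exact hS (Finset.mem_filter.mpr ⟨Finset.mem_univ _,
            Finset.nonempty_iff_ne_empty.mpr h⟩)
        simp [this]
    _ = ∑ S : Finset (Fin K), ∑ k : Fin K, ∑ k' : Fin K,
          (if k ∈ S ∧ k' ∈ S.erase k then c S else 0) :=
        Finset.sum_congr rfl fun S _ => hexp S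
    _ = ∑ k : Fin K, ∑ k' : Fin K, ∑ S : Finset (Fin K),
          (if k ∈ S ∧ k' ∈ S.erase k then c S else 0) := by
        rw [Finset.sum_comm]
        exact Finset.sum_congr rfl fun k _ => Finset.sum_comm
    _ ≤ ∑ _k : Fin K, ∑ _k' : Fin K, ((x * y) * (x + y) ^ (K - 2)) := by
        refine Finset.sum_le_sum fun k _ => Finset.sum_le_sum fun k' _ => ?_
        by_cases hkk : k' = k
        · have hz : (∑ S : Finset (Fin K), if k ∈ S ∧ k' ∈ S.erase k then c S else 0) = 0 :=
            Finset.sum_eq_zero fun S _ => by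
              have hn : ¬(k ∈ S ∧ k' ∈ S.erase k) := fun h => (Finset.mem_erase.mp h.2).1 hkk
              rw [if_neg hn]
          rw [hz]; exact hCnn
        · rw [← Finset.sum_filter, hcore k k' hkk]
    _ = (K : ℝ) * (K : ℝ) * ((x * y) * (x + y) ^ (K - 2)) := by
        simp [Finset.sum_const, Finset.card_univ, Fintype.card_fin, nsmul_eq_mul]; ring

set_option maxHeartbeats 2000000 in
/-- Coded caching with `K` users, `N > K` files, cache size `M` files
(`0 < M ≤ N`), `m = ⌈N/M⌉ ≥ 2`, each file split into `F' ≥ 1` groups of `m` packets each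
(`F = m·F'`), under the *new placement*: an i.i.d. family `U (k,n,g)` uniform on `Fin m`,
where packet `f` of group `g` of file `n` is stored in cache `k` iff `U (k,n,g) = f`.
For an injective demand vector `d` and nonempty `S ⊆ [K]`, `V ω S k` counts the packets of
file `d k` stored in exactly the caches of `S \ {k}`, and the greedy clique-cover rate is
`R = (1/(m·F')) · ∑_{S ≠ ∅} max_{k ∈ S} V ω S k`.
If `K ≥ m` (so `t := K/m` satisfies `1 ≤ t ≤ K`), then
`E[R] ≥ K·(1 − 1/m) − F'·K²·exp(−2t·(1 − t/K)·(1 − 1/K))`. -/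
theorem stmt0
    {Ω : Type*} [MeasurableSpace Ω] (μ : Measure Ω) [IsProbabilityMeasure μ]
    (K N m F' : ℕ) (M : ℝ)
    (hM : 0 < M) (hMN : M ≤ (N : ℝ)) (hNK : K < N) (hF' : 0 < F')
    (hm : m = ⌈(N : ℝ) / M⌉₊) (hm2 : 2 ≤ m) (hKm : m ≤ K)
    (U : Fin K × Fin N × Fin F' → Ω → Fin m)
    (hU_meas : ∀ i, Measurable (U i))
    (hU_indep : iIndepFun U μ)
    (hU_unif : ∀ i (f : Fin m), μ {ω | U i ω = f} = ((m : ℝ≥0∞))⁻¹)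
    (d : Fin K → Fin N) (hd : Function.Injective d)
    (V : Ω → Finset (Fin K) → Fin K → ℕ)
    (hV : ∀ ω S k, V ω S k =
      (Finset.univ.filter (fun p : Fin F' × Fin m =>
        ∀ j : Fin K, (U (j, d k, p.1) ω = p.2 ↔ j ∈ S.erase k))).card)
    (R : Ω → ℝ)
    (hR : ∀ ω, R ω = (1 / ((m : ℝ) * (F' : ℝ))) *
      ∑ S ∈ Finset.univ.filter (fun S : Finset (Fin K) => S.Nonempty),
        ((S.sup (fun k => V ω S k) : ℕ) : ℝ)) :
    (K : ℝ) * (1 - 1 / (m : ℝ)) -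
        (F' : ℝ) * (K : ℝ) ^ 2 *
          Real.exp (-2 * ((K : ℝ) / (m : ℝ)) * (1 - ((K : ℝ) / (m : ℝ)) / (K : ℝ)) *
            (1 - 1 / (K : ℝ)))
      ≤ ∫ ω, R ω ∂μ := by
  classical
  have hK2 : 2 ≤ K := le_trans hm2 hKm
  have hm0 : (0:ℝ) < (m:ℝ) := by exact_mod_cast (by omega : 0 < m)
  have hF0 : (0:ℝ) < (F':ℝ) := by exact_mod_cast hF'
  have hK0 : (0:ℝ) < (K:ℝ) := by exact_mod_cast (by omega : 0 < K)
  -- the full placement map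
  set J : Ω → ((Fin K × Fin N × Fin F') → Fin m) := fun ω i => U i ω with hJdef
  have hJ : Measurable J := measurable_pi_lambda _ hU_meas
  have hInt : ∀ g : ((Fin K × Fin N × Fin F') → Fin m) → ℝ,
      Integrable (fun ω => g (J ω)) μ := by
    intro g
    have hmg : Measurable fun ω => g (J ω) := (measurable_of_countable g).comp hJ
    refine (integrable_const (∑ b : (Fin K × Fin N × Fin F') → Fin m, |g b|)).mono'
      hmg.aestronglyMeasurable (ae_of_all _ fun ω => ?_)
    rw [Real.norm_eq_abs]
    exact Finset.single_le_sum (fun b _ => abs_nonneg (g b)) (Finset.mem_univ _)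
  set Vb : ((Fin K × Fin N × Fin F') → Fin m) → Finset (Fin K) → Fin K → ℕ :=
    fun u S k => (Finset.univ.filter (fun p : Fin F' × Fin m =>
      ∀ j : Fin K, (u (j, d k, p.1) = p.2 ↔ j ∈ S.erase k))).card with hVbdef
  have hVb : ∀ ω S k, V ω S k = Vb (J ω) S k := by
    intro ω S k
    rw [hV, hVbdef, hJdef]
  -- deterministic identity: each user needs F'(m-1) packets in total
  have hA2 : ∀ (ω : Ω) (k : Fin K),
      (∑ S ∈ univ.filter (fun S : Finset (Fin K) => k ∈ S), V ω S k) = F' * (m - 1) := by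
    intro ω k
    have hrw : ∀ S ∈ univ.filter (fun S : Finset (Fin K) => k ∈ S), V ω S k =
        ∑ p : Fin F' × Fin m,
          if (∀ j : Fin K, (U (j, d k, p.1) ω = p.2 ↔ j ∈ S.erase k)) then 1 else 0 := by
      intro S _
      rw [hV, Finset.card_filter]
    rw [Finset.sum_congr rfl hrw, Finset.sum_comm]
    have hpack : ∀ p : Fin F' × Fin m,
        (∑ S ∈ univ.filter (fun S : Finset (Fin K) => k ∈ S),
          if (∀ j : Fin K, (U (j, d k, p.1) ω = p.2 ↔ j ∈ S.erase k)) then 1 else 0)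
        = if U (k, d k, p.1) ω = p.2 then 0 else 1 := by
      intro p
      set T : Finset (Fin K) := univ.filter (fun j => U (j, d k, p.1) ω = p.2) with hT
      have hcond : ∀ S : Finset (Fin K),
          (∀ j : Fin K, (U (j, d k, p.1) ω = p.2 ↔ j ∈ S.erase k)) ↔ S.erase k = T := by
        intro S
        constructor
        · intro h
          ext j
          rw [hT, Finset.mem_filter]
          exact ⟨fun hj => ⟨Finset.mem_univ _, (h j).mpr hj⟩, fun hj => (h j).mp hj.2⟩
        · intro h j
          rw [h, hT, Finset.mem_filter]
          exact ⟨fun hj => ⟨Finset.mem_univ _, hj⟩, fun hj => hj.2⟩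
      by_cases hkT : k ∈ T
      · have hU : U (k, d k, p.1) ω = p.2 := (Finset.mem_filter.mp hkT).2
        rw [if_pos hU]
        refine Finset.sum_eq_zero fun S hS => ?_
        rw [if_neg]
        intro h
        rw [hcond S] at h
        exact (Finset.notMem_erase k S) (h ▸ hkT)
      · have hU : ¬ (U (k, d k, p.1) ω = p.2) :=
          fun h => hkT (Finset.mem_filter.mpr ⟨Finset.mem_univ _, h⟩)
        rw [if_neg hU]
        have key : ∀ S ∈ univ.filter (fun S : Finset (Fin K) => k ∈ S),
            ((∀ j : Fin K, (U (j, d k, p.1) ω = p.2 ↔ j ∈ S.erase k)) ↔ S = insert k T) := by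
          intro S hS
          have hkS : k ∈ S := (Finset.mem_filter.mp hS).2
          rw [hcond S]
          constructor
          · intro h; rw [← h, Finset.insert_erase hkS]
          · intro h; rw [h, Finset.erase_insert hkT]
        calc ∑ S ∈ univ.filter (fun S : Finset (Fin K) => k ∈ S),
              (if (∀ j : Fin K, (U (j, d k, p.1) ω = p.2 ↔ j ∈ S.erase k)) then (1:ℕ) else 0)
            = ∑ S ∈ univ.filter (fun S : Finset (Fin K) => k ∈ S),
              (if S = insert k T then (1:ℕ) else 0) := by
              refine Finset.sum_congr rfl fun S hS => ?_
              rw [if_congr (key S hS) rfl rfl]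
          _ = 1 := by
              rw [Finset.sum_ite_eq' (univ.filter (fun S : Finset (Fin K) => k ∈ S))
                (insert k T) (fun _ => (1:ℕ))]
              have hmem : insert k T ∈ univ.filter (fun S : Finset (Fin K) => k ∈ S) :=
                Finset.mem_filter.mpr ⟨Finset.mem_univ _, Finset.mem_insert_self _ _⟩
              rw [if_pos hmem]
    rw [Finset.sum_congr rfl (fun p _ => hpack p)]
    rw [Fintype.sum_prod_type]
    have hfib : ∀ g : Fin F', (∑ f : Fin m, if U (k, d k, g) ω = f then (0:ℕ) else 1) = m - 1 := by
      intro g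
      rw [Finset.sum_ite, Finset.sum_const, Finset.sum_const]
      simp only [smul_eq_mul, mul_zero, mul_one, zero_add]
      have hfn : univ.filter (fun f : Fin m => ¬ U (k, d k, g) ω = f)
          = univ.erase (U (k, d k, g) ω) := by
        ext f
        simp only [Finset.mem_filter, Finset.mem_univ, true_and, Finset.mem_erase, and_true]
        exact ⟨fun h => fun e => h e.symm, fun h => fun e => h e.symm⟩
      rw [hfn, Finset.card_erase_of_mem (Finset.mem_univ _)]
      simp
    rw [Finset.sum_congr rfl (fun g _ => hfib g), Finset.sum_const]
    simp [mul_comm]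
  -- swap sums
  have hswap : ∀ ω, (∑ S ∈ univ.filter (fun S : Finset (Fin K) => S.Nonempty),
      ∑ k ∈ S, V ω S k) = K * (F' * (m - 1)) := by
    intro ω
    calc (∑ S ∈ univ.filter (fun S : Finset (Fin K) => S.Nonempty), ∑ k ∈ S, V ω S k)
        = ∑ S : Finset (Fin K), ∑ k ∈ S, V ω S k := by
          refine Finset.sum_subset (Finset.filter_subset _ _) fun S _ hS => ?_
          have : S = ∅ := by
            by_contra h
            exact hS (Finset.mem_filter.mpr ⟨Finset.mem_univ _,
              Finset.nonempty_iff_ne_empty.mpr h⟩)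
          simp [this]
      _ = ∑ S : Finset (Fin K), ∑ k : Fin K, (if k ∈ S then V ω S k else 0) := by
          refine Finset.sum_congr rfl fun S _ => ?_
          rw [Finset.sum_ite_mem, Finset.univ_inter]
      _ = ∑ k : Fin K, ∑ S : Finset (Fin K), (if k ∈ S then V ω S k else 0) := Finset.sum_comm
      _ = ∑ k : Fin K, ∑ S ∈ univ.filter (fun S : Finset (Fin K) => k ∈ S), V ω S k := by
          refine Finset.sum_congr rfl fun k _ => (Finset.sum_filter _ _).symm
      _ = ∑ _k : Fin K, (F' * (m-1)) := Finset.sum_congr rfl fun k _ => hA2 ω k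
      _ = K * (F' * (m-1)) := by simp [Finset.sum_const, Finset.card_univ]
  -- the pair-sum error term
  set W : Ω → ℝ := fun ω => ∑ S ∈ univ.filter (fun S : Finset (Fin K) => S.Nonempty),
    ∑ k ∈ S, ∑ k' ∈ S.erase k, (V ω S k : ℝ) * (V ω S k' : ℝ) with hWdef
  -- pointwise lower bound on R
  have hpoint : ∀ ω, (K:ℝ) * (1 - 1/(m:ℝ)) - (1/((m:ℝ)*(F':ℝ))) * W ω ≤ R ω := by
    intro ω
    have hNat : K * (F' * (m-1)) ≤
        (∑ S ∈ univ.filter (fun S : Finset (Fin K) => S.Nonempty),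
          S.sup (fun k => V ω S k))
        + ∑ S ∈ univ.filter (fun S : Finset (Fin K) => S.Nonempty),
            ∑ k ∈ S, ∑ k' ∈ S.erase k, V ω S k * V ω S k' := by
      rw [← hswap ω, ← Finset.sum_add_distrib]
      refine Finset.sum_le_sum fun S hS => ?_
      exact sup_bound' S ((Finset.mem_filter.mp hS).2) _
    have heq : (K:ℝ) * (1 - 1/(m:ℝ)) - (1/((m:ℝ)*(F':ℝ))) * W ω
        = (1/((m:ℝ)*(F':ℝ))) * ((K:ℝ) * ((F':ℝ) * ((m:ℝ)-1)) - W ω) := by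
      field_simp
    rw [hR ω, heq]
    refine mul_le_mul_of_nonneg_left ?_ (by positivity)
    have h : ((K * (F' * (m-1)) : ℕ) : ℝ) ≤ _ := Nat.cast_le.mpr hNat
    push_cast [Nat.cast_sub (show 1 ≤ m by omega)] at h
    simp only [hWdef]
    linarith [h]
  -- integrability facts
  have hIntVV : ∀ S k k', Integrable (fun ω => (V ω S k : ℝ) * (V ω S k' : ℝ)) μ := by
    intro S k k'
    refine (hInt (fun u => (Vb u S k : ℝ) * (Vb u S k' : ℝ))).congr (ae_of_all _ fun ω => ?_)
    show (Vb (J ω) S k : ℝ) * (Vb (J ω) S k' : ℝ) = (V ω S k : ℝ) * (V ω S k' : ℝ)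
    rw [hVb ω S k, hVb ω S k']
  have hIntW : Integrable W μ := by
    refine (hInt (fun u => ∑ S ∈ univ.filter (fun S : Finset (Fin K) => S.Nonempty),
      ∑ k ∈ S, ∑ k' ∈ S.erase k, (Vb u S k : ℝ) * (Vb u S k' : ℝ))).congr
      (ae_of_all _ fun ω => ?_)
    simp only [hWdef, hVb]
  have hIntR : Integrable R μ := by
    refine (hInt (fun u => (1 / ((m : ℝ) * (F' : ℝ))) *
      ∑ S ∈ univ.filter (fun S : Finset (Fin K) => S.Nonempty),
        ((S.sup (fun k => Vb u S k) : ℕ) : ℝ))).congr (ae_of_all _ fun ω => ?_)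
    show (1 / ((m : ℝ) * (F' : ℝ))) *
      ∑ S ∈ univ.filter (fun S : Finset (Fin K) => S.Nonempty),
        ((S.sup (fun k => Vb (J ω) S k) : ℕ) : ℝ) = R ω
    rw [hR ω]
    congr 1
    refine Finset.sum_congr rfl fun S _ => ?_
    congr 1
    exact Finset.sup_congr rfl fun k _ => (hVb ω S k).symm
  -- joint probability of two placement events
  have hprob : ∀ (S : Finset (Fin K)) (k k' : Fin K), k ∈ S → k' ∈ S.erase k →
      ∀ p q : Fin F' × Fin m,
      μ {ω | (∀ j : Fin K, (U (j, d k, p.1) ω = p.2 ↔ j ∈ S.erase k)) ∧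
             (∀ j : Fin K, (U (j, d k', q.1) ω = q.2 ↔ j ∈ S.erase k'))}
        = ((m:ℝ≥0∞)⁻¹ ^ (S.card - 1) * (1 - (m:ℝ≥0∞)⁻¹) ^ (K - (S.card - 1)))
          * ((m:ℝ≥0∞)⁻¹ ^ (S.card - 1) * (1 - (m:ℝ≥0∞)⁻¹) ^ (K - (S.card - 1))) := by
    intro S k k' hk hk' p q
    have hkk : k' ≠ k := (Finset.mem_erase.mp hk').1
    have hk'S : k' ∈ S := (Finset.mem_erase.mp hk').2
    have hdkk : d k' ≠ d k := fun h => hkk (hd h)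
    set sets : (Fin K × Fin N × Fin F') → Set (Fin m) := fun i =>
      if i.2.1 = d k then {x : Fin m | x = p.2 ↔ i.1 ∈ S.erase k}
      else {x : Fin m | x = q.2 ↔ i.1 ∈ S.erase k'} with hsets
    have hsets1 : ∀ j : Fin K, sets (j, d k, p.1) = {x : Fin m | x = p.2 ↔ j ∈ S.erase k} := by
      intro j; simp [hsets]
    have hsets2 : ∀ j : Fin K, sets (j, d k', q.1) = {x : Fin m | x = q.2 ↔ j ∈ S.erase k'} := by
      intro j; simp [hsets, hdkk]
    set B : Finset (Fin K × Fin N × Fin F') :=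
      (univ.image fun j : Fin K => (j, d k, p.1)) ∪ (univ.image fun j : Fin K => (j, d k', q.1))
      with hB
    have hmeas_sets : ∀ i ∈ B, MeasurableSet (sets i) :=
      fun i _ => (Set.to_countable _).measurableSet
    have hEq : {ω | (∀ j : Fin K, (U (j, d k, p.1) ω = p.2 ↔ j ∈ S.erase k)) ∧
             (∀ j : Fin K, (U (j, d k', q.1) ω = q.2 ↔ j ∈ S.erase k'))}
        = ⋂ i ∈ B, U i ⁻¹' sets i := by
      ext ω
      simp only [Set.mem_setOf_eq, Set.mem_iInter, hB, Finset.mem_union, Finset.mem_image,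
        Finset.mem_univ, true_and, Set.mem_preimage]
      constructor
      · rintro ⟨h1, h2⟩ i hi
        rcases hi with ⟨j, rfl⟩ | ⟨j, rfl⟩
        · rw [hsets1 j]; exact h1 j
        · rw [hsets2 j]; exact h2 j
      · intro h
        constructor
        · intro j
          have := h (j, d k, p.1) (Or.inl ⟨j, rfl⟩)
          rwa [hsets1 j] at this
        · intro j
          have := h (j, d k', q.1) (Or.inr ⟨j, rfl⟩)
          rwa [hsets2 j] at this
    rw [hEq, hU_indep.measure_inter_preimage_eq_mul B hmeas_sets]
    have hdisj : Disjoint (univ.image fun j : Fin K => (j, d k, p.1))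
        (univ.image fun j : Fin K => (j, d k', q.1)) := by
      rw [Finset.disjoint_left]
      intro i hi1 hi2
      simp only [Finset.mem_image, Finset.mem_univ, true_and] at hi1 hi2
      obtain ⟨a, rfl⟩ := hi1
      obtain ⟨b, hb⟩ := hi2
      exact hdkk (congrArg (fun z : Fin K × Fin N × Fin F' => z.2.1) hb)
    have hinj1 : ∀ a ∈ (univ : Finset (Fin K)), ∀ b ∈ univ,
        (fun j : Fin K => (j, d k, p.1)) a = (fun j : Fin K => (j, d k, p.1)) b → a = b :=
      fun a _ b _ h => congrArg (fun z : Fin K × Fin N × Fin F' => z.1) h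
    have hinj2 : ∀ a ∈ (univ : Finset (Fin K)), ∀ b ∈ univ,
        (fun j : Fin K => (j, d k', q.1)) a = (fun j : Fin K => (j, d k', q.1)) b → a = b :=
      fun a _ b _ h => congrArg (fun z : Fin K × Fin N × Fin F' => z.1) h
    rw [hB, Finset.prod_union hdisj, Finset.prod_image hinj1, Finset.prod_image hinj2]
    have hfac : ∀ (i : Fin K × Fin N × Fin F') (c : Fin m) (A : Finset (Fin K)) (j : Fin K),
        sets i = {x : Fin m | x = c ↔ j ∈ A} →
        μ (U i ⁻¹' sets i) = if j ∈ A then (m:ℝ≥0∞)⁻¹ else 1 - (m:ℝ≥0∞)⁻¹ := by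
      intro i c A j hset
      rw [hset]
      by_cases hj : j ∈ A
      · rw [if_pos hj]
        have h2 : {x : Fin m | x = c ↔ j ∈ A} = {x | x = c} := by ext x; simp [hj]
        rw [h2]
        exact hU_unif i c
      · rw [if_neg hj]
        have h2 : {x : Fin m | x = c ↔ j ∈ A} = {x : Fin m | x = c}ᶜ := by ext x; simp [hj]
        rw [h2]
        have h3 : U i ⁻¹' {x : Fin m | x = c}ᶜ = (U i ⁻¹' {c})ᶜ := rfl
        have h4 : U i ⁻¹' {c} = {ω | U i ω = c} := rfl
        rw [h3, prob_compl_eq_one_sub (hU_meas i (measurableSet_singleton c)), h4, hU_unif i c]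
    have hcount : ∀ (A : Finset (Fin K)),
        (∏ j : Fin K, if j ∈ A then (m:ℝ≥0∞)⁻¹ else 1 - (m:ℝ≥0∞)⁻¹)
          = (m:ℝ≥0∞)⁻¹ ^ A.card * (1 - (m:ℝ≥0∞)⁻¹) ^ (K - A.card) := by
      intro A
      rw [Finset.prod_ite, Finset.prod_const, Finset.prod_const]
      have hA : univ.filter (fun j : Fin K => j ∈ A) = A := by
        ext j; simp
      have hA' : (univ.filter (fun j : Fin K => ¬ j ∈ A)).card = K - A.card := by
        rw [Finset.filter_not, Finset.card_sdiff_of_subset (Finset.filter_subset _ _), hA]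
        simp
      rw [hA, hA']
    rw [Finset.prod_congr rfl (fun j _ => hfac (j, d k, p.1) p.2 (S.erase k) j (hsets1 j)),
      Finset.prod_congr rfl (fun j _ => hfac (j, d k', q.1) q.2 (S.erase k') j (hsets2 j)),
      hcount, hcount, Finset.card_erase_of_mem hk, Finset.card_erase_of_mem hk'S]
  -- expected value of the pair products
  have hEVV : ∀ (S : Finset (Fin K)) (k k' : Fin K), k ∈ S → k' ∈ S.erase k →
      ∫ ω, (V ω S k : ℝ) * (V ω S k' : ℝ) ∂μ
        = ((F':ℝ) * m) ^ 2 *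
            ((m:ℝ)⁻¹ ^ (S.card - 1) * (1 - (m:ℝ)⁻¹) ^ (K - (S.card - 1))) ^ 2 := by
    intro S k k' hk hk'
    have hexp : ∀ ω, (V ω S k : ℝ) * (V ω S k' : ℝ)
        = ∑ p : Fin F' × Fin m, ∑ q : Fin F' × Fin m,
            if ((∀ j : Fin K, (U (j, d k, p.1) ω = p.2 ↔ j ∈ S.erase k)) ∧
                (∀ j : Fin K, (U (j, d k', q.1) ω = q.2 ↔ j ∈ S.erase k'))) then (1:ℝ) else 0 := by
      intro ω
      rw [hV ω S k, hV ω S k', Finset.card_filter, Finset.card_filter]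
      push_cast
      rw [Finset.sum_mul_sum]
      refine Finset.sum_congr rfl fun p _ => Finset.sum_congr rfl fun q _ => ?_
      by_cases h1 : (∀ j : Fin K, (U (j, d k, p.1) ω = p.2 ↔ j ∈ S.erase k))
      · by_cases h2 : (∀ j : Fin K, (U (j, d k', q.1) ω = q.2 ↔ j ∈ S.erase k'))
        · rw [if_pos h1, if_pos h2, if_pos ⟨h1, h2⟩, mul_one]
        · rw [if_pos h1, if_neg h2, mul_zero, if_neg (fun h => h2 h.2)]
      · rw [if_neg h1, zero_mul, if_neg (fun h => h1 h.1)]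
    have hmeasE : ∀ p q : Fin F' × Fin m, MeasurableSet
        {ω | (∀ j : Fin K, (U (j, d k, p.1) ω = p.2 ↔ j ∈ S.erase k)) ∧
             (∀ j : Fin K, (U (j, d k', q.1) ω = q.2 ↔ j ∈ S.erase k'))} := by
      intro p q
      have heq : {ω | (∀ j : Fin K, (U (j, d k, p.1) ω = p.2 ↔ j ∈ S.erase k)) ∧
             (∀ j : Fin K, (U (j, d k', q.1) ω = q.2 ↔ j ∈ S.erase k'))}
          = J ⁻¹' {u | (∀ j : Fin K, (u (j, d k, p.1) = p.2 ↔ j ∈ S.erase k)) ∧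
             (∀ j : Fin K, (u (j, d k', q.1) = q.2 ↔ j ∈ S.erase k'))} := by
        rw [hJdef]; rfl
      rw [heq]
      exact hJ ((Set.to_countable _).measurableSet)
    have hind : ∀ p q : Fin F' × Fin m, Integrable (fun ω =>
        if ((∀ j : Fin K, (U (j, d k, p.1) ω = p.2 ↔ j ∈ S.erase k)) ∧
            (∀ j : Fin K, (U (j, d k', q.1) ω = q.2 ↔ j ∈ S.erase k'))) then (1:ℝ) else 0) μ := by
      intro p q
      refine ((integrable_const (1:ℝ)).indicator (hmeasE p q)).congr (ae_of_all _ fun ω => ?_)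
      rw [Set.indicator_apply]
      by_cases h : ((∀ j : Fin K, (U (j, d k, p.1) ω = p.2 ↔ j ∈ S.erase k)) ∧
            (∀ j : Fin K, (U (j, d k', q.1) ω = q.2 ↔ j ∈ S.erase k'))) <;> simp [h]
    have hint_eq : ∀ p q : Fin F' × Fin m,
        (∫ ω, (if ((∀ j : Fin K, (U (j, d k, p.1) ω = p.2 ↔ j ∈ S.erase k)) ∧
            (∀ j : Fin K, (U (j, d k', q.1) ω = q.2 ↔ j ∈ S.erase k'))) then (1:ℝ) else 0) ∂μ)
          = (μ {ω | (∀ j : Fin K, (U (j, d k, p.1) ω = p.2 ↔ j ∈ S.erase k)) ∧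
             (∀ j : Fin K, (U (j, d k', q.1) ω = q.2 ↔ j ∈ S.erase k'))}).toReal := by
      intro p q
      have hfun : (fun ω => if ((∀ j : Fin K, (U (j, d k, p.1) ω = p.2 ↔ j ∈ S.erase k)) ∧
            (∀ j : Fin K, (U (j, d k', q.1) ω = q.2 ↔ j ∈ S.erase k'))) then (1:ℝ) else 0)
          = Set.indicator {ω | (∀ j : Fin K, (U (j, d k, p.1) ω = p.2 ↔ j ∈ S.erase k)) ∧
             (∀ j : Fin K, (U (j, d k', q.1) ω = q.2 ↔ j ∈ S.erase k'))} (fun _ => (1:ℝ)) := by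
        funext ω
        rw [Set.indicator_apply]
        by_cases h : ((∀ j : Fin K, (U (j, d k, p.1) ω = p.2 ↔ j ∈ S.erase k)) ∧
            (∀ j : Fin K, (U (j, d k', q.1) ω = q.2 ↔ j ∈ S.erase k'))) <;> simp [h]
      rw [hfun, integral_indicator_const (1:ℝ) (hmeasE p q), smul_eq_mul, mul_one]
      rfl
    have htoReal : (((m:ℝ≥0∞)⁻¹ ^ (S.card - 1) * (1 - (m:ℝ≥0∞)⁻¹) ^ (K - (S.card - 1)))
          * ((m:ℝ≥0∞)⁻¹ ^ (S.card - 1) * (1 - (m:ℝ≥0∞)⁻¹) ^ (K - (S.card - 1)))).toReal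
        = ((m:ℝ)⁻¹ ^ (S.card - 1) * (1 - (m:ℝ)⁻¹) ^ (K - (S.card - 1))) ^ 2 := by
      have hm1 : (1:ℝ≥0∞) ≤ (m:ℝ≥0∞) := by exact_mod_cast (by omega : 1 ≤ m)
      have h1 : ((m:ℝ≥0∞)⁻¹).toReal = (m:ℝ)⁻¹ := by
        rw [ENNReal.toReal_inv]; simp
      have h2 : ((1:ℝ≥0∞) - (m:ℝ≥0∞)⁻¹).toReal = 1 - (m:ℝ)⁻¹ := by
        rw [ENNReal.toReal_sub_of_le (ENNReal.inv_le_one.mpr hm1) ENNReal.one_ne_top,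
          ENNReal.toReal_one, h1]
      simp only [ENNReal.toReal_mul, ENNReal.toReal_pow, h1, h2]
      ring
    calc ∫ ω, (V ω S k : ℝ) * (V ω S k' : ℝ) ∂μ
        = ∫ ω, (∑ p : Fin F' × Fin m, ∑ q : Fin F' × Fin m,
            if ((∀ j : Fin K, (U (j, d k, p.1) ω = p.2 ↔ j ∈ S.erase k)) ∧
                (∀ j : Fin K, (U (j, d k', q.1) ω = q.2 ↔ j ∈ S.erase k'))) then (1:ℝ) else 0) ∂μ :=
          integral_congr_ae (ae_of_all _ fun ω => hexp ω)
      _ = ∑ p : Fin F' × Fin m, ∑ q : Fin F' × Fin m,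
            ∫ ω, (if ((∀ j : Fin K, (U (j, d k, p.1) ω = p.2 ↔ j ∈ S.erase k)) ∧
                (∀ j : Fin K, (U (j, d k', q.1) ω = q.2 ↔ j ∈ S.erase k'))) then (1:ℝ) else 0) ∂μ := by
          rw [integral_finset_sum _ (fun p _ => integrable_finset_sum _ (fun q _ => hind p q))]
          exact Finset.sum_congr rfl fun p _ => integral_finset_sum _ (fun q _ => hind p q)
      _ = ∑ _p : Fin F' × Fin m, ∑ _q : Fin F' × Fin m,
            ((m:ℝ)⁻¹ ^ (S.card - 1) * (1 - (m:ℝ)⁻¹) ^ (K - (S.card - 1))) ^ 2 := by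
          refine Finset.sum_congr rfl fun p _ => Finset.sum_congr rfl fun q _ => ?_
          rw [hint_eq p q, hprob S k k' hk hk' p q, htoReal]
      _ = ((F':ℝ) * m) ^ 2 *
            ((m:ℝ)⁻¹ ^ (S.card - 1) * (1 - (m:ℝ)⁻¹) ^ (K - (S.card - 1))) ^ 2 := by
          simp [Finset.sum_const, Finset.card_univ, Fintype.card_prod, Fintype.card_fin,
            nsmul_eq_mul]
          ring
  -- the error bound
  set x : ℝ := ((m:ℝ)⁻¹) ^ 2 with hx
  set y : ℝ := (1 - (m:ℝ)⁻¹) ^ 2 with hy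
  have hmi0 : (0:ℝ) < (m:ℝ)⁻¹ := by positivity
  have hmle : (2:ℝ) ≤ (m:ℝ) := by exact_mod_cast hm2
  have hinv2 : (m:ℝ)⁻¹ ≤ 1/2 := by
    rw [show (1:ℝ)/2 = (2:ℝ)⁻¹ by norm_num]
    exact inv_anti₀ (by norm_num) hmle
  have hinv1 : (m:ℝ)⁻¹ ≤ 1 := by linarith
  have hxnn : (0:ℝ) ≤ x := by positivity
  have hynn : (0:ℝ) ≤ y := by positivity
  have hWint : ∫ ω, W ω ∂μ = ∑ S ∈ univ.filter (fun S : Finset (Fin K) => S.Nonempty),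
      ∑ k ∈ S, ∑ k' ∈ S.erase k, ∫ ω, (V ω S k : ℝ) * (V ω S k' : ℝ) ∂μ := by
    simp only [hWdef]
    rw [integral_finset_sum _ (fun S _ => integrable_finset_sum _
      (fun k _ => integrable_finset_sum _ (fun k' _ => hIntVV S k k')))]
    refine Finset.sum_congr rfl fun S _ => ?_
    rw [integral_finset_sum _ (fun k _ => integrable_finset_sum _ (fun k' _ => hIntVV S k k'))]
    refine Finset.sum_congr rfl fun k _ => ?_
    exact integral_finset_sum _ (fun k' _ => hIntVV S k k')
  have hWbound : ∫ ω, W ω ∂μ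
      ≤ ((F':ℝ)*m)^2 * ((K:ℝ)*(K:ℝ)*((x*y)*(x+y)^(K-2))) := by
    rw [hWint]
    have hstep : ∀ S ∈ univ.filter (fun S : Finset (Fin K) => S.Nonempty),
        (∑ k ∈ S, ∑ k' ∈ S.erase k, ∫ ω, (V ω S k : ℝ) * (V ω S k' : ℝ) ∂μ)
          = ∑ _k ∈ S, ∑ _k' ∈ S.erase _k,
              ((F':ℝ)*m)^2 * (x ^ (S.card - 1) * y ^ (K - S.card + 1)) := by
      intro S hS
      have hS1 : 1 ≤ S.card := Finset.card_pos.mpr ((Finset.mem_filter.mp hS).2)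
      have hSK : S.card ≤ K := by simpa using Finset.card_le_univ S
      refine Finset.sum_congr rfl fun k hk => Finset.sum_congr rfl fun k' hk' => ?_
      rw [hEVV S k k' hk hk']
      congr 1
      have he : K - (S.card - 1) = K - S.card + 1 := by omega
      rw [he, mul_pow, ← pow_mul, ← pow_mul, mul_comm (S.card-1) 2,
        mul_comm (K - S.card + 1) 2, pow_mul, pow_mul, ← hx, ← hy]
    calc ∑ S ∈ univ.filter (fun S : Finset (Fin K) => S.Nonempty),
          ∑ k ∈ S, ∑ k' ∈ S.erase k, ∫ ω, (V ω S k : ℝ) * (V ω S k' : ℝ) ∂μ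
        = ∑ S ∈ univ.filter (fun S : Finset (Fin K) => S.Nonempty),
            ∑ _k ∈ S, ∑ _k' ∈ S.erase _k,
              ((F':ℝ)*m)^2 * (x ^ (S.card - 1) * y ^ (K - S.card + 1)) :=
          Finset.sum_congr rfl hstep
      _ = ((F':ℝ)*m)^2 * ∑ S ∈ univ.filter (fun S : Finset (Fin K) => S.Nonempty),
            ∑ _k ∈ S, ∑ _k' ∈ S.erase _k, x ^ (S.card - 1) * y ^ (K - S.card + 1) := by
          rw [Finset.mul_sum]
          refine Finset.sum_congr rfl fun S _ => ?_
          rw [Finset.mul_sum]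
          refine Finset.sum_congr rfl fun k _ => ?_
          rw [Finset.mul_sum]
      _ ≤ ((F':ℝ)*m)^2 * ((K:ℝ)*(K:ℝ)*((x*y)*(x+y)^(K-2))) :=
          mul_le_mul_of_nonneg_left (reindex_sum' hK2 x y hxnn hynn) (by positivity)
  set t : ℝ := (m:ℝ)⁻¹ * (1 - (m:ℝ)⁻¹) with htdef
  have ht0 : 0 ≤ t := by rw [htdef]; nlinarith
  have ht4 : t ≤ 1/4 := by rw [htdef]; nlinarith [sq_nonneg (2*(m:ℝ)⁻¹ - 1)]
  have hxyt : x * y = t^2 := by rw [hx, hy, htdef]; ring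
  have hxpy : x + y = 1 - 2*t := by rw [hx, hy, htdef]; ring
  have hpow : (x+y)^(K-2) ≤ Real.exp (-(2*t) * ((K:ℝ)-2)) := by
    have h1 : x+y ≤ Real.exp (-(2*t)) := by
      rw [hxpy]
      have := Real.add_one_le_exp (-(2*t))
      linarith
    have h2 : (0:ℝ) ≤ x + y := by positivity
    calc (x+y)^(K-2) ≤ (Real.exp (-(2*t)))^(K-2) := pow_le_pow_left₀ h2 h1 _
      _ = Real.exp (((K-2 : ℕ):ℝ) * (-(2*t))) := (Real.exp_nat_mul _ _).symm
      _ = Real.exp (-(2*t) * ((K:ℝ)-2)) := by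
          rw [Nat.cast_sub hK2]
          push_cast
          ring_nf
  have hkey : (m:ℝ) * t^2 * Real.exp (2*t) ≤ 1 := by
    have hmt : (m:ℝ) * t^2 = (m:ℝ)⁻¹ * (1-(m:ℝ)⁻¹)^2 := by
      rw [htdef]
      field_simp
    have hsq1 : (1-(m:ℝ)⁻¹)^2 ≤ 1 := by nlinarith
    have h6 : (m:ℝ)⁻¹ * (1-(m:ℝ)⁻¹)^2 ≤ 1/2 := by nlinarith [sq_nonneg (1-(m:ℝ)⁻¹)]
    have hexp2 : Real.exp (2*t) < 2 := by
      have h5 : Real.exp (2*t) ≤ Real.exp (1/2) := Real.exp_le_exp.mpr (by linarith)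
      have hsq : Real.exp (1/2) * Real.exp (1/2) = Real.exp 1 := by
        rw [← Real.exp_add]; norm_num
      have he1 : Real.exp 1 < 2.7182818286 := Real.exp_one_lt_d9
      nlinarith [Real.exp_pos (1/2)]
    rw [hmt]
    nlinarith [Real.exp_pos (2*t), hmi0, sq_nonneg (1-(m:ℝ)⁻¹)]
  have hE : -2 * ((K:ℝ)/(m:ℝ)) * (1 - ((K:ℝ)/(m:ℝ))/(K:ℝ)) * (1 - 1/(K:ℝ))
      = -(2*t*((K:ℝ)-1)) := by
    rw [htdef]
    field_simp
  have herr : (1/((m:ℝ)*(F':ℝ))) * ∫ ω, W ω ∂μ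
      ≤ (F':ℝ) * (K:ℝ)^2 *
        Real.exp (-2 * ((K:ℝ)/(m:ℝ)) * (1 - ((K:ℝ)/(m:ℝ))/(K:ℝ)) * (1 - 1/(K:ℝ))) := by
    calc (1/((m:ℝ)*(F':ℝ))) * ∫ ω, W ω ∂μ
        ≤ (1/((m:ℝ)*(F':ℝ))) * (((F':ℝ)*m)^2 * ((K:ℝ)*(K:ℝ)*((x*y)*(x+y)^(K-2)))) :=
          mul_le_mul_of_nonneg_left hWbound (by positivity)
      _ = ((m:ℝ)*(F':ℝ)*((K:ℝ)*(K:ℝ))) * ((x*y)*(x+y)^(K-2)) := by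
          field_simp
      _ ≤ ((m:ℝ)*(F':ℝ)*((K:ℝ)*(K:ℝ))) * (t^2 * Real.exp (-(2*t) * ((K:ℝ)-2))) := by
          rw [hxyt]
          refine mul_le_mul_of_nonneg_left ?_ (by positivity)
          exact mul_le_mul_of_nonneg_left hpow (by positivity)
      _ = ((F':ℝ)*(K:ℝ)^2) * (((m:ℝ)*t^2*Real.exp (2*t)) * Real.exp (-(2*t*((K:ℝ)-1)))) := by
          rw [show -(2*t) * ((K:ℝ)-2) = 2*t + -(2*t*((K:ℝ)-1)) by ring, Real.exp_add]
          ring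
      _ ≤ ((F':ℝ)*(K:ℝ)^2) * (1 * Real.exp (-(2*t*((K:ℝ)-1)))) := by
          refine mul_le_mul_of_nonneg_left ?_ (by positivity)
          exact mul_le_mul_of_nonneg_right hkey (Real.exp_pos _).le
      _ = (F':ℝ) * (K:ℝ)^2 *
          Real.exp (-2 * ((K:ℝ)/(m:ℝ)) * (1 - ((K:ℝ)/(m:ℝ))/(K:ℝ)) * (1 - 1/(K:ℝ))) := by
          rw [hE]
          ring
  have hmono : (K:ℝ)*(1 - 1/(m:ℝ)) - (1/((m:ℝ)*(F':ℝ))) * ∫ ω, W ω ∂μ ≤ ∫ ω, R ω ∂μ := by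
    have hint1 : Integrable (fun ω => (K:ℝ)*(1 - 1/(m:ℝ)) - (1/((m:ℝ)*(F':ℝ))) * W ω) μ :=
      (integrable_const _).sub (hIntW.const_mul _)
    have h := integral_mono (μ := μ)
      (f := fun ω => (K:ℝ)*(1 - 1/(m:ℝ)) - (1/((m:ℝ)*(F':ℝ))) * W ω) (g := R)
      hint1 hIntR hpoint
    rwa [integral_sub (integrable_const _) (hIntW.const_mul _), integral_const, probReal_univ,
      one_smul, integral_const_mul] at h
  linarith [herr, hmono]
end

section
/- Under the old placement with distinct demands, if t := K·M/N satisfies 1 ≤ t ≤ K, then the expected rate satisfies E[R] ≥ K·(1 − M/N) − F·K·t·exp(−2t·(1 − t/K)·(1 − 1/K)). -/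
open MeasureTheory ProbabilityTheory Finset
open scoped ENNReal

lemma aux_sup_bound {ι : Type*} [DecidableEq ι] (s : Finset ι) (v : ι → ℕ) :
    ∑ i ∈ s, v i ≤ s.sup v + ∑ i ∈ s, ∑ j ∈ s.erase i, v i * v j := by
  rcases s.eq_empty_or_nonempty with rfl | hne
  · simp
  obtain ⟨i₀, hi₀, hmax⟩ := Finset.exists_mem_eq_sup s hne v
  by_cases h0 : v i₀ = 0
  · have : ∀ i ∈ s, v i = 0 := fun i hi => by
      have := Finset.le_sup (f := v) hi
      omega
    rw [Finset.sum_eq_zero this]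
    exact Nat.zero_le _
  · have h1 : 1 ≤ v i₀ := Nat.one_le_iff_ne_zero.mpr h0
    rw [← Finset.add_sum_erase s v hi₀, hmax]
    have step1 : ∑ i ∈ s.erase i₀, v i ≤ ∑ i ∈ s.erase i₀, ∑ j ∈ s.erase i, v i * v j := by
      apply Finset.sum_le_sum
      intro i hi
      have hi₀i : i₀ ∈ s.erase i := by
        rw [Finset.mem_erase] at hi ⊢
        exact ⟨fun h => hi.1 h.symm, hi₀⟩
      calc v i ≤ v i * v i₀ := Nat.le_mul_of_pos_right _ h1
        _ ≤ ∑ j ∈ s.erase i, v i * v j :=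
          Finset.single_le_sum (f := fun j => v i * v j) (fun j _ => Nat.zero_le _) hi₀i
    have step2 : ∑ i ∈ s.erase i₀, ∑ j ∈ s.erase i, v i * v j
        ≤ ∑ i ∈ s, ∑ j ∈ s.erase i, v i * v j :=
      Finset.sum_le_sum_of_subset (Finset.erase_subset _ _)
    omega

lemma aux_powerset_sum {α R : Type*} [DecidableEq α] [CommSemiring R] (A : Finset α) (x y : R) :
    ∑ T ∈ A.powerset, x ^ T.card * y ^ (A.card - T.card) = (x + y) ^ A.card := by
  have h := Finset.prod_add (fun _ : α => x) (fun _ : α => y) A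
  rw [Finset.prod_const] at h
  rw [h]
  apply Finset.sum_congr rfl
  intro T hT
  rw [Finset.prod_const, Finset.prod_const, Finset.card_sdiff_of_subset (Finset.mem_powerset.mp hT)]

lemma aux_exp_half : Real.exp (1/2 : ℝ) ≤ 2 := by
  have h1 : Real.exp (1/2 : ℝ) * Real.exp (1/2 : ℝ) = Real.exp 1 := by
    rw [← Real.exp_add]; norm_num
  have h2 := Real.exp_one_lt_d9
  have h3 := Real.exp_pos (1/2 : ℝ)
  nlinarith

lemma aux_final (Kn : ℕ) (hK : 1 ≤ Kn) (q FR : ℝ) (hq0 : 0 < q) (hq1 : q ≤ 1)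
    (hF : 0 < FR) :
    FR * (((Kn:ℝ) * ((Kn:ℝ) - 1)) * (q^2 * (1-q)^2 * (q^2 + (1-q)^2)^(Kn-2)))
      ≤ FR * (Kn:ℝ) * ((Kn:ℝ) * q) *
        Real.exp (-2 * ((Kn:ℝ)*q) * (1 - ((Kn:ℝ)*q)/(Kn:ℝ)) * (1 - 1/(Kn:ℝ))) := by
  have hKR : (0:ℝ) < Kn := by exact_mod_cast hK
  have hexp_arg : -2 * ((Kn:ℝ)*q) * (1 - ((Kn:ℝ)*q)/(Kn:ℝ)) * (1 - 1/(Kn:ℝ))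
      = -2*((Kn:ℝ)-1)*(q*(1-q)) := by
    field_simp
  rw [hexp_arg]
  set c : ℝ := q*(1-q) with hc
  set E : ℝ := Real.exp (-2*((Kn:ℝ)-1)*c) with hE
  have hE0 : 0 < E := Real.exp_pos _
  have hq1' : 0 ≤ 1 - q := by linarith
  have hc0 : 0 ≤ c := by positivity
  have hc14 : c ≤ 1/4 := by rw [hc]; nlinarith [sq_nonneg (2*q-1)]
  have hB0 : (0:ℝ) ≤ q^2+(1-q)^2 := by positivity
  have hBle : q^2+(1-q)^2 ≤ Real.exp (-2*c) := by
    have h := Real.add_one_le_exp (-2*c)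
    have hcc : q^2+(1-q)^2 = 1 - 2*c := by rw [hc]; ring
    linarith
  have hpow : (q^2+(1-q)^2)^(Kn-2) ≤ Real.exp (-2*c) ^ (Kn-2) :=
    pow_le_pow_left₀ hB0 hBle _
  have hexp_pow : Real.exp (-2*c) ^ (Kn-2) = Real.exp (-2*c*((Kn-2:ℕ):ℝ)) := by
    rw [← Real.exp_nat_mul]
    ring_nf
  have hcast : ((Kn:ℝ) - 2) ≤ ((Kn-2 : ℕ):ℝ) := by
    rcases le_or_gt 2 Kn with h|h
    · rw [Nat.cast_sub h]; norm_num
    · have : Kn = 1 := by omega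
      subst this; norm_num
  have hstep : Real.exp (-2*c*((Kn-2:ℕ):ℝ)) ≤ Real.exp (2*c) * E := by
    rw [hE, ← Real.exp_add]
    apply Real.exp_le_exp.mpr
    nlinarith [mul_le_mul_of_nonneg_left hcast (by linarith : (0:ℝ) ≤ 2*c)]
  have he2 : Real.exp (2*c) ≤ 2 := by
    refine le_trans (Real.exp_le_exp.mpr (by linarith : 2*c ≤ 1/2)) aux_exp_half
  have hchain : (q^2+(1-q)^2)^(Kn-2) ≤ 2 * E := by
    calc (q^2+(1-q)^2)^(Kn-2) ≤ Real.exp (-2*c) ^ (Kn-2) := hpow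
      _ = Real.exp (-2*c*((Kn-2:ℕ):ℝ)) := hexp_pow
      _ ≤ Real.exp (2*c) * E := hstep
      _ ≤ 2 * E := by nlinarith
  have hq14 : q*(1-q)^2 ≤ 1/4 := by nlinarith [sq_nonneg (2*q-1), mul_nonneg (mul_nonneg hq0.le hq1') hq1']
  have hcore : ((Kn:ℝ) - 1) * (q^2 * (1-q)^2 * (q^2 + (1-q)^2)^(Kn-2))
      ≤ (Kn:ℝ) * q * E := by
    have h1 : ((Kn:ℝ) - 1) * (q^2 * (1-q)^2 * (q^2 + (1-q)^2)^(Kn-2))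
        ≤ ((Kn:ℝ) - 1) * (q^2 * (1-q)^2 * (2 * E)) := by
      have : (1:ℝ) ≤ (Kn:ℝ) := by exact_mod_cast hK
      apply mul_le_mul_of_nonneg_left _ (by linarith : (0:ℝ) ≤ (Kn:ℝ)-1)
      apply mul_le_mul_of_nonneg_left hchain (by positivity)
    refine le_trans h1 ?_
    have h2 : ((Kn:ℝ) - 1) * (q^2 * (1-q)^2 * (2 * E))
        = (q * E) * (2 * ((Kn:ℝ)-1) * (q*(1-q)^2)) := by ring
    have hK1 : (0:ℝ) ≤ (Kn:ℝ) - 1 := by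
      have : (1:ℝ) ≤ (Kn:ℝ) := by exact_mod_cast hK
      linarith
    have h3 : 2 * ((Kn:ℝ)-1) * (q*(1-q)^2) ≤ (Kn:ℝ) := by
      nlinarith [mul_le_mul_of_nonneg_left hq14 (by linarith : (0:ℝ) ≤ 2*((Kn:ℝ)-1))]
    rw [h2]
    calc (q * E) * (2 * ((Kn:ℝ)-1) * (q*(1-q)^2)) ≤ (q * E) * (Kn:ℝ) := by
          apply mul_le_mul_of_nonneg_left h3 (by positivity)
      _ = (Kn:ℝ) * q * E := by ring
  calc FR * (((Kn:ℝ) * ((Kn:ℝ) - 1)) * (q^2 * (1-q)^2 * (q^2 + (1-q)^2)^(Kn-2)))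
      = (FR * (Kn:ℝ)) * (((Kn:ℝ) - 1) * (q^2 * (1-q)^2 * (q^2 + (1-q)^2)^(Kn-2))) := by
        ring
    _ ≤ (FR * (Kn:ℝ)) * ((Kn:ℝ) * q * E) := by
        apply mul_le_mul_of_nonneg_left hcore (by positivity)
    _ = FR * (Kn:ℝ) * ((Kn:ℝ) * q) * E := by ring

/-- Coded caching with `K` users, `N > K` files, cache size `M`
(`0 < M ≤ N`), each file consisting of `F` packets, `a = M·F/N` a positive integer with
`a ≤ F`, under the *old placement* of Maddah-Ali–Niesen: an independent family `C (k,n)`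
of uniformly random `a`-element subsets of the `F` packets; packet `f` of file `n` is
stored in cache `k` iff `f ∈ C (k,n)`.  For an injective demand vector `d` and nonempty
`S ⊆ [K]`, `V ω S k` counts the packets of file `d k` stored in exactly the caches of
`S \ {k}`; the greedy clique-cover rate is `R = (1/F)·∑_{S ≠ ∅} max_{k∈S} V ω S k`.
If `t := K·M/N` satisfies `1 ≤ t ≤ K`, then
`E[R] ≥ K·(1 − M/N) − F·K·t·exp(−2t·(1 − t/K)·(1 − 1/K))`. -/
theorem stmt2
    {Ω : Type*} [MeasurableSpace Ω] (μ : Measure Ω) [IsProbabilityMeasure μ]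
    (K N F a : ℕ) (M : ℝ)
    (hM : 0 < M) (hMN : M ≤ (N : ℝ)) (hNK : K < N)
    (ha : (a : ℝ) = M * (F : ℝ) / (N : ℝ)) (ha_pos : 0 < a) (haF : a ≤ F)
    (C : Fin K × Fin N → Ω → Finset (Fin F))
    (hC_meas : ∀ i, @Measurable _ _ _ ⊤ (C i))
    (hC_indep : iIndepFun (m := fun _ => (⊤ : MeasurableSpace (Finset (Fin F)))) C μ)
    (hC_unif : ∀ i (A : Finset (Fin F)),
      μ {ω | C i ω = A} = if A.card = a then ((F.choose a : ℝ≥0∞))⁻¹ else 0)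
    (d : Fin K → Fin N) (hd : Function.Injective d)
    (V : Ω → Finset (Fin K) → Fin K → ℕ)
    (hV : ∀ ω S k, V ω S k =
      (Finset.univ.filter (fun f : Fin F =>
        ∀ j : Fin K, (f ∈ C (j, d k) ω ↔ j ∈ S.erase k))).card)
    (R : Ω → ℝ)
    (hR : ∀ ω, R ω = (1 / (F : ℝ)) *
      ∑ S ∈ Finset.univ.filter (fun S : Finset (Fin K) => S.Nonempty),
        ((S.sup (fun k => V ω S k) : ℕ) : ℝ))
    (ht1 : 1 ≤ (K : ℝ) * M / (N : ℝ)) (htK : (K : ℝ) * M / (N : ℝ) ≤ (K : ℝ)) :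
    (K : ℝ) * (1 - M / (N : ℝ)) -
        (F : ℝ) * (K : ℝ) * ((K : ℝ) * M / (N : ℝ)) *
          Real.exp (-2 * ((K : ℝ) * M / (N : ℝ)) *
            (1 - ((K : ℝ) * M / (N : ℝ)) / (K : ℝ)) * (1 - 1 / (K : ℝ)))
      ≤ ∫ ω, R ω ∂μ := by
  classical
  have hF0 : 0 < F := lt_of_lt_of_le ha_pos haF
  have hN0 : 0 < N := lt_of_le_of_lt (Nat.zero_le K) hNK
  have hK0 : 0 < K := by
    by_contra h
    push_neg at h
    interval_cases K
    simp at ht1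
    linarith
  have hNR : (0:ℝ) < N := by exact_mod_cast hN0
  have hFR : (0:ℝ) < F := by exact_mod_cast hF0
  have hKR : (0:ℝ) < K := by exact_mod_cast hK0
  set q : ℝ := (a : ℝ) / (F : ℝ) with hq_def
  have hqMN : M / (N:ℝ) = q := by
    rw [hq_def, ha]; field_simp
  have hq0 : 0 < q := by positivity
  have hq1 : q ≤ 1 := by
    rw [hq_def, div_le_one hFR]
    exact_mod_cast haF
  -- ENNReal single-coordinate probability
  set p1 : ℝ≥0∞ := (a : ℝ≥0∞) / (F : ℝ≥0∞) with hp1_def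
  have hp1_le : p1 ≤ 1 := by
    rw [hp1_def]
    exact ENNReal.div_le_of_le_mul (by simpa using (by exact_mod_cast haF : (a:ℝ≥0∞) ≤ (F:ℝ≥0∞)))
  have hp1_top : p1 ≠ ∞ := by
    rw [hp1_def]
    exact (ENNReal.div_lt_top (by simp) (by exact_mod_cast hF0.ne')).ne
  have hp1_toReal : p1.toReal = q := by
    rw [hp1_def, hq_def, ENNReal.toReal_div]
    simp
  have h1p1_toReal : (1 - p1).toReal = 1 - q := by
    rw [ENNReal.toReal_sub_of_le hp1_le (by simp), hp1_toReal]
    simp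
  -- counting subsets containing a fixed packet
  have hcount : ∀ f : Fin F,
      ((univ : Finset (Finset (Fin F))).filter (fun A => f ∈ A ∧ A.card = a)).card
        = (F-1).choose (a-1) := by
    intro f
    have h2 : (((univ : Finset (Fin F)).erase f).powersetCard (a-1)).card
        = (F-1).choose (a-1) := by
      rw [Finset.card_powersetCard, Finset.card_erase_of_mem (Finset.mem_univ f),
        Finset.card_univ, Fintype.card_fin]
    rw [← h2]
    apply Finset.card_nbij' (fun A => A.erase f) (fun B => insert f B)
    · intro A hA
      simp only [Finset.mem_coe, Finset.mem_filter] at hA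
      rw [Finset.mem_coe, Finset.mem_powersetCard]
      refine ⟨fun x hx => ?_, ?_⟩
      · rw [Finset.mem_erase] at hx ⊢
        exact ⟨hx.1, Finset.mem_univ x⟩
      · rw [Finset.card_erase_of_mem hA.2.1, hA.2.2]
    · intro B hB
      rw [Finset.mem_coe, Finset.mem_powersetCard] at hB
      have hfB : f ∉ B := fun h => (Finset.mem_erase.mp (hB.1 h)).1 rfl
      simp only [Finset.mem_coe, Finset.mem_filter]
      refine ⟨Finset.mem_univ _, Finset.mem_insert_self _ _, ?_⟩
      rw [Finset.card_insert_of_notMem hfB, hB.2]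
      omega
    · intro A hA
      simp only [Finset.mem_coe, Finset.mem_filter] at hA
      exact Finset.insert_erase hA.2.1
    · intro B hB
      rw [Finset.mem_coe, Finset.mem_powersetCard] at hB
      exact Finset.erase_insert (fun h => (Finset.mem_erase.mp (hB.1 h)).1 rfl)
  -- probability a fixed packet is in a fixed cache
  have hsingle : ∀ (i : Fin K × Fin N) (f : Fin F), μ {ω | f ∈ C i ω} = p1 := by
    intro i f
    have hset : {ω | f ∈ C i ω}
        = ⋃ A ∈ ((univ : Finset (Finset (Fin F))).filter (fun A => f ∈ A)),
            {ω | C i ω = A} := by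
      ext ω
      simp only [Set.mem_setOf_eq, Set.mem_iUnion, Finset.mem_filter, Finset.mem_univ,
        true_and, exists_prop]
      exact ⟨fun h => ⟨C i ω, h, rfl⟩, fun ⟨A, hA, h⟩ => by rw [h]; exact hA⟩
    have hnat : F * (F-1).choose (a-1) = F.choose a * a := by
      have h3 := Nat.add_one_mul_choose_eq (F-1) (a-1)
      have hF : F - 1 + 1 = F := Nat.succ_pred_eq_of_pos hF0
      have haa : a - 1 + 1 = a := Nat.succ_pred_eq_of_pos ha_pos
      rw [hF, haa] at h3
      exact h3
    rw [hset, measure_biUnion_finset ?disj ?meas]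
    case disj =>
      intro A hA B hB hAB
      simp only [Function.onFun]
      rw [Set.disjoint_left]
      intro ω h1 h2
      simp only [Set.mem_setOf_eq] at h1 h2
      exact hAB (h1.symm.trans h2)
    case meas =>
      intro A _
      exact hC_meas i (MeasurableSpace.measurableSet_top (s := {A}))
    simp only [hC_unif i]
    rw [Finset.sum_ite, Finset.sum_const, Finset.sum_const, smul_zero, add_zero,
      Finset.filter_filter]
    rw [hcount f, nsmul_eq_mul, ← div_eq_mul_inv, hp1_def,
      ENNReal.div_eq_div_iff (by exact_mod_cast hF0.ne') (by simp)
        (by exact_mod_cast (Nat.choose_pos haF).ne') (by simp)]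
    exact_mod_cast hnat
  have hsingle' : ∀ (i : Fin K × Fin N) (f : Fin F), μ {ω | f ∉ C i ω} = 1 - p1 := by
    intro i f
    have hms : MeasurableSet {ω | f ∈ C i ω} :=
      hC_meas i (MeasurableSpace.measurableSet_top (s := {A | f ∈ A}))
    have h1 : {ω | f ∉ C i ω} = {ω | f ∈ C i ω}ᶜ := rfl
    rw [h1, measure_compl hms (measure_ne_top μ _), hsingle i f, measure_univ]
  -- grouping: probability of an event depending on all caches of one file factorizes
  have hgroup : ∀ (n : Fin N) (G : Fin K → Set (Finset (Fin F))),
      μ {ω | ∀ j, C (j, n) ω ∈ G j} = ∏ j : Fin K, μ {ω | C (j, n) ω ∈ G j} := by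
    intro n G
    have hmul := hC_indep.measure_inter_preimage_eq_mul
      (S := (univ.image (fun j : Fin K => (j, n))))
      (sets := fun i => G i.1) (fun i _ => MeasurableSpace.measurableSet_top)
    have hset : (⋂ i ∈ (univ.image (fun j : Fin K => (j, n))), C i ⁻¹' (G i.1))
        = {ω | ∀ j, C (j, n) ω ∈ G j} := by
      ext ω
      simp only [Set.mem_iInter, Finset.mem_image, Finset.mem_univ, true_and,
        Set.mem_setOf_eq, Set.mem_preimage]
      constructor
      · intro h j; exact h (j, n) ⟨j, rfl⟩
      · rintro h i ⟨j, rfl⟩; exact h j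
    rw [hset] at hmul
    rw [hmul, Finset.prod_image (fun x _ y _ h => by simpa using (Prod.mk.injEq _ _ _ _ ▸ h : (x, n) = (y, n)))]
    rfl
  have hgroup2 : ∀ (n₁ n₂ : Fin N), n₁ ≠ n₂ → ∀ (G₁ G₂ : Fin K → Set (Finset (Fin F))),
      μ ({ω | ∀ j, C (j, n₁) ω ∈ G₁ j} ∩ {ω | ∀ j, C (j, n₂) ω ∈ G₂ j})
        = μ {ω | ∀ j, C (j, n₁) ω ∈ G₁ j} * μ {ω | ∀ j, C (j, n₂) ω ∈ G₂ j} := by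
    intro n₁ n₂ hn G₁ G₂
    set T₁ := (univ.image (fun j : Fin K => (j, n₁))) with hT₁
    set T₂ := (univ.image (fun j : Fin K => (j, n₂))) with hT₂
    set sets : Fin K × Fin N → Set (Finset (Fin F)) :=
      fun i => if i.2 = n₁ then G₁ i.1 else G₂ i.1 with hsets
    have hdisj : Disjoint T₁ T₂ := by
      rw [Finset.disjoint_left]
      rintro i hi1 hi2
      simp only [hT₁, hT₂, Finset.mem_image, Finset.mem_univ, true_and] at hi1 hi2
      obtain ⟨j₁, rfl⟩ := hi1
      obtain ⟨j₂, h2⟩ := hi2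
      exact hn (congrArg Prod.snd h2).symm
    have hmul := hC_indep.measure_inter_preimage_eq_mul (S := T₁ ∪ T₂) (sets := sets)
      (fun i _ => MeasurableSpace.measurableSet_top)
    have hset : (⋂ i ∈ (T₁ ∪ T₂), C i ⁻¹' (sets i))
        = ({ω | ∀ j, C (j, n₁) ω ∈ G₁ j} ∩ {ω | ∀ j, C (j, n₂) ω ∈ G₂ j}) := by
      ext ω
      simp only [Set.mem_iInter, Finset.mem_union, hT₁, hT₂, Finset.mem_image,
        Finset.mem_univ, true_and, Set.mem_setOf_eq, Set.mem_preimage, Set.mem_inter_iff]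
      constructor
      · intro h
        constructor
        · intro j
          have := h (j, n₁) (Or.inl ⟨j, rfl⟩)
          simpa [hsets] using this
        · intro j
          have := h (j, n₂) (Or.inr ⟨j, rfl⟩)
          simpa [hsets, hn.symm] using this
      · rintro ⟨h1, h2⟩ i (⟨j, rfl⟩ | ⟨j, rfl⟩)
        · simpa [hsets] using h1 j
        · simpa [hsets, hn.symm] using h2 j
    rw [hset] at hmul
    rw [hmul, Finset.prod_union hdisj]
    congr 1
    · rw [hgroup n₁ G₁, hT₁,
        Finset.prod_image (fun x _ y _ h => by simpa using (Prod.mk.injEq _ _ _ _ ▸ h : (x, n₁) = (y, n₁)))]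
      apply Finset.prod_congr rfl
      intro j _
      have hone : sets (j, n₁) = G₁ j := by simp [hsets]
      rw [hone]
      rfl
    · rw [hgroup n₂ G₂, hT₂,
        Finset.prod_image (fun x _ y _ h => by simpa using (Prod.mk.injEq _ _ _ _ ▸ h : (x, n₂) = (y, n₂)))]
      apply Finset.prod_congr rfl
      intro j _
      have hone : sets (j, n₂) = G₂ j := by
        simp only [hsets]
        exact if_neg (fun h => hn h.symm)
      rw [hone]
      rfl
  -- the pattern events
  set Pset : Fin F → Finset (Fin K) → Fin K → Set Ω :=
    fun f S k => {ω | ∀ j : Fin K, (f ∈ C (j, d k) ω ↔ j ∈ S.erase k)} with hPset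
  have hPmeas : ∀ f S k, MeasurableSet (Pset f S k) := by
    intro f S k
    have h1 : Pset f S k = ⋂ j : Fin K, C (j, d k) ⁻¹' {A | f ∈ A ↔ j ∈ S.erase k} := by
      ext ω
      simp only [hPset, Set.mem_setOf_eq, Set.mem_iInter, Set.mem_preimage]
    rw [h1]
    exact MeasurableSet.iInter (fun j => hC_meas _ (MeasurableSpace.measurableSet_top))
  set W : ℕ → ℝ≥0∞ := fun e => p1 ^ e * (1 - p1) ^ (K - e) with hW
  set w : ℕ → ℝ := fun e => q ^ e * (1 - q) ^ (K - e) with hw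
  have hWw : ∀ e, (W e).toReal = w e := by
    intro e
    rw [hW, hw, ENNReal.toReal_mul, ENNReal.toReal_pow, ENNReal.toReal_pow,
      hp1_toReal, h1p1_toReal]
  have hWtop : ∀ e, W e ≠ ∞ := by
    intro e
    rw [hW]
    exact (ENNReal.mul_lt_top (ENNReal.pow_lt_top hp1_top.lt_top)
      (ENNReal.pow_lt_top (by simp [lt_of_le_of_lt (tsub_le_self) ENNReal.one_lt_top]))).ne
  have hPval : ∀ (f : Fin F) (S : Finset (Fin K)) (k : Fin K),
      μ (Pset f S k) = W ((S.erase k).card) := by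
    intro f S k
    have h1 : Pset f S k = {ω | ∀ j, C (j, d k) ω ∈
        (fun j => {A : Finset (Fin F) | f ∈ A ↔ j ∈ S.erase k}) j} := rfl
    rw [h1, hgroup]
    have h2 : ∀ j : Fin K, μ {ω | C (j, d k) ω ∈
        (fun j => {A : Finset (Fin F) | f ∈ A ↔ j ∈ S.erase k}) j}
        = if j ∈ S.erase k then p1 else 1 - p1 := by
      intro j
      by_cases hj : j ∈ S.erase k
      · rw [if_pos hj]
        have : {ω | C (j, d k) ω ∈ {A : Finset (Fin F) | f ∈ A ↔ j ∈ S.erase k}}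
            = {ω | f ∈ C (j, d k) ω} := by
          ext ω
          simp only [Set.mem_setOf_eq, hj, iff_true]
        rw [this, hsingle]
      · rw [if_neg hj]
        have : {ω | C (j, d k) ω ∈ {A : Finset (Fin F) | f ∈ A ↔ j ∈ S.erase k}}
            = {ω | f ∉ C (j, d k) ω} := by
          ext ω
          simp only [Set.mem_setOf_eq, hj, iff_false]
        rw [this, hsingle']
    rw [Finset.prod_congr rfl (fun j _ => h2 j), Finset.prod_ite, Finset.prod_const,
      Finset.prod_const, hW]
    have hfilt : (univ.filter (fun j => j ∈ S.erase k)) = S.erase k := by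
      ext j; simp
    have hcards : (univ.filter (fun j => ¬ j ∈ S.erase k)).card = K - (S.erase k).card := by
      have h3 := Finset.card_filter_add_card_filter_not
        (s := (univ : Finset (Fin K))) (p := fun j => j ∈ S.erase k)
      rw [hfilt] at h3
      rw [Finset.card_univ, Fintype.card_fin] at h3
      omega
    rw [hfilt, hcards]
  have hpair : ∀ (f f' : Fin F) (S : Finset (Fin K)) (k k' : Fin K), k ≠ k' →
      μ (Pset f S k ∩ Pset f' S k')
        = W ((S.erase k).card) * W ((S.erase k').card) := by
    intro f f' S k k' hkk
    rw [← hPval f S k, ← hPval f' S k']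
    exact hgroup2 (d k) (d k') (fun h => hkk (hd h))
      (fun j => {A : Finset (Fin F) | f ∈ A ↔ j ∈ S.erase k})
      (fun j => {A : Finset (Fin F) | f' ∈ A ↔ j ∈ S.erase k'})
  -- indicator representation of V
  have hVsum : ∀ (S : Finset (Fin K)) (k : Fin K) (ω : Ω), ((V ω S k : ℕ) : ℝ)
      = ∑ f : Fin F, (Pset f S k).indicator (fun _ => (1:ℝ)) ω := by
    intro S k ω
    rw [hV, Finset.card_filter]
    push_cast
    apply Finset.sum_congr rfl
    intro f _
    rw [Set.indicator_apply]
    by_cases h : ∀ j : Fin K, (f ∈ C (j, d k) ω ↔ j ∈ S.erase k)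
    · rw [if_pos h, if_pos (show ω ∈ Pset f S k from h)]
    · rw [if_neg h, if_neg (show ω ∉ Pset f S k from h)]
  have hindmul : ∀ (s t : Set Ω) (ω : Ω),
      s.indicator (fun _ => (1:ℝ)) ω * t.indicator (fun _ => (1:ℝ)) ω
        = (s ∩ t).indicator (fun _ => (1:ℝ)) ω := by
    intro s t ω
    by_cases hs : ω ∈ s <;> by_cases ht : ω ∈ t <;>
      simp [hs, ht, Set.indicator_apply, Set.mem_inter_iff]
  have hVVsum : ∀ (S : Finset (Fin K)) (k k' : Fin K) (ω : Ω),
      ((V ω S k : ℕ) : ℝ) * ((V ω S k' : ℕ) : ℝ)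
        = ∑ f : Fin F, ∑ f' : Fin F,
            ((Pset f S k) ∩ (Pset f' S k')).indicator (fun _ => (1:ℝ)) ω := by
    intro S k k' ω
    rw [hVsum S k ω, hVsum S k' ω, Finset.sum_mul_sum]
    exact Finset.sum_congr rfl (fun f _ => Finset.sum_congr rfl (fun f' _ => hindmul _ _ ω))
  have hVint : ∀ S k, Integrable (fun ω => ((V ω S k : ℕ) : ℝ)) μ := by
    intro S k
    rw [show (fun ω => ((V ω S k : ℕ):ℝ))
        = fun ω => ∑ f : Fin F, (Pset f S k).indicator (fun _ => (1:ℝ)) ω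
      from funext (hVsum S k)]
    exact integrable_finset_sum _ (fun f _ => (integrable_const (1:ℝ)).indicator (hPmeas f S k))
  have hVVint : ∀ S k k', Integrable (fun ω => ((V ω S k : ℕ):ℝ) * ((V ω S k' : ℕ):ℝ)) μ := by
    intro S k k'
    rw [show (fun ω => ((V ω S k : ℕ):ℝ) * ((V ω S k' : ℕ):ℝ))
        = fun ω => ∑ f : Fin F, ∑ f' : Fin F,
            ((Pset f S k) ∩ (Pset f' S k')).indicator (fun _ => (1:ℝ)) ω
      from funext (hVVsum S k k')]
    exact integrable_finset_sum _ (fun f _ => integrable_finset_sum _ (fun f' _ =>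
      (integrable_const (1:ℝ)).indicator ((hPmeas f S k).inter (hPmeas f' S k'))))
  have hEV : ∀ S k, ∫ ω, ((V ω S k : ℕ):ℝ) ∂μ = F * w ((S.erase k).card) := by
    intro S k
    rw [show (fun ω => ((V ω S k : ℕ):ℝ))
        = fun ω => ∑ f : Fin F, (Pset f S k).indicator (fun _ => (1:ℝ)) ω
      from funext (hVsum S k)]
    rw [integral_finset_sum _ (fun f _ => (integrable_const (1:ℝ)).indicator (hPmeas f S k))]
    have h5 : ∀ f : Fin F, ∫ ω, (Pset f S k).indicator (fun _ => (1:ℝ)) ω ∂μ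
        = w ((S.erase k).card) := by
      intro f
      rw [integral_indicator_const (1:ℝ) (hPmeas f S k), measureReal_def, hPval f S k, smul_eq_mul, mul_one, hWw]
    rw [Finset.sum_congr rfl (fun f _ => h5 f), Finset.sum_const, Finset.card_univ,
      Fintype.card_fin, nsmul_eq_mul]
  have hEVV : ∀ S k k', k ≠ k' → ∫ ω, (((V ω S k : ℕ):ℝ) * ((V ω S k' : ℕ):ℝ)) ∂μ
      = ((F:ℝ) * w ((S.erase k).card)) * ((F:ℝ) * w ((S.erase k').card)) := by
    intro S k k' hkk
    rw [show (fun ω => ((V ω S k : ℕ):ℝ) * ((V ω S k' : ℕ):ℝ))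
        = fun ω => ∑ f : Fin F, ∑ f' : Fin F,
            ((Pset f S k) ∩ (Pset f' S k')).indicator (fun _ => (1:ℝ)) ω
      from funext (hVVsum S k k')]
    rw [integral_finset_sum _ (fun f _ => integrable_finset_sum _ (fun f' _ =>
      (integrable_const (1:ℝ)).indicator ((hPmeas f S k).inter (hPmeas f' S k'))))]
    have h5 : ∀ f : Fin F, ∫ ω, (∑ f' : Fin F,
        ((Pset f S k) ∩ (Pset f' S k')).indicator (fun _ => (1:ℝ)) ω) ∂μ
        = (F:ℝ) * (w ((S.erase k).card) * w ((S.erase k').card)) := by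
      intro f
      rw [integral_finset_sum _ (fun f' _ =>
        (integrable_const (1:ℝ)).indicator ((hPmeas f S k).inter (hPmeas f' S k')))]
      have h6 : ∀ f' : Fin F, ∫ ω,
          ((Pset f S k) ∩ (Pset f' S k')).indicator (fun _ => (1:ℝ)) ω ∂μ
          = w ((S.erase k).card) * w ((S.erase k').card) := by
        intro f'
        rw [integral_indicator_const (1:ℝ) ((hPmeas f S k).inter (hPmeas f' S k')), measureReal_def,
          hpair f f' S k k' hkk, smul_eq_mul, mul_one, ENNReal.toReal_mul, hWw, hWw]
      rw [Finset.sum_congr rfl (fun f' _ => h6 f'), Finset.sum_const, Finset.card_univ,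
        Fintype.card_fin, nsmul_eq_mul]
    rw [Finset.sum_congr rfl (fun f _ => h5 f), Finset.sum_const, Finset.card_univ,
      Fintype.card_fin, nsmul_eq_mul]
    ring
  have hVle : ∀ (ω : Ω) (S : Finset (Fin K)) (k : Fin K), V ω S k ≤ F := by
    intro ω S k
    rw [hV]
    exact le_trans (Finset.card_filter_le _ _) (by simp)
  have hsupint : ∀ S : Finset (Fin K), S.Nonempty →
      Integrable (fun ω => ((S.sup (fun k => V ω S k) : ℕ) : ℝ)) μ := by
    intro S hS
    have hsupeq : (fun ω => ((S.sup (fun k => V ω S k) : ℕ) : ℝ))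
        = fun ω => S.sup' hS (fun k => ((V ω S k : ℕ) : ℝ)) := by
      funext ω
      rw [← Finset.sup'_eq_sup hS]
      exact Finset.comp_sup'_eq_sup'_comp hS (fun (x:ℕ) => (x:ℝ)) (fun x y => by
        simp [Nat.cast_max])
    have hVmeas : ∀ k, Measurable (fun ω => ((V ω S k : ℕ) : ℝ)) := by
      intro k
      rw [show (fun ω => ((V ω S k : ℕ):ℝ))
          = fun ω => ∑ f : Fin F, (Pset f S k).indicator (fun _ => (1:ℝ)) ω
        from funext (hVsum S k)]
      exact Finset.measurable_sum _ (fun f _ => (measurable_const).indicator (hPmeas f S k))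
    have hsup_meas : Measurable (fun ω => ((S.sup (fun k => V ω S k) : ℕ) : ℝ)) := by
      rw [hsupeq]
      have hh := Finset.measurable_sup' hS (fun k (_ : k ∈ S) => hVmeas k)
      convert hh using 1
      funext ω
      rw [Finset.sup'_apply]
    refine Integrable.mono' (integrable_const ((F:ℝ))) hsup_meas.aestronglyMeasurable ?_
    refine Filter.Eventually.of_forall (fun ω => ?_)
    rw [Real.norm_eq_abs, abs_of_nonneg (by positivity)]
    have hb : S.sup (fun k => V ω S k) ≤ F := Finset.sup_le (fun k _ => hVle ω S k)
    exact_mod_cast hb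
  -- per-S lower bound on the expected max
  have hperS : ∀ S : Finset (Fin K), S.Nonempty →
      ∑ k ∈ S, ((F:ℝ) * w ((S.erase k).card))
        - ∑ k ∈ S, ∑ k' ∈ S.erase k,
            ((F:ℝ) * w ((S.erase k).card)) * ((F:ℝ) * w ((S.erase k').card))
      ≤ ∫ ω, ((S.sup (fun k => V ω S k) : ℕ) : ℝ) ∂μ := by
    intro S hS
    have hsup_int := hsupint S hS
    have hpt : ∀ ω : Ω,
        ∑ k ∈ S, ((V ω S k : ℕ) : ℝ)
          - ∑ k ∈ S, ∑ k' ∈ S.erase k, ((V ω S k : ℕ):ℝ) * ((V ω S k' : ℕ):ℝ)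
        ≤ ((S.sup (fun k => V ω S k) : ℕ) : ℝ) := by
      intro ω
      have h1 := aux_sup_bound S (fun k => V ω S k)
      have h2 : ((∑ k ∈ S, V ω S k : ℕ) : ℝ)
          ≤ ((S.sup (fun k => V ω S k)
              + ∑ k ∈ S, ∑ k' ∈ S.erase k, V ω S k * V ω S k' : ℕ) : ℝ) := by
        exact_mod_cast h1
      push_cast at h2
      linarith
    have hint1 : Integrable (fun ω => ∑ k ∈ S, ((V ω S k : ℕ) : ℝ)) μ :=
      integrable_finset_sum _ (fun k _ => hVint S k)
    have hint2 : Integrable (fun ω =>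
        ∑ k ∈ S, ∑ k' ∈ S.erase k, ((V ω S k : ℕ):ℝ) * ((V ω S k' : ℕ):ℝ)) μ :=
      integrable_finset_sum _ (fun k _ => integrable_finset_sum _ (fun k' _ => hVVint S k k'))
    have hmono := integral_mono (hint1.sub hint2) hsup_int (fun ω => hpt ω)
    have hEg : (∫ ω, (∑ k ∈ S, ((V ω S k : ℕ) : ℝ)
          - ∑ k ∈ S, ∑ k' ∈ S.erase k, ((V ω S k : ℕ):ℝ) * ((V ω S k' : ℕ):ℝ)) ∂μ)
        = ∑ k ∈ S, ((F:ℝ) * w ((S.erase k).card))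
          - ∑ k ∈ S, ∑ k' ∈ S.erase k,
              ((F:ℝ) * w ((S.erase k).card)) * ((F:ℝ) * w ((S.erase k').card)) := by
      rw [integral_sub hint1 hint2,
        integral_finset_sum _ (fun k _ => hVint S k),
        integral_finset_sum _ (fun k _ =>
          integrable_finset_sum _ (fun k' _ => hVVint S k k'))]
      congr 1
      · exact Finset.sum_congr rfl (fun k _ => hEV S k)
      · refine Finset.sum_congr rfl (fun k _ => ?_)
        rw [integral_finset_sum _ (fun k' _ => hVVint S k k')]
        refine Finset.sum_congr rfl (fun k' hk' => ?_)
        exact hEVV S k k' (Ne.symm (Finset.mem_erase.mp hk').1)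
    exact le_trans (le_of_eq hEg.symm) hmono
  -- summation identities
  have hswap : ∀ g : Finset (Fin K) → Fin K → ℝ,
      ∑ S ∈ (univ : Finset (Finset (Fin K))), ∑ k ∈ S, g S k
        = ∑ k : Fin K, ∑ S ∈ (univ : Finset (Finset (Fin K))).filter (fun S => k ∈ S),
            g S k := by
    intro g
    have h1 : ∀ S : Finset (Fin K), ∑ k ∈ S, g S k
        = ∑ k : Fin K, if k ∈ S then g S k else 0 := by
      intro S
      rw [Finset.sum_ite_mem, Finset.univ_inter]
    rw [Finset.sum_congr rfl (fun S _ => h1 S), Finset.sum_comm]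
    exact Finset.sum_congr rfl (fun k _ => (Finset.sum_filter _ _).symm)
  have hNEext : ∀ g : Finset (Fin K) → Fin K → ℝ,
      ∑ S ∈ (univ : Finset (Finset (Fin K))).filter (fun S => S.Nonempty), ∑ k ∈ S, g S k
        = ∑ S ∈ (univ : Finset (Finset (Fin K))), ∑ k ∈ S, g S k := by
    intro g
    apply Finset.sum_subset (Finset.filter_subset _ _)
    intro S _ hS
    simp only [Finset.mem_filter, Finset.mem_univ, true_and,
      Finset.not_nonempty_iff_eq_empty] at hS
    subst hS
    simp
  have hSA1 : ∀ k : Fin K, ∑ S ∈ (univ : Finset (Finset (Fin K))).filter (fun S => k ∈ S),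
      w ((S.erase k).card) = 1 - q := by
    intro k
    have hbij : ∑ S ∈ (univ : Finset (Finset (Fin K))).filter (fun S => k ∈ S),
        w ((S.erase k).card)
        = ∑ T ∈ ((univ : Finset (Fin K)).erase k).powerset, w T.card := by
      apply Finset.sum_nbij' (fun S => S.erase k) (fun T => insert k T)
      · intro S _
        rw [Finset.mem_powerset]
        exact Finset.erase_subset_erase k (Finset.subset_univ S)
      · intro T _
        simp only [Finset.mem_filter]
        exact ⟨Finset.mem_univ _, Finset.mem_insert_self _ _⟩
      · intro S hS
        exact Finset.insert_erase (Finset.mem_filter.mp hS).2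
      · intro T hT
        refine Finset.erase_insert (fun h => ?_)
        exact (Finset.mem_erase.mp (Finset.mem_powerset.mp hT h)).1 rfl
      · intro S _
        rfl
    rw [hbij]
    have hcardA : ((univ : Finset (Fin K)).erase k).card = K - 1 := by
      rw [Finset.card_erase_of_mem (Finset.mem_univ k), Finset.card_univ, Fintype.card_fin]
    have hterm : ∀ T ∈ ((univ : Finset (Fin K)).erase k).powerset,
        w T.card = (1-q) * (q ^ T.card * (1-q) ^ ((K-1) - T.card)) := by
      intro T hT
      have hTle : T.card ≤ K - 1 := by
        have h6 := Finset.card_le_card (Finset.mem_powerset.mp hT)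
        omega
      have hKm : K - T.card = ((K-1) - T.card) + 1 := by omega
      rw [hw]
      simp only
      rw [hKm, pow_succ]
      ring
    rw [Finset.sum_congr rfl hterm, ← Finset.mul_sum]
    have h7 := aux_powerset_sum ((univ : Finset (Fin K)).erase k) q (1-q)
    rw [hcardA] at h7
    rw [h7]
    have : q + (1-q) = 1 := by ring
    rw [this, one_pow, mul_one]
  have hSA : ∑ S ∈ (univ : Finset (Finset (Fin K))).filter (fun S => S.Nonempty),
      ∑ k ∈ S, w ((S.erase k).card) = (K:ℝ) * (1-q) := by
    rw [hNEext, hswap]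
    rw [Finset.sum_congr rfl (fun k _ => hSA1 k), Finset.sum_const, Finset.card_univ,
      Fintype.card_fin, nsmul_eq_mul]
  have hpairsum : ∀ k k' : Fin K, k' ≠ k →
      ∑ S ∈ (univ : Finset (Finset (Fin K))).filter (fun S => k ∈ S ∧ k' ∈ S),
        w ((S.erase k).card) * w ((S.erase k').card)
      = q^2*(1-q)^2 * (q^2+(1-q)^2)^(K-2) := by
    intro k k' hkk
    have hK2 : 2 ≤ K := by
      have h8 : 1 < (univ : Finset (Fin K)).card :=
        Finset.one_lt_card.mpr ⟨k, Finset.mem_univ k, k', Finset.mem_univ k', Ne.symm hkk⟩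
      rw [Finset.card_univ, Fintype.card_fin] at h8
      omega
    have hbij : ∑ S ∈ (univ : Finset (Finset (Fin K))).filter (fun S => k ∈ S ∧ k' ∈ S),
        w ((S.erase k).card) * w ((S.erase k').card)
        = ∑ T ∈ (((univ : Finset (Fin K)).erase k).erase k').powerset, (w (T.card + 1))^2 := by
      apply Finset.sum_nbij' (fun S => (S.erase k).erase k') (fun T => insert k (insert k' T))
      · intro S _
        rw [Finset.mem_powerset]
        exact Finset.erase_subset_erase k' (Finset.erase_subset_erase k (Finset.subset_univ S))
      · intro T hT
        have hT' := Finset.mem_powerset.mp hT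
        simp only [Finset.mem_filter]
        exact ⟨Finset.mem_univ _, Finset.mem_insert_self _ _,
          Finset.mem_insert_of_mem (Finset.mem_insert_self _ _)⟩
      · intro S hS
        simp only [Finset.mem_filter] at hS
        have hk'S : k' ∈ S.erase k := Finset.mem_erase.mpr ⟨hkk, hS.2.2⟩
        rw [Finset.insert_erase hk'S, Finset.insert_erase hS.2.1]
      · intro T hT
        have hT' := Finset.mem_powerset.mp hT
        have hk'T : k' ∉ T := fun h => (Finset.mem_erase.mp (hT' h)).1 rfl
        have hkT : k ∉ insert k' T := by
          intro h
          rcases Finset.mem_insert.mp h with h|h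
          · exact hkk h.symm
          · exact (Finset.mem_erase.mp (Finset.mem_erase.mp (hT' h)).2).1 rfl
        rw [Finset.erase_insert hkT, Finset.erase_insert hk'T]
      · intro S hS
        simp only [Finset.mem_filter] at hS
        have hcS : 1 < S.card :=
          Finset.one_lt_card.mpr ⟨k, hS.2.1, k', hS.2.2, fun h => hkk h.symm⟩
        have hc1 : (S.erase k).card = S.card - 1 := Finset.card_erase_of_mem hS.2.1
        have hc2 : (S.erase k').card = S.card - 1 := Finset.card_erase_of_mem hS.2.2
        have hc3 : ((S.erase k).erase k').card = S.card - 1 - 1 := by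
          rw [Finset.card_erase_of_mem (Finset.mem_erase.mpr ⟨hkk, hS.2.2⟩), hc1]
        have h9 : S.card - 1 - 1 + 1 = S.card - 1 := by omega
        rw [hc1, hc2, hc3, h9, sq]
    rw [hbij]
    have hcardA : (((univ : Finset (Fin K)).erase k).erase k').card = K - 2 := by
      rw [Finset.card_erase_of_mem (Finset.mem_erase.mpr ⟨hkk, Finset.mem_univ k'⟩),
        Finset.card_erase_of_mem (Finset.mem_univ k), Finset.card_univ, Fintype.card_fin]
      omega
    have hterm : ∀ T ∈ (((univ : Finset (Fin K)).erase k).erase k').powerset,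
        (w (T.card + 1))^2
          = (q^2*(1-q)^2) * ((q^2) ^ T.card * ((1-q)^2) ^ ((K-2) - T.card)) := by
      intro T hT
      have hTle : T.card ≤ K - 2 := by
        have h6 := Finset.card_le_card (Finset.mem_powerset.mp hT)
        omega
      have hKm : K - (T.card + 1) = ((K-2) - T.card) + 1 := by omega
      rw [hw]
      simp only
      have e1 : (T.card+1)*2 = 2 + 2*T.card := by omega
      have e2 : (((K-2)-T.card)+1)*2 = 2 + 2*((K-2)-T.card) := by omega
      rw [hKm, mul_pow, ← pow_mul, ← pow_mul, ← pow_mul, ← pow_mul, e1, e2,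
        pow_add, pow_add]
      ring
    rw [Finset.sum_congr rfl hterm, ← Finset.mul_sum]
    have h7 := aux_powerset_sum (((univ : Finset (Fin K)).erase k).erase k') (q^2) ((1-q)^2)
    rw [hcardA] at h7
    rw [h7]
  have hSB : ∑ S ∈ (univ : Finset (Finset (Fin K))).filter (fun S => S.Nonempty),
      ∑ k ∈ S, ∑ k' ∈ S.erase k, w ((S.erase k).card) * w ((S.erase k').card)
      = (K:ℝ) * (((K:ℝ)-1) * (q^2*(1-q)^2*(q^2+(1-q)^2)^(K-2))) := by
    rw [hNEext (fun S k => ∑ k' ∈ S.erase k, w ((S.erase k).card) * w ((S.erase k').card)),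
      hswap (fun S k => ∑ k' ∈ S.erase k, w ((S.erase k).card) * w ((S.erase k').card))]
    have hinner : ∀ k : Fin K,
        ∑ S ∈ (univ : Finset (Finset (Fin K))).filter (fun S => k ∈ S),
          ∑ k' ∈ S.erase k, w ((S.erase k).card) * w ((S.erase k').card)
        = ∑ k' ∈ (univ : Finset (Fin K)).erase k,
            ∑ S ∈ (univ : Finset (Finset (Fin K))).filter (fun S => k ∈ S ∧ k' ∈ S),
              w ((S.erase k).card) * w ((S.erase k').card) := by
      intro k
      have h1 : ∀ S ∈ (univ : Finset (Finset (Fin K))).filter (fun S => k ∈ S),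
          ∑ k' ∈ S.erase k, w ((S.erase k).card) * w ((S.erase k').card)
          = ∑ k' ∈ (univ : Finset (Fin K)).erase k,
              if k' ∈ S then w ((S.erase k).card) * w ((S.erase k').card) else 0 := by
        intro S _
        rw [Finset.sum_ite_mem]
        congr 1
        ext x
        simp only [Finset.mem_inter, Finset.mem_erase, Finset.mem_univ, true_and, and_comm]
      rw [Finset.sum_congr rfl h1, Finset.sum_comm]
      apply Finset.sum_congr rfl
      intro k' _
      rw [← Finset.sum_filter, Finset.filter_filter]
    rw [Finset.sum_congr rfl (fun k _ => hinner k)]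
    have h2 : ∀ k : Fin K, ∑ k' ∈ (univ : Finset (Fin K)).erase k,
        ∑ S ∈ (univ : Finset (Finset (Fin K))).filter (fun S => k ∈ S ∧ k' ∈ S),
          w ((S.erase k).card) * w ((S.erase k').card)
        = ((K:ℝ)-1) * (q^2*(1-q)^2*(q^2+(1-q)^2)^(K-2)) := by
      intro k
      have h3 : ∀ k' ∈ (univ : Finset (Fin K)).erase k,
          ∑ S ∈ (univ : Finset (Finset (Fin K))).filter (fun S => k ∈ S ∧ k' ∈ S),
            w ((S.erase k).card) * w ((S.erase k').card)
          = q^2*(1-q)^2*(q^2+(1-q)^2)^(K-2) := by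
        intro k' hk'
        exact hpairsum k k' (Finset.mem_erase.mp hk').1
      rw [Finset.sum_congr rfl h3, Finset.sum_const,
        Finset.card_erase_of_mem (Finset.mem_univ k), Finset.card_univ, Fintype.card_fin,
        nsmul_eq_mul]
      congr 1
      rw [Nat.cast_sub hK0, Nat.cast_one]
    rw [Finset.sum_congr rfl (fun k _ => h2 k), Finset.sum_const, Finset.card_univ,
      Fintype.card_fin, nsmul_eq_mul]
  -- assemble
  have hRint : ∫ ω, R ω ∂μ = (1/(F:ℝ)) *
      ∑ S ∈ (univ : Finset (Finset (Fin K))).filter (fun S => S.Nonempty),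
        ∫ ω, ((S.sup (fun k => V ω S k) : ℕ) : ℝ) ∂μ := by
    have h1 : (fun ω => R ω) = fun ω => (1/(F:ℝ)) *
        ∑ S ∈ (univ : Finset (Finset (Fin K))).filter (fun S => S.Nonempty),
          ((S.sup (fun k => V ω S k) : ℕ) : ℝ) := funext hR
    rw [h1, integral_const_mul]
    congr 1
    exact integral_finset_sum _ (fun S hS => hsupint S (Finset.mem_filter.mp hS).2)
  have hlow : (K:ℝ)*(1-q)
      - (F:ℝ) * (((K:ℝ) * ((K:ℝ)-1)) * (q^2*(1-q)^2*(q^2+(1-q)^2)^(K-2)))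
      ≤ ∫ ω, R ω ∂μ := by
    rw [hRint]
    have hbound : ∑ S ∈ (univ : Finset (Finset (Fin K))).filter (fun S => S.Nonempty),
        (∑ k ∈ S, ((F:ℝ) * w ((S.erase k).card))
          - ∑ k ∈ S, ∑ k' ∈ S.erase k,
              ((F:ℝ) * w ((S.erase k).card)) * ((F:ℝ) * w ((S.erase k').card)))
        ≤ ∑ S ∈ (univ : Finset (Finset (Fin K))).filter (fun S => S.Nonempty),
            ∫ ω, ((S.sup (fun k => V ω S k) : ℕ) : ℝ) ∂μ :=
      Finset.sum_le_sum (fun S hS => hperS S (Finset.mem_filter.mp hS).2)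
    have hval : ∑ S ∈ (univ : Finset (Finset (Fin K))).filter (fun S => S.Nonempty),
        (∑ k ∈ S, ((F:ℝ) * w ((S.erase k).card))
          - ∑ k ∈ S, ∑ k' ∈ S.erase k,
              ((F:ℝ) * w ((S.erase k).card)) * ((F:ℝ) * w ((S.erase k').card)))
        = (F:ℝ) * ((K:ℝ)*(1-q))
          - (F:ℝ)^2 * ((K:ℝ) * (((K:ℝ)-1) * (q^2*(1-q)^2*(q^2+(1-q)^2)^(K-2)))) := by
      rw [Finset.sum_sub_distrib]
      congr 1
      · rw [← hSA, Finset.mul_sum]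
        exact Finset.sum_congr rfl (fun S _ => (Finset.mul_sum _ _ _).symm)
      · rw [← hSB, Finset.mul_sum]
        refine Finset.sum_congr rfl (fun S _ => ?_)
        rw [Finset.mul_sum]
        refine Finset.sum_congr rfl (fun k _ => ?_)
        rw [Finset.mul_sum]
        exact Finset.sum_congr rfl (fun k' _ => by ring)
    have hstep := le_trans (le_of_eq hval.symm) hbound
    have hmul := mul_le_mul_of_nonneg_left hstep (by positivity : (0:ℝ) ≤ 1/(F:ℝ))
    refine le_trans (le_of_eq ?_) hmul
    field_simp
  have htq : (K:ℝ) * M / (N:ℝ) = (K:ℝ) * q := by rw [mul_div_assoc, hqMN]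
  rw [htq, hqMN]
  have hfin := aux_final K hK0 q F hq0 hq1 hFR
  linarith [hfin, hlow]
end

section
/- Let g be an integer with 2 < g ≤ K and set t := K·M/N > 0. If F < (g/(2·e·t))·(N/M)^{g−2}, then under an independent symmetric placement with distinct demands the probability that a g-clique of the induced side-information problem exists is strictly less than 1/4. -/
open MeasureTheory ProbabilityTheory Finset
open scoped ENNReal

lemma aux_pow_self_le (n : ℕ) : (n:ℝ)^n ≤ (Nat.factorial n : ℝ) * Real.exp n := by
  have h1 : (n:ℝ)^n / (Nat.factorial n : ℝ) ≤ ∑ i ∈ Finset.range (n+1), (n:ℝ)^i / (Nat.factorial i : ℝ) := by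
    refine Finset.single_le_sum (f := fun i => (n:ℝ)^i / (Nat.factorial i : ℝ)) (fun i _ => by positivity)
      (Finset.self_mem_range_succ n)
  have h2 := Real.sum_le_exp_of_nonneg (x := (n:ℝ)) (by positivity) (n+1)
  have hfac : (0:ℝ) < (Nat.factorial n : ℝ) := by positivity
  have := h1.trans h2
  rw [div_le_iff₀ hfac] at this
  linarith [this]

lemma aux_card_strictMono (g K : ℕ) :
    (Finset.univ.filter (fun k : Fin g → Fin K => StrictMono k)).card ≤ K.choose g := by
  classical
  have h := Finset.card_le_card_of_injOn (f := fun k : Fin g → Fin K => Finset.image k Finset.univ)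
      (s := Finset.univ.filter (fun k => StrictMono k))
      (t := (Finset.univ : Finset (Fin K)).powersetCard g) ?_ ?_
  · simpa [Finset.card_powersetCard] using h
  · intro k hk
    have hmono : StrictMono k := (Finset.mem_filter.mp hk).2
    rw [Finset.mem_coe, Finset.mem_powersetCard]
    exact ⟨Finset.subset_univ _, by
      rw [Finset.card_image_of_injective _ hmono.injective, Finset.card_univ, Fintype.card_fin]⟩
  · intro k1 h1 k2 h2 heq
    have hm1 : StrictMono k1 := by simpa using h1
    have hm2 : StrictMono k2 := by simpa using h2
    have heq' : Finset.image k1 Finset.univ = Finset.image k2 Finset.univ := heq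
    have hcard : (Finset.image k1 Finset.univ).card = g := by
      rw [Finset.card_image_of_injective _ hm1.injective, Finset.card_univ, Fintype.card_fin]
    have e1 : k1 = (Finset.image k1 Finset.univ).orderEmbOfFin hcard :=
      Finset.orderEmbOfFin_unique hcard (fun x => Finset.mem_image_of_mem _ (Finset.mem_univ _)) hm1
    have e2 : k2 = (Finset.image k1 Finset.univ).orderEmbOfFin hcard :=
      Finset.orderEmbOfFin_unique hcard
        (fun x => by rw [heq']; exact Finset.mem_image_of_mem _ (Finset.mem_univ _)) hm2
    rw [e1, e2]

/-- Same setting as Statement 4 (independent symmetric placement with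
i.i.d. Bernoulli(`M/N`) indicators, injective demands).  Let `2 < g ≤ K` and
`t := K·M/N > 0`.  If `F < (g/(2·e·t))·(N/M)^(g−2)`, then the probability that a
`g`-clique of the induced side-information problem exists is strictly less than `1/4`. -/
theorem stmt5
    {Ω : Type*} [MeasurableSpace Ω] (μ : Measure Ω) [IsProbabilityMeasure μ]
    (K N F : ℕ) (M : ℝ)
    (hM : 0 < M) (hMN : M ≤ (N : ℝ)) (hNK : K < N)
    (X : Fin K × Fin N × Fin F → Ω → Bool)
    (hX_meas : ∀ i, Measurable (X i))
    (hX_indep : iIndepFun X μ)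
    (hX_bern : ∀ i, μ {ω | X i ω = true} = ENNReal.ofReal (M / (N : ℝ)))
    (d : Fin K → Fin N) (hd : Function.Injective d)
    (g : ℕ) (hg : 2 < g) (hgK : g ≤ K)
    (ht : 0 < (K : ℝ) * M / (N : ℝ))
    (hF : (F : ℝ) < ((g : ℝ) / (2 * Real.exp 1 * ((K : ℝ) * M / (N : ℝ)))) *
      ((N : ℝ) / M) ^ (g - 2)) :
    μ {ω | ∃ k : Fin g → Fin K, Function.Injective k ∧
        ∃ f : Fin g → Fin F, ∀ i j : Fin g, i ≠ j → X (k j, d (k i), f i) ω = true} <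
      1 / 4 := by
  classical
  have hg0 : 0 < g := by omega
  have hN0 : (0:ℝ) < N := lt_of_lt_of_le hM hMN
  have hK0 : (0:ℝ) < K := by
    have : 0 < K := by omega
    exact_mod_cast this
  set p : ℝ := M / N with hp_def
  have hp0 : 0 < p := div_pos hM hN0
  set q : ℝ≥0∞ := ENNReal.ofReal p with hq_def
  set m := g * (g - 1) with hm_def
  set S : Finset (Fin g → Fin K) := Finset.univ.filter (fun k => StrictMono k) with hS_def
  set E : (Fin g → Fin K) × (Fin g → Fin F) → Set Ω := fun kf =>
    {ω | ∀ i j : Fin g, i ≠ j → X (kf.1 j, d (kf.1 i), kf.2 i) ω = true} with hE_def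
  -- Step A: covering
  have hsub : {ω | ∃ k : Fin g → Fin K, Function.Injective k ∧
        ∃ f : Fin g → Fin F, ∀ i j : Fin g, i ≠ j → X (k j, d (k i), f i) ω = true}
      ⊆ ⋃ kf ∈ S ×ˢ (Finset.univ : Finset (Fin g → Fin F)), E kf := by
    rintro ω ⟨k, hk, f, hkf⟩
    have hcard : (Finset.image k Finset.univ).card = g := by
      rw [Finset.card_image_of_injective _ hk, Finset.card_univ, Fintype.card_fin]
    have hτ : ∀ i : Fin g,
        ∃ j, k j = (Finset.image k Finset.univ).orderEmbOfFin hcard i := by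
      intro i
      obtain ⟨a, -, ha⟩ := Finset.mem_image.mp
        (Finset.orderEmbOfFin_mem (Finset.image k Finset.univ) hcard i)
      exact ⟨a, ha⟩
    choose τ hτ using hτ
    have hτinj : ∀ i j, i ≠ j → τ i ≠ τ j := by
      intro i j hij hc
      exact hij (((Finset.image k Finset.univ).orderEmbOfFin hcard).injective (by rw [← hτ i, ← hτ j, hc]))
    refine Set.mem_iUnion₂.mpr ⟨(fun i => (Finset.image k Finset.univ).orderEmbOfFin hcard i, fun i => f (τ i)), ?_, ?_⟩
    · rw [Finset.mem_product]
      exact ⟨Finset.mem_filter.mpr ⟨Finset.mem_univ _, ((Finset.image k Finset.univ).orderEmbOfFin hcard).strictMono⟩,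
        Finset.mem_univ _⟩
    · intro i j hij
      have := hkf (τ i) (τ j) (hτinj i j hij)
      simp only [hτ i, hτ j] at this
      exact this
  -- Step B: single event bound
  have hE_le : ∀ kf ∈ S ×ˢ (Finset.univ : Finset (Fin g → Fin F)), μ (E kf) ≤ q ^ m := by
    rintro ⟨k, f⟩ hkf
    have hk : Function.Injective k :=
      ((Finset.mem_filter.mp (Finset.mem_product.mp hkf).1).2).injective
    set φ : Fin g × Fin g → Fin K × Fin N × Fin F := fun ij => (k ij.2, d (k ij.1), f ij.1)
      with hφ_def
    have hφ : Set.InjOn φ (↑((Finset.univ : Finset (Fin g)).offDiag) : Set (Fin g × Fin g)) := by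
      rintro ⟨i, j⟩ h1 ⟨i', j'⟩ h2 h
      simp only [hφ_def, Prod.mk.injEq] at h
      obtain ⟨ha, hb, -⟩ := h
      have hi : i = i' := hk (hd hb)
      have hj : j = j' := hk ha
      simp [hi, hj]
    set T : Finset (Fin K × Fin N × Fin F) := ((Finset.univ : Finset (Fin g)).offDiag).image φ with hT_def
    have hTcard : T.card = m := by
      rw [hT_def, Finset.card_image_of_injOn hφ, Finset.offDiag_card, Finset.card_univ,
        Fintype.card_fin, hm_def]
      obtain ⟨g', rfl⟩ : ∃ g', g = g' + 1 := ⟨g - 1, by omega⟩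
      simp [Nat.mul_succ, Nat.succ_mul]
    have hEsub : E (k, f) ⊆ ⋂ t ∈ T, X t ⁻¹' ({true} : Set Bool) := by
      intro ω hω
      simp only [Set.mem_iInter]
      intro t ht
      rw [hT_def, Finset.mem_image] at ht
      obtain ⟨⟨i, j⟩, hij, rfl⟩ := ht
      have hij' : i ≠ j := (Finset.mem_offDiag.mp hij).2.2
      exact hω i j hij'
    have hprod := hX_indep.measure_inter_preimage_eq_mul T
      (sets := fun _ => ({true} : Set Bool)) (fun i _ => measurableSet_singleton true)
    calc μ (E (k, f)) ≤ μ (⋂ t ∈ T, X t ⁻¹' ({true} : Set Bool)) := measure_mono hEsub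
      _ = ∏ t ∈ T, μ (X t ⁻¹' ({true} : Set Bool)) := hprod
      _ = q ^ m := by
          have hval : ∀ t ∈ T, μ (X t ⁻¹' ({true} : Set Bool)) = q := by
            intro t _
            have : X t ⁻¹' ({true} : Set Bool) = {ω | X t ω = true} := rfl
            rw [this, hX_bern t]
          rw [Finset.prod_congr rfl hval, Finset.prod_const, hTcard]
  -- Step C: union bound
  have hμle : μ {ω | ∃ k : Fin g → Fin K, Function.Injective k ∧
        ∃ f : Fin g → Fin F, ∀ i j : Fin g, i ≠ j → X (k j, d (k i), f i) ω = true}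
      ≤ ((S.card * F ^ g : ℕ) : ℝ≥0∞) * q ^ m := by
    calc μ _ ≤ μ (⋃ kf ∈ S ×ˢ (Finset.univ : Finset (Fin g → Fin F)), E kf) := measure_mono hsub
      _ ≤ ∑ kf ∈ S ×ˢ (Finset.univ : Finset (Fin g → Fin F)), μ (E kf) :=
          measure_biUnion_finset_le _ _
      _ ≤ ∑ kf ∈ S ×ˢ (Finset.univ : Finset (Fin g → Fin F)), q ^ m := Finset.sum_le_sum hE_le
      _ = ((S.card * F ^ g : ℕ) : ℝ≥0∞) * q ^ m := by
          rw [Finset.sum_const, nsmul_eq_mul, Finset.card_product, Finset.card_univ,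
            Fintype.card_fun, Fintype.card_fin, Fintype.card_fin]
  -- Step D: real-number bound
  set e1 : ℝ := Real.exp 1 with he1
  have he1pos : 0 < e1 := Real.exp_pos 1
  have hKp : (K : ℝ) * M / (N : ℝ) = (K : ℝ) * p := by rw [hp_def]; ring
  have hNM : (N : ℝ) / M = p⁻¹ := by rw [hp_def, inv_div]
  have h1 : (F:ℝ) * p ^ (g-2) < (g:ℝ) / (2 * e1 * ((K:ℝ) * p)) := by
    have hstep := mul_lt_mul_of_pos_right hF (pow_pos hp0 (g-2))
    rw [hKp, hNM] at hstep
    calc (F:ℝ) * p ^ (g-2) < (g:ℝ) / (2 * e1 * ((K:ℝ) * p)) * (p⁻¹) ^ (g-2) * p ^ (g-2) := hstep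
      _ = (g:ℝ) / (2 * e1 * ((K:ℝ) * p)) := by
          rw [mul_assoc, inv_pow, inv_mul_cancel₀ (pow_ne_zero _ hp0.ne'), mul_one]
  have h2 : (F:ℝ) * p ^ (g-1) ≤ (g:ℝ) / (2 * e1 * (K:ℝ)) := by
    have hg1 : g - 1 = (g-2) + 1 := by omega
    rw [hg1, pow_succ, ← mul_assoc]
    have := mul_le_mul_of_nonneg_right h1.le hp0.le
    calc (F:ℝ) * p ^ (g-2) * p ≤ (g:ℝ) / (2 * e1 * ((K:ℝ) * p)) * p := this
      _ = (g:ℝ) / (2 * e1 * (K:ℝ)) := by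
          field_simp
  have h3 : (F:ℝ) ^ g * p ^ m ≤ ((g:ℝ) / (2 * e1 * (K:ℝ))) ^ g := by
    have hm2 : m = (g-1) * g := by rw [hm_def]; ring
    calc (F:ℝ) ^ g * p ^ m = ((F:ℝ) * p ^ (g-1)) ^ g := by
          rw [mul_pow, ← pow_mul, hm2]
      _ ≤ ((g:ℝ) / (2 * e1 * (K:ℝ))) ^ g := pow_le_pow_left₀ (by positivity) h2 g
  have hCfact : (Nat.factorial g : ℝ) * (S.card : ℝ) ≤ (K:ℝ) ^ g := by
    have h := aux_card_strictMono g K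
    have h2' : Nat.factorial g * S.card ≤ Nat.factorial g * K.choose g :=
      Nat.mul_le_mul_left _ h
    have h3' : Nat.factorial g * K.choose g ≤ K ^ g := by
      rw [← Nat.descFactorial_eq_factorial_mul_choose]
      exact Nat.descFactorial_le_pow K g
    exact_mod_cast h2'.trans h3'
  have hgg : (g:ℝ) ^ g ≤ (Nat.factorial g : ℝ) * e1 ^ g := by
    have h := aux_pow_self_le g
    have hexp : e1 ^ g = Real.exp (g:ℝ) := by
      rw [he1, ← Real.exp_nat_mul, mul_one]
    rw [hexp]
    exact h
  have h4 : (S.card : ℝ) * ((g:ℝ) / (2 * e1 * (K:ℝ))) ^ g ≤ (1/2:ℝ) ^ g := by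
    have hfacpos : (0:ℝ) < (Nat.factorial g : ℝ) := by positivity
    have hkey : (S.card : ℝ) * (g:ℝ) ^ g ≤ (K:ℝ) ^ g * e1 ^ g := by
      calc (S.card : ℝ) * (g:ℝ) ^ g ≤ (S.card : ℝ) * ((Nat.factorial g : ℝ) * e1 ^ g) :=
            mul_le_mul_of_nonneg_left hgg (by positivity)
        _ = ((Nat.factorial g : ℝ) * (S.card : ℝ)) * e1 ^ g := by ring
        _ ≤ (K:ℝ) ^ g * e1 ^ g := mul_le_mul_of_nonneg_right hCfact (by positivity)
    have hpos : (0:ℝ) < 2 ^ g * e1 ^ g * (K:ℝ) ^ g := by positivity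
    calc (S.card : ℝ) * ((g:ℝ) / (2 * e1 * (K:ℝ))) ^ g
        = ((S.card : ℝ) * (g:ℝ) ^ g) / (2 ^ g * e1 ^ g * (K:ℝ) ^ g) := by
          rw [div_pow, mul_pow, mul_pow]; ring
      _ ≤ ((K:ℝ) ^ g * e1 ^ g) / (2 ^ g * e1 ^ g * (K:ℝ) ^ g) := by gcongr
      _ = (1/2:ℝ) ^ g := by
          rw [div_pow, one_pow]
          field_simp
  have h5 : ((1:ℝ)/2) ^ g ≤ 1/8 := by
    calc ((1:ℝ)/2) ^ g ≤ ((1:ℝ)/2) ^ 3 :=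
        pow_le_pow_of_le_one (by norm_num) (by norm_num) (by omega)
      _ = 1/8 := by norm_num
  have hreal : ((S.card * F ^ g : ℕ) : ℝ) * p ^ m < 1/4 := by
    push_cast
    have : (S.card : ℝ) * (F:ℝ) ^ g * p ^ m ≤ (S.card : ℝ) * ((g:ℝ) / (2 * e1 * (K:ℝ))) ^ g := by
      rw [mul_assoc]
      exact mul_le_mul_of_nonneg_left h3 (by positivity)
    nlinarith [this, h4, h5]
  -- conclude
  have hconv : ((S.card * F ^ g : ℕ) : ℝ≥0∞) * q ^ m
      = ENNReal.ofReal (((S.card * F ^ g : ℕ) : ℝ) * p ^ m) := by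
    rw [hq_def, ← ENNReal.ofReal_pow hp0.le, ENNReal.ofReal_mul (by positivity),
      ENNReal.ofReal_natCast]
  have hfinal : ENNReal.ofReal (((S.card * F ^ g : ℕ) : ℝ) * p ^ m) < 1/4 := by
    have h14 : (1/4 : ℝ≥0∞) = ENNReal.ofReal (1/4 : ℝ) := by
      rw [ENNReal.ofReal_div_of_pos (by norm_num)]
      norm_num
    rw [h14]
    exact (ENNReal.ofReal_lt_ofReal_iff (by norm_num)).mpr hreal
  calc μ _ ≤ ((S.card * F ^ g : ℕ) : ℝ≥0∞) * q ^ m := hμle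
    _ = ENNReal.ofReal (((S.card * F ^ g : ℕ) : ℝ) * p ^ m) := hconv
    _ < 1/4 := hfinal
end

section
/- Under the new placement with an injective demand vector d, let R := cc/F be the normalized optimal clique-cover rate of the random side-information graph, where F = m·F'. Then for every ε > 0, P( |R − E[R]| ≥ ε·E[R] ) ≤ 2·exp( −2·ε²·(E[R])²·F / (K·m²) ). -/
open MeasureTheory ProbabilityTheory Finset
open scoped ENNReal

/-- The clique-cover number of a simple graph `G`: the minimum number `n` of cliques
(sets of pairwise adjacent vertices) whose union is the whole vertex set. -/
noncomputable def cliqueCoverNumber {V : Type*} (G : SimpleGraph V) : ℕ :=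
  sInf {n : ℕ | ∃ c : Fin n → Set V, (∀ i, G.IsClique (c i)) ∧ ∀ v, ∃ i, v ∈ c i}

/-- The side-information graph of a caching configuration.  `stored k n p` means that
packet `p` of file `n` is stored in cache `k`, and `d` is the demand vector.  Vertices
are pairs `(k, p)` such that packet `p` of file `d k` is *not* stored in cache `k`;
distinct vertices `(k, p)` and `(j, p')` are adjacent iff packet `p'` of file `d j` is
stored in cache `k` and packet `p` of file `d k` is stored in cache `j`. -/
def sideInfoGraph {User File Packet : Type*} (stored : User → File → Packet → Prop)
    (d : User → File) :
    SimpleGraph {v : User × Packet // ¬ stored v.1 (d v.1) v.2} where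
  Adj v w := v ≠ w ∧ stored v.1.1 (d w.1.1) w.1.2 ∧ stored w.1.1 (d v.1.1) v.1.2
  symm := ⟨fun v w ⟨hne, h1, h2⟩ => ⟨hne.symm, h2, h1⟩⟩
  loopless := ⟨fun v ⟨hne, _, _⟩ => hne rfl⟩


lemma cliqueCoverNumber_le_card {V : Type*} (G : SimpleGraph V) (T : Type*) [Fintype T]
    (c : T → Set V) (hcl : ∀ i, G.IsClique (c i)) (hcov : ∀ v, ∃ i, v ∈ c i) :
    cliqueCoverNumber G ≤ Fintype.card T := by
  apply Nat.sInf_le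
  refine ⟨fun i => c ((Fintype.equivFin T).symm i), fun i => hcl _, fun v => ?_⟩
  obtain ⟨i, hi⟩ := hcov v
  exact ⟨Fintype.equivFin T i, by simpa using hi⟩

lemma exists_min_cover {V : Type*} [Fintype V] (G : SimpleGraph V) :
    ∃ c : Fin (cliqueCoverNumber G) → Set V,
      (∀ i, G.IsClique (c i)) ∧ ∀ v, ∃ i, v ∈ c i := by
  have hne : {n : ℕ | ∃ c : Fin n → Set V, (∀ i, G.IsClique (c i)) ∧ ∀ v, ∃ i, v ∈ c i}.Nonempty := by
    refine ⟨Fintype.card V, fun i => {(Fintype.equivFin V).symm i}, ?_, ?_⟩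
    · intro i a ha b hb hab
      simp only [Set.mem_singleton_iff] at ha hb
      exact absurd (ha.trans hb.symm) hab
    · intro v
      exact ⟨Fintype.equivFin V v, by simp⟩
  exact Nat.sInf_mem hne

lemma cc_block_diff {K N m F' : ℕ} (d : Fin K → Fin N) (hd : Function.Injective d)
    (x y : Fin K × Fin N × Fin F' → Fin m) (j : Fin K) (gp : Fin F')
    (hagree : ∀ (k j' : Fin K) (gr : Fin F'), (j' ≠ j ∨ gr ≠ gp) →
      x (k, d j', gr) = y (k, d j', gr)) :
    cliqueCoverNumber
        (sideInfoGraph (fun (k : Fin K) (n : Fin N) (p : Fin F' × Fin m) => x (k, n, p.1) = p.2) d)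
      ≤ cliqueCoverNumber
        (sideInfoGraph (fun (k : Fin K) (n : Fin N) (p : Fin F' × Fin m) => y (k, n, p.1) = p.2) d)
        + (m - 1) := by
  classical
  set Gx := sideInfoGraph (fun (k : Fin K) (n : Fin N) (p : Fin F' × Fin m) => x (k, n, p.1) = p.2) d with hGx
  set Gy := sideInfoGraph (fun (k : Fin K) (n : Fin N) (p : Fin F' × Fin m) => y (k, n, p.1) = p.2) d with hGy
  obtain ⟨c, hcl, hcov⟩ := exists_min_cover Gy
  -- key transfer fact
  have keyB : ∀ (k : Fin K) (q : Fin K × (Fin F' × Fin m)), ¬ (q.1 = j ∧ q.2.1 = gp) →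
      (x (k, d q.1, q.2.1) = q.2.2 ↔ y (k, d q.1, q.2.1) = q.2.2) := by
    intro k q hq
    rw [hagree k q.1 q.2.1 (by tauto)]
  let T := Fin (cliqueCoverNumber Gy) ⊕ {f : Fin m // ¬ f = x (j, d j, gp)}
  let c' : T → Set {v : Fin K × (Fin F' × Fin m) // ¬ x (v.1, d v.1, v.2.1) = v.2.2} := fun t =>
    match t with
    | Sum.inl i => {v | ∃ (_ : ¬ (v.1.1 = j ∧ v.1.2.1 = gp))
        (hv : ¬ y (v.1.1, d v.1.1, v.1.2.1) = v.1.2.2),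
        (⟨v.1, hv⟩ : {v : Fin K × (Fin F' × Fin m) // ¬ y (v.1, d v.1, v.2.1) = v.2.2}) ∈ c i}
    | Sum.inr f => {v | v.1 = (j, (gp, f.1))}
  have hcl' : ∀ t, Gx.IsClique (c' t) := by
    rintro (i | f)
    · rintro v hv w hw hvw
      obtain ⟨hbv, hv1, hv2⟩ := hv
      obtain ⟨hbw, hw1, hw2⟩ := hw
      have hne : (⟨v.1, hv1⟩ : {v : Fin K × (Fin F' × Fin m) // ¬ y (v.1, d v.1, v.2.1) = v.2.2})
          ≠ ⟨w.1, hw1⟩ := by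
        intro h
        apply hvw
        apply Subtype.ext
        have h2 := congrArg Subtype.val h
        exact h2
      have hadj := hcl i hv2 hw2 hne
      rw [hGy] at hadj
      obtain ⟨_, s1, s2⟩ := hadj
      rw [hGx]
      exact ⟨hvw, (keyB v.1.1 w.1 hbw).mpr s1, (keyB w.1.1 v.1 hbv).mpr s2⟩
    · rintro v hv w hw hvw
      exact absurd (Subtype.ext (hv.trans hw.symm)) hvw
  have hcov' : ∀ v, ∃ t, v ∈ c' t := by
    intro v
    by_cases hb : v.1.1 = j ∧ v.1.2.1 = gp
    · have hne : ¬ v.1.2.2 = x (j, d j, gp) := by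
        intro h
        apply v.2
        rw [hb.1, hb.2, ← h]
      refine ⟨Sum.inr ⟨v.1.2.2, hne⟩, ?_⟩
      show v.1 = (j, (gp, v.1.2.2))
      rw [← hb.1, ← hb.2]
    · have hv' : ¬ y (v.1.1, d v.1.1, v.1.2.1) = v.1.2.2 :=
        fun h => v.2 ((keyB v.1.1 v.1 hb).mpr h)
      obtain ⟨i, hi⟩ := hcov ⟨v.1, hv'⟩
      exact ⟨Sum.inl i, hb, hv', hi⟩
  have := cliqueCoverNumber_le_card Gx T c' hcl' hcov'
  have hcard : Fintype.card T = cliqueCoverNumber Gy + (m - 1) := by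
    simp only [T, Fintype.card_sum, Fintype.card_fin]
    congr 1
    rw [Fintype.card_subtype_compl, Fintype.card_subtype_eq, Fintype.card_fin]
  rwa [hcard] at this

lemma exp_avg_le {X : Type*} [Fintype X] [Nonempty X] (Z : X → ℝ) (dd t : ℝ)
    (hsum : ∑ x, Z x = 0) (hZ : ∀ x, |Z x| ≤ dd) :
    ∑ x, Real.exp (t * Z x) ≤ (Fintype.card X : ℝ) * Real.exp (t ^ 2 * dd ^ 2 / 2) := by
  have hd0 : 0 ≤ dd := le_trans (abs_nonneg _) (hZ (Classical.arbitrary X))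
  set c : ℝ := |t| * dd with hc
  have hc0 : 0 ≤ c := mul_nonneg (abs_nonneg t) hd0
  have hcu : ∀ x, |t * Z x| ≤ c := by
    intro x
    rw [abs_mul]
    exact mul_le_mul_of_nonneg_left (hZ x) (abs_nonneg t)
  have hcsq : c ^ 2 = t ^ 2 * dd ^ 2 := by
    rw [hc, mul_pow, sq_abs]
  rcases eq_or_lt_of_le hc0 with hceq | hcpos
  · have hz : ∀ x, t * Z x = 0 := by
      intro x
      have := hcu x
      rw [← hceq] at this
      exact abs_eq_zero.mp (le_antisymm this (abs_nonneg _))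
    have h1 : (1:ℝ) ≤ Real.exp (t ^ 2 * dd ^ 2 / 2) := Real.one_le_exp (by positivity)
    have h2 : (0:ℝ) ≤ (Fintype.card X : ℝ) := Nat.cast_nonneg _
    calc ∑ x, Real.exp (t * Z x) = ∑ x : X, (1:ℝ) := by
          refine Finset.sum_congr rfl fun x _ => ?_
          rw [hz x, Real.exp_zero]
      _ = (Fintype.card X : ℝ) := by simp
      _ = (Fintype.card X : ℝ) * 1 := by ring
      _ ≤ (Fintype.card X : ℝ) * Real.exp (t ^ 2 * dd ^ 2 / 2) :=
          mul_le_mul_of_nonneg_left h1 h2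
  · have key : ∀ x, Real.exp (t * Z x) ≤ Real.cosh c + (t * Z x) * (Real.sinh c / c) := by
      intro x
      set u := t * Z x with hu
      have hu1 : -c ≤ u := neg_le_of_abs_le (hcu x)
      have hu2 : u ≤ c := le_of_abs_le (hcu x)
      have ha : 0 ≤ (c - u) / (2 * c) := div_nonneg (by linarith) (by linarith)
      have hb : 0 ≤ (c + u) / (2 * c) := div_nonneg (by linarith) (by linarith)
      have hab : (c - u) / (2 * c) + (c + u) / (2 * c) = 1 := by
        field_simp
        ring
      have hcx := convexOn_exp.2 (Set.mem_univ (-c)) (Set.mem_univ c) ha hb hab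
      rw [smul_eq_mul, smul_eq_mul] at hcx
      have harg : (c - u) / (2 * c) * (-c) + (c + u) / (2 * c) * c = u := by
        field_simp
        ring
      rw [harg] at hcx
      refine le_trans hcx (le_of_eq ?_)
      rw [Real.cosh_eq, Real.sinh_eq]
      have hcne : c ≠ 0 := ne_of_gt hcpos
      field_simp
      have hci : c * c⁻¹ = 1 := mul_inv_cancel₀ hcne
      linear_combination (-Real.exp (-c) * u + u * Real.exp c + c * Real.exp (-c) + c * Real.exp c) * hci
    calc ∑ x, Real.exp (t * Z x)
        ≤ ∑ x, (Real.cosh c + (t * Z x) * (Real.sinh c / c)) :=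
          Finset.sum_le_sum fun x _ => key x
      _ = (Fintype.card X : ℝ) * Real.cosh c + (∑ x, Z x) * (t * (Real.sinh c / c)) := by
          rw [Finset.sum_add_distrib, Finset.sum_const, Finset.card_univ, nsmul_eq_mul]
          congr 1
          rw [Finset.sum_mul]
          exact Finset.sum_congr rfl fun x _ => by ring
      _ = (Fintype.card X : ℝ) * Real.cosh c := by rw [hsum]; ring
      _ ≤ (Fintype.card X : ℝ) * Real.exp (c ^ 2 / 2) :=
          mul_le_mul_of_nonneg_left (Real.cosh_le_exp_half_sq c) (Nat.cast_nonneg _)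
      _ = (Fintype.card X : ℝ) * Real.exp (t ^ 2 * dd ^ 2 / 2) := by rw [hcsq]

universe u

lemma mcdiarmid_mgf : ∀ (n : ℕ) (β : Fin n → Type u) [∀ i, Fintype (β i)]
    [∀ i, Nonempty (β i)] (f : (∀ i, β i) → ℝ) (c : Fin n → ℝ)
    (_ : ∀ (j : Fin n) (x y : ∀ i, β i), (∀ i, i ≠ j → x i = y i) → |f x - f y| ≤ c j)
    (t : ℝ),
    ∑ x : (∀ i, β i), Real.exp (t * (f x - (∑ z : (∀ i, β i), f z) / (Fintype.card (∀ i, β i) : ℝ)))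
      ≤ (Fintype.card (∀ i, β i) : ℝ) * Real.exp (t ^ 2 * (∑ j, c j ^ 2) / 2) := by
  intro n
  induction n with
  | zero =>
    intro β _ _ f c hc t
    haveI : Unique (∀ i : Fin 0, β i) :=
      ⟨⟨fun i => i.elim0⟩, fun a => funext fun i => i.elim0⟩
    rw [Fintype.card_unique]
    rw [Fintype.sum_unique (fun x => Real.exp (t * (f x - (∑ z : (∀ i : Fin 0, β i), f z) / ((1:ℕ) : ℝ))))]
    rw [Fintype.sum_unique f]
    simp
  | succ n ih =>
    intro β _ _ f c hc t
    set e := Fin.consEquiv β with he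
    set C0 : ℝ := (Fintype.card (β 0) : ℝ) with hC0
    have hC0pos : (0:ℝ) < C0 := by
      rw [hC0]; exact_mod_cast Fintype.card_pos
    set Cy : ℝ := (Fintype.card (∀ i : Fin n, β i.succ) : ℝ) with hCy
    have hCypos : (0:ℝ) < Cy := by
      rw [hCy]; exact_mod_cast Fintype.card_pos
    have hCard : (Fintype.card (∀ i, β i) : ℝ) = C0 * Cy := by
      rw [← Fintype.card_congr e, Fintype.card_prod, hC0, hCy, Nat.cast_mul]
    set Sf : ℝ := ∑ z : (∀ i, β i), f z with hSf
    have hsum_split : ∀ (h : (∀ i, β i) → ℝ),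
        ∑ x : (∀ i, β i), h x
          = ∑ y : (∀ i : Fin n, β i.succ), ∑ b : β 0, h (Fin.cons b y) := by
      intro h
      rw [← Equiv.sum_comp e h, Fintype.sum_prod_type]
      rw [Finset.sum_comm]
      rfl
    set F1 : (∀ i : Fin n, β i.succ) → ℝ := fun y => (∑ b : β 0, f (Fin.cons b y)) / C0 with hF1
    have hSfy : Sf = ∑ y, C0 * F1 y := by
      rw [hSf, hsum_split f]
      refine Finset.sum_congr rfl fun y _ => ?_
      rw [hF1]
      field_simp
    have hSF1 : ∑ y, F1 y = Sf / C0 := by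
      rw [hSfy, ← Finset.mul_sum]
      field_simp
    have hcF1 : ∀ (j : Fin n) (y y' : ∀ i : Fin n, β i.succ),
        (∀ i, i ≠ j → y i = y' i) → |F1 y - F1 y'| ≤ c j.succ := by
      intro j y y' hyy
      rw [hF1]
      simp only
      rw [div_sub_div_same, ← Finset.sum_sub_distrib]
      rw [abs_div, abs_of_pos hC0pos, div_le_iff₀ hC0pos]
      calc |∑ b : β 0, (f (Fin.cons b y) - f (Fin.cons b y'))|
          ≤ ∑ b : β 0, |f (Fin.cons b y) - f (Fin.cons b y')| := Finset.abs_sum_le_sum_abs _ _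
        _ ≤ ∑ _b : β 0, c j.succ := by
            refine Finset.sum_le_sum fun b _ => ?_
            refine hc j.succ _ _ ?_
            intro i
            refine Fin.cases ?_ ?_ i
            · intro _; simp
            · intro i' hii
              simp only [Fin.cons_succ]
              exact hyy i' (fun hh => hii (by rw [hh]))
        _ = c j.succ * C0 := by
            rw [Finset.sum_const, Finset.card_univ, nsmul_eq_mul, hC0]; ring
    have hfactor : ∀ (y : ∀ i : Fin n, β i.succ) (b : β 0),
        Real.exp (t * (f (Fin.cons b y) - Sf / (C0 * Cy)))
          = Real.exp (t * (F1 y - Sf / (C0 * Cy))) * Real.exp (t * (f (Fin.cons b y) - F1 y)) := by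
      intro y b
      rw [← Real.exp_add]
      congr 1
      ring
    rw [hCard]
    calc ∑ x : (∀ i, β i), Real.exp (t * (f x - Sf / (C0 * Cy)))
        = ∑ y : (∀ i : Fin n, β i.succ), ∑ b : β 0,
            Real.exp (t * (f (Fin.cons b y) - Sf / (C0 * Cy))) :=
          hsum_split _
      _ = ∑ y : (∀ i : Fin n, β i.succ), Real.exp (t * (F1 y - Sf / (C0 * Cy)))
            * ∑ b : β 0, Real.exp (t * (f (Fin.cons b y) - F1 y)) := by
          refine Finset.sum_congr rfl fun y _ => ?_
          rw [Finset.mul_sum]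
          exact Finset.sum_congr rfl fun b _ => hfactor y b
      _ ≤ ∑ y : (∀ i : Fin n, β i.succ), Real.exp (t * (F1 y - Sf / (C0 * Cy)))
            * (C0 * Real.exp (t ^ 2 * c 0 ^ 2 / 2)) := by
          refine Finset.sum_le_sum fun y _ => ?_
          refine mul_le_mul_of_nonneg_left ?_ (Real.exp_nonneg _)
          have hzero : ∑ b : β 0, (f (Fin.cons b y) - F1 y) = 0 := by
            rw [Finset.sum_sub_distrib, Finset.sum_const, Finset.card_univ, nsmul_eq_mul, hF1]
            simp only
            field_simp
            rw [hC0]; ring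
          have habs : ∀ b : β 0, |f (Fin.cons b y) - F1 y| ≤ c 0 := by
            intro b
            have hb2 : f (Fin.cons b y) - F1 y
                = (∑ b' : β 0, (f (Fin.cons b y) - f (Fin.cons b' y))) / C0 := by
              rw [Finset.sum_sub_distrib, Finset.sum_const, Finset.card_univ, nsmul_eq_mul, hF1]
              simp only
              field_simp
              ring
            rw [hb2, abs_div, abs_of_pos hC0pos, div_le_iff₀ hC0pos]
            calc |∑ b' : β 0, (f (Fin.cons b y) - f (Fin.cons b' y))|
                ≤ ∑ b' : β 0, |f (Fin.cons b y) - f (Fin.cons b' y)| :=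
                  Finset.abs_sum_le_sum_abs _ _
              _ ≤ ∑ _b' : β 0, c 0 := by
                  refine Finset.sum_le_sum fun b' _ => ?_
                  refine hc 0 _ _ ?_
                  intro i
                  refine Fin.cases ?_ ?_ i
                  · intro h0; exact absurd rfl h0
                  · intro i' _
                    simp only [Fin.cons_succ]
              _ = c 0 * C0 := by
                  rw [Finset.sum_const, Finset.card_univ, nsmul_eq_mul, hC0]; ring
          have := exp_avg_le (fun b : β 0 => f (Fin.cons b y) - F1 y) (c 0) t hzero habs
          rw [← hC0] at this
          exact this
      _ = (C0 * Real.exp (t ^ 2 * c 0 ^ 2 / 2))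
            * ∑ y : (∀ i : Fin n, β i.succ), Real.exp (t * (F1 y - Sf / (C0 * Cy))) := by
          rw [← Finset.sum_mul, mul_comm]
      _ ≤ (C0 * Real.exp (t ^ 2 * c 0 ^ 2 / 2))
            * (Cy * Real.exp (t ^ 2 * (∑ j : Fin n, c j.succ ^ 2) / 2)) := by
          refine mul_le_mul_of_nonneg_left ?_ (by positivity)
          have H := ih (fun i => β i.succ) F1 (fun i => c i.succ) hcF1 t
          rw [← hCy] at H
          rw [hSF1, div_div] at H
          exact H
      _ = C0 * Cy * Real.exp (t ^ 2 * (∑ j : Fin (n+1), c j ^ 2) / 2) := by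
          rw [Fin.sum_univ_succ]
          have hexp : t ^ 2 * (c 0 ^ 2 + ∑ i : Fin n, c i.succ ^ 2) / 2
              = t ^ 2 * c 0 ^ 2 / 2 + t ^ 2 * (∑ i : Fin n, c i.succ ^ 2) / 2 := by ring
          rw [hexp, Real.exp_add]
          ring

lemma mcdiarmid_mgf_blocks {ι J A : Type} [Fintype ι] [DecidableEq ι]
    [Fintype J] [DecidableEq J] [Fintype A] [Nonempty A]
    (π : ι → J) (f : (ι → A) → ℝ) (c : J → ℝ)
    (hc : ∀ (j : J) (x y : ι → A), (∀ i, π i ≠ j → x i = y i) → |f x - f y| ≤ c j) (t : ℝ) :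
    ∑ x : ι → A, Real.exp (t * (f x - (∑ z : ι → A, f z) / (Fintype.card (ι → A) : ℝ)))
      ≤ (Fintype.card (ι → A) : ℝ) * Real.exp (t ^ 2 * (∑ j, c j ^ 2) / 2) := by
  classical
  set eJ := Fintype.equivFin J with heJ
  set g : ι → Fin (Fintype.card J) := fun i => eJ (π i) with hg
  let β : Fin (Fintype.card J) → Type := fun j' => {i : ι // g i = j'} → A
  let E : (∀ j', β j') ≃ (ι → A) :=
    (Equiv.piCurry (fun (j' : Fin (Fintype.card J)) (_ : {i : ι // g i = j'}) => A)).symm.trans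
      ((Equiv.sigmaFiberEquiv g).arrowCongr (Equiv.refl A))
  have hE : ∀ (x' : ∀ j', β j') (i : ι), E x' i = x' (g i) ⟨i, rfl⟩ := fun x' i => rfl
  have hc' : ∀ (j' : Fin (Fintype.card J)) (x' y' : ∀ j'', β j''),
      (∀ j'', j'' ≠ j' → x' j'' = y' j'') → |f (E x') - f (E y')| ≤ c (eJ.symm j') := by
    intro j' x' y' hxy
    refine hc (eJ.symm j') (E x') (E y') ?_
    intro i hi
    have hgi : g i ≠ j' := by
      intro h
      apply hi
      rw [← h, hg]
      simp
    rw [hE, hE, hxy (g i) hgi]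
  have H := mcdiarmid_mgf (Fintype.card J) β (fun x' => f (E x'))
    (fun j' => c (eJ.symm j')) hc' t
  have h1 : ∑ z' : (∀ j', β j'), f (E z') = ∑ z : ι → A, f z := Equiv.sum_comp E f
  have h2 : (Fintype.card (∀ j', β j') : ℝ) = (Fintype.card (ι → A) : ℝ) := by
    have := Fintype.card_congr E
    exact_mod_cast congrArg (fun n : ℕ => (n : ℝ)) this
  have h3 : ∑ j', c (eJ.symm j') ^ 2 = ∑ j, c j ^ 2 :=
    Equiv.sum_comp eJ.symm (fun j => c j ^ 2)
  rw [h1, h2, h3] at H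
  rw [← Equiv.sum_comp E (fun x => Real.exp (t * (f x - (∑ z : ι → A, f z) / (Fintype.card (ι → A) : ℝ))))]
  exact H

lemma tail_count {X : Type*} [Fintype X] [Nonempty X] (f : X → ℝ) (S tt : ℝ)
    (hS : 0 < S) (htt : 0 ≤ tt)
    (hmgf : ∀ t : ℝ, ∑ x, Real.exp (t * (f x - (∑ z, f z) / (Fintype.card X : ℝ)))
      ≤ (Fintype.card X : ℝ) * Real.exp (t ^ 2 * S / 2)) :
    ((Finset.univ.filter
        (fun x => tt ≤ f x - (∑ z, f z) / (Fintype.card X : ℝ))).card : ℝ)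
      ≤ (Fintype.card X : ℝ) * Real.exp (-(tt ^ 2) / (2 * S)) := by
  classical
  set avg := (∑ z, f z) / (Fintype.card X : ℝ) with havg
  set lam := tt / S with hlam
  have hlam0 : 0 ≤ lam := div_nonneg htt hS.le
  set Fl := Finset.univ.filter (fun x => tt ≤ f x - avg) with hFl
  have lower : (Fl.card : ℝ) * Real.exp (lam * tt) ≤ ∑ x, Real.exp (lam * (f x - avg)) := by
    calc (Fl.card : ℝ) * Real.exp (lam * tt) = ∑ _x ∈ Fl, Real.exp (lam * tt) := by
          rw [Finset.sum_const, nsmul_eq_mul]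
      _ ≤ ∑ x ∈ Fl, Real.exp (lam * (f x - avg)) := by
          refine Finset.sum_le_sum fun x hx => ?_
          have := (Finset.mem_filter.mp hx).2
          exact Real.exp_le_exp.mpr (mul_le_mul_of_nonneg_left this hlam0)
      _ ≤ ∑ x, Real.exp (lam * (f x - avg)) :=
          Finset.sum_le_sum_of_subset_of_nonneg (Finset.subset_univ _)
            (fun _ _ _ => (Real.exp_pos _).le)
  have upper := le_trans lower (hmgf lam)
  have hexp : lam ^ 2 * S / 2 - lam * tt = -(tt ^ 2) / (2 * S) := by
    rw [hlam]
    field_simp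
    ring
  have hexp2 : Real.exp (lam ^ 2 * S / 2) * Real.exp (-(lam * tt))
      = Real.exp (-(tt ^ 2) / (2 * S)) := by
    rw [← Real.exp_add, ← hexp]
    ring_nf
  calc (Fl.card : ℝ)
      = ((Fl.card : ℝ) * Real.exp (lam * tt)) * Real.exp (-(lam * tt)) := by
        rw [mul_assoc, ← Real.exp_add]
        simp
    _ ≤ ((Fintype.card X : ℝ) * Real.exp (lam ^ 2 * S / 2)) * Real.exp (-(lam * tt)) :=
        mul_le_mul_of_nonneg_right upper (Real.exp_pos _).le
    _ = (Fintype.card X : ℝ) * Real.exp (-(tt ^ 2) / (2 * S)) := by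
        rw [mul_assoc, hexp2]

set_option maxHeartbeats 2000000 in
/-- Under the new placement (i.i.d. uniform `U (k,n,g)` on `Fin m`,
`m = ⌈N/M⌉ ≥ 2`, `F = m·F'` packets per file) with an injective demand vector `d`, let
`R := cc/F` be the normalized optimal clique-cover rate of the random side-information
graph.  Then for every `ε > 0`,
`P(|R − E[R]| ≥ ε·E[R]) ≤ 2·exp(−2·ε²·(E[R])²·F/(K·m²))`. -/
theorem stmt6
    {Ω : Type*} [MeasurableSpace Ω] (μ : Measure Ω) [IsProbabilityMeasure μ]
    (K N m F' : ℕ) (M : ℝ)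
    (hM : 0 < M) (hMN : M ≤ (N : ℝ)) (hNK : K < N) (hF' : 0 < F')
    (hm : m = ⌈(N : ℝ) / M⌉₊) (hm2 : 2 ≤ m)
    (U : Fin K × Fin N × Fin F' → Ω → Fin m)
    (hU_meas : ∀ i, Measurable (U i))
    (hU_indep : iIndepFun U μ)
    (hU_unif : ∀ i (f : Fin m), μ {ω | U i ω = f} = ((m : ℝ≥0∞))⁻¹)
    (d : Fin K → Fin N) (hd : Function.Injective d)
    (R : Ω → ℝ)
    (hR : ∀ ω, R ω =
      (cliqueCoverNumber
        (sideInfoGraph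
          (fun (k : Fin K) (n : Fin N) (p : Fin F' × Fin m) => U (k, n, p.1) ω = p.2)
          d) : ℝ) / ((m : ℝ) * (F' : ℝ))) :
    ∀ ε : ℝ, 0 < ε →
      μ {ω | ε * (∫ ω', R ω' ∂μ) ≤ |R ω - ∫ ω', R ω' ∂μ|} ≤
        ENNReal.ofReal (2 * Real.exp (-2 * ε ^ 2 * (∫ ω', R ω' ∂μ) ^ 2 *
          ((m : ℝ) * (F' : ℝ)) / ((K : ℝ) * (m : ℝ) ^ 2))) := by
  classical
  intro ε hε
  haveI : Nonempty (Fin m) := ⟨⟨0, by omega⟩⟩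
  have hm0 : (0:ℝ) < (m : ℝ) := by exact_mod_cast (by omega : 0 < m)
  have hF'0 : (0:ℝ) < (F' : ℝ) := by exact_mod_cast hF'
  set gfun : ((Fin K × Fin N × Fin F') → Fin m) → ℝ := fun x =>
    (cliqueCoverNumber
      (sideInfoGraph
        (fun (k : Fin K) (n : Fin N) (p : Fin F' × Fin m) => x (k, n, p.1) = p.2) d) : ℝ)
      / ((m : ℝ) * (F' : ℝ)) with hgfun
  set X : Ω → (Fin K × Fin N × Fin F') → Fin m := fun ω i => U i ω with hX
  have hRX : ∀ ω, R ω = gfun (X ω) := hR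
  set cι : ℕ := Fintype.card (Fin K × Fin N × Fin F') with hcι
  -- measurability and measure of fibers
  have hXfiber : ∀ e : (Fin K × Fin N × Fin F') → Fin m,
      X ⁻¹' {e} = ⋂ i, (U i) ⁻¹' {e i} := by
    intro e
    ext ω
    simp [hX, Set.mem_iInter, funext_iff]
  have hXmeas : ∀ e : (Fin K × Fin N × Fin F') → Fin m, MeasurableSet (X ⁻¹' {e}) := by
    intro e
    rw [hXfiber e]
    exact MeasurableSet.iInter fun i => hU_meas i (measurableSet_singleton _)
  have hXsing : ∀ e : (Fin K × Fin N × Fin F') → Fin m,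
      μ (X ⁻¹' {e}) = ((m : ℝ≥0∞))⁻¹ ^ cι := by
    intro e
    have h1 : X ⁻¹' {e} = ⋂ i ∈ Finset.univ, (U i) ⁻¹' {e i} := by
      rw [hXfiber e]
      simp
    rw [h1, hU_indep.measure_inter_preimage_eq_mul Finset.univ
      (fun i _ => measurableSet_singleton (e i))]
    have : ∀ i : Fin K × Fin N × Fin F', μ ((U i) ⁻¹' {e i}) = ((m : ℝ≥0∞))⁻¹ := by
      intro i
      have : (U i) ⁻¹' {e i} = {ω | U i ω = e i} := by
        ext ω; simp
      rw [this, hU_unif i (e i)]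
    rw [Finset.prod_congr rfl (fun i _ => this i), Finset.prod_const, Finset.card_univ, hcι]
  -- card of configuration space
  have hcardE : Fintype.card ((Fin K × Fin N × Fin F') → Fin m) = m ^ cι := by
    rw [Fintype.card_fun, Fintype.card_fin, hcι]
  set prE : ℝ := ((m : ℝ) ^ cι)⁻¹ with hprE
  have hprEpos : 0 < prE := by positivity
  have htoReal : (((m : ℝ≥0∞))⁻¹ ^ cι).toReal = prE := by
    rw [ENNReal.toReal_pow, ENNReal.toReal_inv, ENNReal.toReal_natCast, hprE, inv_pow]
  -- integral identity
  have hRdecomp : ∀ ω, R ω = ∑ e : (Fin K × Fin N × Fin F') → Fin m,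
      Set.indicator (X ⁻¹' {e}) (fun _ => gfun e) ω := by
    intro ω
    rw [hRX ω]
    rw [Finset.sum_eq_single (X ω)]
    · rw [Set.indicator_of_mem (by exact rfl : ω ∈ X ⁻¹' {X ω})]
    · intro e _ hne
      apply Set.indicator_of_notMem
      intro hmem
      exact hne (Eq.symm hmem)
    · intro h
      exact absurd (Finset.mem_univ _) h
  have hInt : ∫ ω', R ω' ∂μ = ∑ e : (Fin K × Fin N × Fin F') → Fin m,
      prE * gfun e := by
    calc ∫ ω', R ω' ∂μ
        = ∫ ω', (∑ e : (Fin K × Fin N × Fin F') → Fin m,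
            Set.indicator (X ⁻¹' {e}) (fun _ => gfun e) ω') ∂μ := by
          refine integral_congr_ae (Filter.Eventually.of_forall ?_)
          exact hRdecomp
      _ = ∑ e : (Fin K × Fin N × Fin F') → Fin m,
            ∫ ω', Set.indicator (X ⁻¹' {e}) (fun _ => gfun e) ω' ∂μ := by
          refine integral_finset_sum _ fun e _ => ?_
          exact (integrable_const (gfun e)).indicator (hXmeas e)
      _ = ∑ e : (Fin K × Fin N × Fin F') → Fin m, prE * gfun e := by
          refine Finset.sum_congr rfl fun e _ => ?_
          rw [integral_indicator_const _ (hXmeas e), measureReal_def, hXsing e, htoReal, smul_eq_mul]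
  set EV : ℝ := ∫ ω', R ω' ∂μ with hEVdef
  have hEVavg : EV = (∑ z : (Fin K × Fin N × Fin F') → Fin m, gfun z)
      / (Fintype.card ((Fin K × Fin N × Fin F') → Fin m) : ℝ) := by
    rw [hInt, ← Finset.mul_sum, hcardE, hprE]
    push_cast
    rw [inv_mul_eq_div]
  rcases le_or_gt EV 0 with hE0 | hEpos
  · -- degenerate case : EV = 0, bound by 1 ≤ 2
    have hEV0 : EV = 0 := by
      refine le_antisymm hE0 ?_
      rw [hEVdef]
      refine integral_nonneg fun ω => ?_
      rw [hR ω]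
      positivity
    rw [hEV0]
    have hz : -2 * ε ^ 2 * (0:ℝ) ^ 2 * ((m : ℝ) * (F' : ℝ)) / ((K : ℝ) * (m : ℝ) ^ 2) = 0 := by
      norm_num
    rw [hz, Real.exp_zero, mul_one]
    calc μ {ω | ε * 0 ≤ |R ω - 0|} ≤ 1 := prob_le_one
      _ ≤ ENNReal.ofReal 2 := by
          rw [show (1 : ℝ≥0∞) = ENNReal.ofReal 1 by simp]
          exact ENNReal.ofReal_le_ofReal (by norm_num)
  · -- main case
    set tt : ℝ := ε * EV with htt
    have htt0 : 0 < tt := mul_pos hε hEpos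
    -- K ≠ 0
    have hK0 : K ≠ 0 := by
      intro hK
      have hg0 : ∀ e : (Fin K × Fin N × Fin F') → Fin m, gfun e = 0 := by
        intro e
        rw [hgfun]
        dsimp only
        rw [div_eq_zero_iff]
        left
        rw [Nat.cast_eq_zero]
        refine Nat.le_zero.mp (Nat.sInf_le ?_)
        exact ⟨fun i => i.elim0, fun i => i.elim0, fun v => absurd v.1.1.isLt (by omega)⟩
      have hEz : EV = 0 := by
        rw [hEVavg, Finset.sum_congr rfl fun e _ => hg0 e]
        simp
      linarith
    have hKpos : (0:ℝ) < (K:ℝ) := by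
      have := Nat.pos_of_ne_zero hK0
      exact_mod_cast this
    -- blocks
    set blocks : (Fin K × Fin N × Fin F') → Fin K × Fin F' := fun i =>
      (if h : ∃ j : Fin K, d j = i.2.1 then h.choose else ⟨0, Nat.pos_of_ne_zero hK0⟩,
        i.2.2) with hblocks
    have hπ : ∀ (k j : Fin K) (gr : Fin F'), blocks (k, d j, gr) = (j, gr) := by
      intro k j gr
      have hex : ∃ j' : Fin K, d j' = d j := ⟨j, rfl⟩
      rw [hblocks]
      dsimp only
      rw [dif_pos hex, hd hex.choose_spec]
    set cconst : ℝ := ((m:ℝ) - 1) / ((m:ℝ) * (F':ℝ)) with hcconst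
    have hm2' : (2:ℝ) ≤ (m:ℝ) := by exact_mod_cast hm2
    have hcpos : 0 < cconst := by
      rw [hcconst]
      apply div_pos (by linarith) (by positivity)
    -- bounded differences
    have hdiff : ∀ (jg : Fin K × Fin F') (x y : (Fin K × Fin N × Fin F') → Fin m),
        (∀ i, blocks i ≠ jg → x i = y i) → |gfun x - gfun y| ≤ cconst := by
      intro jg x y hxy
      have hagree : ∀ (k j' : Fin K) (gr : Fin F'), (j' ≠ jg.1 ∨ gr ≠ jg.2) →
          x (k, d j', gr) = y (k, d j', gr) := by
        intro k j' gr hor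
        apply hxy
        rw [hπ]
        intro hh
        cases hor with
        | inl h => exact h (congrArg Prod.fst hh)
        | inr h => exact h (congrArg Prod.snd hh)
      have h1 := cc_block_diff d hd x y jg.1 jg.2 hagree
      have h2 := cc_block_diff d hd y x jg.1 jg.2
        (fun k j' gr hor => (hagree k j' gr hor).symm)
      rw [hgfun]
      dsimp only
      rw [div_sub_div_same, abs_div,
        abs_of_pos (by positivity : (0:ℝ) < (m:ℝ) * (F':ℝ)), hcconst]
      have hmsub : (((m - 1 : ℕ)) : ℝ) = (m:ℝ) - 1 := by
        have : 1 ≤ m := by omega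
        push_cast [this]
        ring
      have hc1 : ((cliqueCoverNumber (sideInfoGraph
          (fun (k : Fin K) (n : Fin N) (p : Fin F' × Fin m) => x (k, n, p.1) = p.2) d) : ℝ))
          ≤ (cliqueCoverNumber (sideInfoGraph
          (fun (k : Fin K) (n : Fin N) (p : Fin F' × Fin m) => y (k, n, p.1) = p.2) d) : ℝ)
            + ((m:ℝ) - 1) := by
        have := (Nat.cast_le (α := ℝ)).mpr h1
        push_cast at this
        rw [hmsub] at this
        linarith
      have hc2 : ((cliqueCoverNumber (sideInfoGraph
          (fun (k : Fin K) (n : Fin N) (p : Fin F' × Fin m) => y (k, n, p.1) = p.2) d) : ℝ))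
          ≤ (cliqueCoverNumber (sideInfoGraph
          (fun (k : Fin K) (n : Fin N) (p : Fin F' × Fin m) => x (k, n, p.1) = p.2) d) : ℝ)
            + ((m:ℝ) - 1) := by
        have := (Nat.cast_le (α := ℝ)).mpr h2
        push_cast at this
        rw [hmsub] at this
        linarith
      apply (div_le_div_iff_of_pos_right (by positivity : (0:ℝ) < (m:ℝ) * (F':ℝ))).mpr
      rw [abs_sub_le_iff]
      exact ⟨by linarith, by linarith⟩
    -- sum of squared block constants
    set Ssum : ℝ := (K : ℝ) * (F' : ℝ) * cconst ^ 2 with hSsumdef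
    have hSpos : 0 < Ssum := by
      rw [hSsumdef]
      positivity
    have hSsum_eq : (∑ _jg : Fin K × Fin F', cconst ^ 2) = Ssum := by
      rw [Finset.sum_const, Finset.card_univ, Fintype.card_prod, Fintype.card_fin,
        Fintype.card_fin, nsmul_eq_mul, hSsumdef]
      push_cast
      ring
    -- mgf bounds
    have hmgf_up : ∀ t : ℝ, ∑ x : (Fin K × Fin N × Fin F') → Fin m,
        Real.exp (t * (gfun x - (∑ z : (Fin K × Fin N × Fin F') → Fin m, gfun z)
          / (Fintype.card ((Fin K × Fin N × Fin F') → Fin m) : ℝ)))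
        ≤ (Fintype.card ((Fin K × Fin N × Fin F') → Fin m) : ℝ)
          * Real.exp (t ^ 2 * Ssum / 2) := by
      intro t
      have := mcdiarmid_mgf_blocks blocks gfun (fun _ => cconst) hdiff t
      rwa [hSsum_eq] at this
    have hdiffneg : ∀ (jg : Fin K × Fin F') (x y : (Fin K × Fin N × Fin F') → Fin m),
        (∀ i, blocks i ≠ jg → x i = y i) → |(-gfun x) - (-gfun y)| ≤ cconst := by
      intro jg x y h
      rw [show -gfun x - -gfun y = -(gfun x - gfun y) by ring, abs_neg]
      exact hdiff jg x y h
    have hmgf_lo : ∀ t : ℝ, ∑ x : (Fin K × Fin N × Fin F') → Fin m,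
        Real.exp (t * (-gfun x - (∑ z : (Fin K × Fin N × Fin F') → Fin m, -gfun z)
          / (Fintype.card ((Fin K × Fin N × Fin F') → Fin m) : ℝ)))
        ≤ (Fintype.card ((Fin K × Fin N × Fin F') → Fin m) : ℝ)
          * Real.exp (t ^ 2 * Ssum / 2) := by
      intro t
      have := mcdiarmid_mgf_blocks blocks (fun x => -gfun x) (fun _ => cconst) hdiffneg t
      rwa [hSsum_eq] at this
    -- tail counts
    have hup := tail_count gfun Ssum tt hSpos htt0.le hmgf_up
    have hlo := tail_count (fun x => -gfun x) Ssum tt hSpos htt0.le hmgf_lo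
    set cardE : ℝ := (Fintype.card ((Fin K × Fin N × Fin F') → Fin m) : ℝ) with hcardEr
    set up : Finset ((Fin K × Fin N × Fin F') → Fin m) := Finset.univ.filter
      (fun x => tt ≤ gfun x - (∑ z : (Fin K × Fin N × Fin F') → Fin m, gfun z) / cardE)
      with hupdef
    set lo : Finset ((Fin K × Fin N × Fin F') → Fin m) := Finset.univ.filter
      (fun x => tt ≤ -gfun x - (∑ z : (Fin K × Fin N × Fin F') → Fin m, -gfun z) / cardE)
      with hlodef
    -- the event set
    set Sev : Finset ((Fin K × Fin N × Fin F') → Fin m) :=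
      Finset.univ.filter (fun e => ε * EV ≤ |gfun e - EV|) with hSev
    have hsub : {ω | ε * EV ≤ |R ω - EV|} ⊆ ⋃ e ∈ Sev, X ⁻¹' {e} := by
      intro ω hω
      have hmem : X ω ∈ Sev := by
        rw [hSev, Finset.mem_filter]
        refine ⟨Finset.mem_univ _, ?_⟩
        rw [← hRX ω]
        exact hω
      exact Set.mem_biUnion hmem rfl
    have hμ1 : μ {ω | ε * EV ≤ |R ω - EV|} ≤ ∑ e ∈ Sev, μ (X ⁻¹' {e}) :=
      le_trans (measure_mono hsub) (measure_biUnion_finset_le _ _)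
    have hμ2 : ∑ e ∈ Sev, μ (X ⁻¹' {e}) = (Sev.card : ℝ≥0∞) * ((m : ℝ≥0∞))⁻¹ ^ cι := by
      rw [Finset.sum_congr rfl fun e _ => hXsing e, Finset.sum_const, nsmul_eq_mul]
    -- card split
    have hsplit : Sev.card ≤ up.card + lo.card := by
      refine le_trans (Finset.card_le_card ?_) (Finset.card_union_le _ _)
      intro e he
      rw [hSev, Finset.mem_filter] at he
      rw [Finset.mem_union, hupdef, hlodef, Finset.mem_filter, Finset.mem_filter]
      have hsneg : (∑ z : (Fin K × Fin N × Fin F') → Fin m, -gfun z)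
          = -(∑ z : (Fin K × Fin N × Fin F') → Fin m, gfun z) := by
        rw [Finset.sum_neg_distrib]
      rcases le_abs.mp he.2 with h | h
      · left
        refine ⟨Finset.mem_univ _, ?_⟩
        rw [← hEVavg]
        exact h
      · right
        refine ⟨Finset.mem_univ _, ?_⟩
        rw [hsneg, neg_div, ← hEVavg]
        linarith
    -- real-valued bound
    have hcard_prE : cardE * prE = 1 := by
      rw [hcardEr, hcardE, hprE]
      push_cast
      field_simp
    have hreal : (Sev.card : ℝ) * prE ≤ 2 * Real.exp (-(tt ^ 2) / (2 * Ssum)) := by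
      have hcards : (Sev.card : ℝ) ≤ (up.card : ℝ) + (lo.card : ℝ) := by
        exact_mod_cast hsplit
      have hub : (up.card : ℝ) + (lo.card : ℝ)
          ≤ 2 * cardE * Real.exp (-(tt ^ 2) / (2 * Ssum)) := by
        linarith [hup, hlo]
      calc (Sev.card : ℝ) * prE ≤ (2 * cardE * Real.exp (-(tt ^ 2) / (2 * Ssum))) * prE :=
            mul_le_mul_of_nonneg_right (hcards.trans hub) hprEpos.le
        _ = 2 * Real.exp (-(tt ^ 2) / (2 * Ssum)) * (cardE * prE) := by ring
        _ = 2 * Real.exp (-(tt ^ 2) / (2 * Ssum)) := by rw [hcard_prE, mul_one]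
    -- exponent comparison
    have hkey : 4 * ((m:ℝ) - 1) ^ 2 ≤ (m:ℝ) ^ 3 := by nlinarith [hm2', mul_nonneg (sub_nonneg.mpr hm2') (sq_nonneg ((m:ℝ) - 1))]
    have hRHSeq : tt ^ 2 / (2 * Ssum)
        = ε ^ 2 * EV ^ 2 * ((m:ℝ) ^ 2 * (F':ℝ)) / (2 * (K:ℝ) * ((m:ℝ) - 1) ^ 2) := by
      rw [htt, hSsumdef, hcconst]
      have hmne : (m:ℝ) ≠ 0 := ne_of_gt hm0
      have hF'ne : (F':ℝ) ≠ 0 := ne_of_gt hF'0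
      have hKne : (K:ℝ) ≠ 0 := ne_of_gt hKpos
      have hm1ne : (m:ℝ) - 1 ≠ 0 := by linarith
      field_simp
    have hnum : 2 * ε ^ 2 * EV ^ 2 * ((m : ℝ) * (F' : ℝ)) / ((K : ℝ) * (m : ℝ) ^ 2)
        ≤ tt ^ 2 / (2 * Ssum) := by
      rw [hRHSeq]
      have hden1 : (0:ℝ) < (K : ℝ) * (m : ℝ) ^ 2 := mul_pos hKpos (by positivity)
      have hden2 : (0:ℝ) < 2 * (K:ℝ) * ((m:ℝ) - 1) ^ 2 :=
        mul_pos (mul_pos two_pos hKpos) (pow_pos (by linarith) 2)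
      rw [div_le_div_iff₀ hden1 hden2]
      have hq : (0:ℝ) ≤ ε ^ 2 * EV ^ 2 * (F':ℝ) * (K:ℝ) * (m:ℝ) := by positivity
      have hmul := mul_le_mul_of_nonneg_left hkey hq
      nlinarith [hmul]
    have hAB : -(tt ^ 2) / (2 * Ssum)
        ≤ -2 * ε ^ 2 * EV ^ 2 * ((m : ℝ) * (F' : ℝ)) / ((K : ℝ) * (m : ℝ) ^ 2) := by
      have h1 : -2 * ε ^ 2 * EV ^ 2 * ((m : ℝ) * (F' : ℝ))
          = -(2 * ε ^ 2 * EV ^ 2 * ((m : ℝ) * (F' : ℝ))) := by ring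
      rw [h1, neg_div, neg_div]
      exact neg_le_neg hnum
    -- put it together in ℝ≥0∞
    have hofReal : (Sev.card : ℝ≥0∞) * ((m : ℝ≥0∞))⁻¹ ^ cι
        = ENNReal.ofReal ((Sev.card : ℝ) * prE) := by
      rw [ENNReal.ofReal_mul (Nat.cast_nonneg _)]
      congr 1
      · rw [ENNReal.ofReal_natCast]
      · rw [hprE, ← inv_pow, ENNReal.ofReal_pow (by positivity : (0:ℝ) ≤ ((m:ℝ))⁻¹)]
        congr 1
        rw [ENNReal.ofReal_inv_of_pos hm0, ENNReal.ofReal_natCast]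
    calc μ {ω | ε * EV ≤ |R ω - EV|} ≤ ∑ e ∈ Sev, μ (X ⁻¹' {e}) := hμ1
      _ = (Sev.card : ℝ≥0∞) * ((m : ℝ≥0∞))⁻¹ ^ cι := hμ2
      _ = ENNReal.ofReal ((Sev.card : ℝ) * prE) := hofReal
      _ ≤ ENNReal.ofReal (2 * Real.exp (-2 * ε ^ 2 * EV ^ 2 *
            ((m : ℝ) * (F' : ℝ)) / ((K : ℝ) * (m : ℝ) ^ 2))) := by
          apply ENNReal.ofReal_le_ofReal
          refine le_trans hreal ?_
          have := Real.exp_le_exp.mpr hAB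
          linarith
end

section
/- Let G and G' be simple graphs on the same finite vertex set V, and let W ⊆ V be a set of vertices such that every edge of G that is not an edge of G' and every edge of G' that is not an edge of G has at least one endpoint in W. Then |cc(G) − cc(G')| ≤ |W|, where cc(H) denotes the minimum number of cliques of the graph H needed to cover its whole vertex set. -/
lemma ccSet_nonempty {V : Type*} [Fintype V] (G : SimpleGraph V) :
    {n : ℕ | ∃ c : Fin n → Set V, (∀ i, G.IsClique (c i)) ∧ ∀ v, ∃ i, v ∈ c i}.Nonempty := by
  refine ⟨Fintype.card V, fun i => {(Fintype.equivFin V).symm i}, fun i => ?_, fun v => ?_⟩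
  · simp [SimpleGraph.isClique_singleton]
  · exact ⟨Fintype.equivFin V v, by simp⟩

lemma cc_le {V : Type*} [Fintype V] (G G' : SimpleGraph V) (W : Finset V)
    (hW : ∀ v w : V, ¬(G.Adj v w ↔ G'.Adj v w) → v ∈ W ∨ w ∈ W) :
    cliqueCoverNumber G ≤ cliqueCoverNumber G' + W.card := by
  obtain ⟨c, hc, hcov⟩ := Nat.sInf_mem (ccSet_nonempty G')
  apply Nat.sInf_le
  refine ⟨Fin.addCases (fun i => c i \ (W : Set V))
    (fun j => {(W.equivFin.symm j : V)}), fun i => ?_, fun v => ?_⟩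
  · refine Fin.addCases (fun i => ?_) (fun j => ?_) i
    · simp only [Fin.addCases_left]
      intro u hu w hw hne
      have hadj : G'.Adj u w := hc i hu.1 hw.1 hne
      by_contra h
      rcases hW u w (fun hiff => h (hiff.mpr hadj)) with h' | h'
      · exact hu.2 h'
      · exact hw.2 h'
    · simp only [Fin.addCases_right]
      simp [SimpleGraph.isClique_singleton]
  · by_cases hv : v ∈ W
    · refine ⟨Fin.natAdd _ (W.equivFin ⟨v, hv⟩), ?_⟩
      simp
    · obtain ⟨i, hi⟩ := hcov v
      exact ⟨Fin.castAdd _ i, by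
        have key := Fin.addCases_left (m := cliqueCoverNumber G') (n := W.card)
          (motive := fun _ => Set V) (left := fun i => c i \ (W : Set V))
          (right := fun j => ({(W.equivFin.symm j : V)} : Set V)) i
        exact (congrArg (v ∈ ·) key).mpr ⟨hi, hv⟩⟩

/-- Let `G` and `G'` be simple graphs on the same finite vertex set `V`,
and let `W ⊆ V` be a set of vertices such that every edge of `G` that is not an edge of
`G'`, and every edge of `G'` that is not an edge of `G`, has at least one endpoint in `W`.
Then `|cc(G) − cc(G')| ≤ |W|`. -/
theorem stmt8 {V : Type*} [Fintype V] (G G' : SimpleGraph V) (W : Finset V)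
    (hW : ∀ v w : V, ¬(G.Adj v w ↔ G'.Adj v w) → v ∈ W ∨ w ∈ W) :
    |(cliqueCoverNumber G : ℤ) - (cliqueCoverNumber G' : ℤ)| ≤ (W.card : ℤ) := by
  have h1 := cc_le G G' W hW
  have h2 := cc_le G' G W (fun v w h => hW v w (fun hiff => h hiff.symm))
  rw [abs_sub_le_iff]
  omega
end

section
/- Under the new placement with distinct demands, for every nonempty S ⊆ {1,…,K} with |S| ≥ 2 and every k ∈ S, the random variable V_{k,S∖k} has the Binomial(F', μ(|S|)) distribution, where μ(s) := m·(1/m)^{s−1}·(1 − 1/m)^{K−s+1}; moreover, the random variables (V_{k,S∖k})_{k∈S} are mutually independent. -/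
open MeasureTheory ProbabilityTheory Finset
open scoped ENNReal

lemma aux_iIndep_mono {Ω ι : Type*} [MeasurableSpace Ω] {μ : Measure Ω}
    {m₁ m₂ : ι → MeasurableSpace Ω} (h : iIndep m₁ μ) (hle : ∀ i, m₂ i ≤ m₁ i) :
    iIndep m₂ μ := by
  rw [iIndep_iff] at h ⊢
  exact fun s f hf => h s fun i hi => hle i _ (hf i hi)

lemma aux_grouping {Ω ι κ : Type*} [MeasurableSpace Ω] {μ : Measure Ω}
    {β : ι → Type*} [mβ : ∀ i, MeasurableSpace (β i)]
    {X : ∀ i, Ω → β i} (hX_meas : ∀ i, Measurable (X i))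
    (hX : iIndepFun X μ) (J : κ → Set ι)
    (hJ : ∀ k k', k ≠ k' → Disjoint (J k) (J k')) :
    iIndep (fun k => ⨆ i ∈ J k, MeasurableSpace.comap (X i) (mβ i)) μ := by
  classical
  set mm : ι → MeasurableSpace Ω := fun i => MeasurableSpace.comap (X i) (mβ i) with hmm
  refine iIndepSets.iIndep ?_
    (fun k => piiUnionInter (fun i => {s | MeasurableSet[mm i] s}) (J k)) ?_ ?_ ?_
  · intro k
    exact iSup₂_le fun i _ => measurable_iff_comap_le.mp (hX_meas i)
  · exact fun k => isPiSystem_piiUnionInter _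
      (fun i => @MeasurableSpace.isPiSystem_measurableSet Ω (mm i)) _
  · exact fun k => (generateFrom_piiUnionInter_measurableSet mm (J k)).symm
  · rw [iIndepSets_iff]
    intro s f hf
    have hf' : ∀ k, ∃ (t : Finset ι) (g : ι → Set Ω), ↑t ⊆ J k ∧
        (∀ i ∈ t, MeasurableSet[mm i] (g i)) ∧ (k ∈ s → f k = ⋂ i ∈ t, g i) := by
      intro k
      by_cases hk : k ∈ s
      · obtain ⟨t, hts, g, hg, heq⟩ := hf k hk
        exact ⟨t, g, hts, hg, fun _ => heq⟩
      · exact ⟨∅, fun _ => Set.univ, by simp, by simp, fun h => absurd h hk⟩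
    choose t g hts hg heq using hf'
    have hg' : ∀ k i, ∃ s', MeasurableSet[mβ i] s' ∧ (i ∈ t k → X i ⁻¹' s' = g k i) := by
      intro k i
      by_cases hi : i ∈ t k
      · obtain ⟨s', hs', hpre⟩ := hg k i hi
        exact ⟨s', hs', fun _ => hpre⟩
      · exact ⟨Set.univ, MeasurableSet.univ, fun h => absurd h hi⟩
    choose B hB hBeq using hg'
    set sets : ∀ i, Set (β i) := fun i =>
      if h : ∃ k ∈ s, i ∈ t k then B h.choose i else Set.univ with hsets
    have hsets_meas : ∀ i, MeasurableSet[mβ i] (sets i) := by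
      intro i
      rw [hsets]
      dsimp only
      split
      · exact hB _ i
      · exact MeasurableSet.univ
    have hsets_eq : ∀ k ∈ s, ∀ i ∈ t k, X i ⁻¹' sets i = g k i := by
      intro k hk i hi
      have hex : ∃ k ∈ s, i ∈ t k := ⟨k, hk, hi⟩
      have h1 := hex.choose_spec
      have hkk : hex.choose = k := by
        by_contra hne
        exact Set.disjoint_left.mp (hJ _ _ hne) (hts hex.choose h1.2) (hts k hi)
      have : sets i = B hex.choose i := by rw [hsets]; exact dif_pos hex
      rw [this, hkk]
      exact hBeq k i hi
    have hfk : ∀ k ∈ s, f k = ⋂ i ∈ t k, X i ⁻¹' sets i := by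
      intro k hk
      rw [heq k hk]
      exact Set.iInter₂_congr fun i hi => (hsets_eq k hk i hi).symm
    have hdisj : (↑s : Set κ).PairwiseDisjoint t := by
      intro k hk k' hk' hne
      rw [Function.onFun_apply, Finset.disjoint_left]
      intro i hik hik'
      exact Set.disjoint_left.mp (hJ k k' hne) (hts k hik) (hts k' hik')
    have hbig : (⋂ k ∈ s, f k) = ⋂ i ∈ s.biUnion t, X i ⁻¹' sets i := by
      rw [Finset.set_biInter_biUnion]
      exact Set.iInter₂_congr hfk
    rw [hbig, hX.measure_inter_preimage_eq_mul _ (fun i _ => hsets_meas i),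
      Finset.prod_biUnion hdisj]
    refine Finset.prod_congr rfl fun k hk => ?_
    rw [hfk k hk, hX.measure_inter_preimage_eq_mul _ (fun i _ => hsets_meas i)]

lemma aux_count {α γ : Type*} [Fintype α] [Fintype γ] [DecidableEq α] [DecidableEq γ]
    (G : Finset γ) (j : ℕ) :
    (univ.filter (fun w : α → γ => (univ.filter (fun a => w a ∈ G)).card = j)).card
      = (Fintype.card α).choose j * G.card ^ j * Gᶜ.card ^ (Fintype.card α - j) := by
  classical
  have key : ∀ (T : Finset α) (w : α → γ),
      w ∈ Fintype.piFinset (fun a => if a ∈ T then G else Gᶜ) →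
      univ.filter (fun a => w a ∈ G) = T := by
    intro T w hw
    rw [Fintype.mem_piFinset] at hw
    ext a
    have h := hw a
    by_cases haT : a ∈ T
    · rw [if_pos haT] at h
      simp [haT, h]
    · rw [if_neg haT] at h
      simp [haT, Finset.mem_compl.mp h]
  have hsplit : (univ.filter (fun w : α → γ => (univ.filter (fun a => w a ∈ G)).card = j))
      = (Finset.powersetCard j univ).biUnion
          (fun T => Fintype.piFinset (fun a => if a ∈ T then G else Gᶜ)) := by
    ext w
    simp only [mem_filter, mem_univ, true_and, mem_biUnion, Finset.mem_powersetCard_univ]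
    constructor
    · intro h
      refine ⟨univ.filter (fun a => w a ∈ G), h, ?_⟩
      rw [Fintype.mem_piFinset]
      intro a
      by_cases ha : w a ∈ G <;> simp [ha]
    · rintro ⟨T, hT, hw⟩
      rw [key T w hw]
      exact hT
  have hdisj : ∀ T ∈ Finset.powersetCard j (univ : Finset α),
      ∀ T' ∈ Finset.powersetCard j (univ : Finset α), T ≠ T' →
      Disjoint (Fintype.piFinset (fun a => if a ∈ T then G else Gᶜ))
        (Fintype.piFinset (fun a => if a ∈ T' then G else Gᶜ)) := by
    intro T _ T' _ hne
    rw [Finset.disjoint_left]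
    intro w hw hw'
    exact hne ((key T w hw).symm.trans (key T' w hw'))
  rw [hsplit, Finset.card_biUnion hdisj]
  have hcard : ∀ T ∈ Finset.powersetCard j (univ : Finset α),
      (Fintype.piFinset (fun a => if a ∈ T then G else Gᶜ)).card
        = G.card ^ j * Gᶜ.card ^ (Fintype.card α - j) := by
    intro T hT
    have hTcard : T.card = j := (Finset.mem_powersetCard_univ.mp hT)
    rw [Fintype.card_piFinset, ← Finset.prod_filter_mul_prod_filter_not univ (· ∈ T)]
    have h1 : univ.filter (fun a => a ∈ T) = T := by ext a; simp
    have h2 : (univ.filter (fun a => ¬ a ∈ T)).card = Fintype.card α - j := by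
      rw [Finset.filter_not, h1, Finset.card_sdiff_of_subset (Finset.subset_univ T), Finset.card_univ,
        hTcard]
    congr 1
    · rw [Finset.prod_congr h1 (fun a ha => by rw [if_pos ha]), Finset.prod_const, hTcard]
    · rw [Finset.prod_congr rfl (fun a ha => by rw [if_neg (Finset.mem_filter.mp ha).2]),
        Finset.prod_const, h2]
  rw [Finset.sum_congr rfl hcard, Finset.sum_const, Finset.card_powersetCard, Finset.card_univ,
    smul_eq_mul, mul_assoc]

/-- Under the new placement (i.i.d. uniform `U (k,n,g)` on `Fin m`,
`m = ⌈N/M⌉ ≥ 2`, `F = m·F'` packets per file) with an injective demand vector `d`,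
for every `S ⊆ [K]` with `|S| ≥ 2` and every `k ∈ S`, the random variable
`V ω S k` (the number of packets of file `d k` stored in exactly the caches of `S \ {k}`)
has the `Binomial(F', μ(|S|))` distribution with
`μ(s) = m·(1/m)^(s−1)·(1 − 1/m)^(K−s+1)`; moreover the family `(V · S k)_{k ∈ S}` is
mutually independent. -/
theorem stmt10
    {Ω : Type*} [MeasurableSpace Ω] (μ : Measure Ω) [IsProbabilityMeasure μ]
    (K N m F' : ℕ) (M : ℝ)
    (hM : 0 < M) (hMN : M ≤ (N : ℝ)) (hNK : K < N) (hF' : 0 < F')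
    (hm : m = ⌈(N : ℝ) / M⌉₊) (hm2 : 2 ≤ m)
    (U : Fin K × Fin N × Fin F' → Ω → Fin m)
    (hU_meas : ∀ i, Measurable (U i))
    (hU_indep : iIndepFun U μ)
    (hU_unif : ∀ i (f : Fin m), μ {ω | U i ω = f} = ((m : ℝ≥0∞))⁻¹)
    (d : Fin K → Fin N) (hd : Function.Injective d)
    (V : Ω → Finset (Fin K) → Fin K → ℕ)
    (hV : ∀ ω S k, V ω S k =
      (Finset.univ.filter (fun p : Fin F' × Fin m =>
        ∀ j : Fin K, (U (j, d k, p.1) ω = p.2 ↔ j ∈ S.erase k))).card) :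
    ∀ S : Finset (Fin K), 2 ≤ S.card →
      (∀ k ∈ S, ∀ j : ℕ,
        μ {ω | V ω S k = j} =
          ENNReal.ofReal ((F'.choose j : ℝ) *
            ((m : ℝ) * (1 / (m : ℝ)) ^ (S.card - 1) *
              (1 - 1 / (m : ℝ)) ^ (K - S.card + 1)) ^ j *
            (1 - (m : ℝ) * (1 / (m : ℝ)) ^ (S.card - 1) *
              (1 - 1 / (m : ℝ)) ^ (K - S.card + 1)) ^ (F' - j))) ∧
      iIndepFun
        (fun k : {x : Fin K // x ∈ S} => fun ω => V ω S k.1) μ := by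
  classical
  intro S hS
  have hsK : S.card ≤ K := by
    simpa using Finset.card_le_univ S
  have hmR : (0:ℝ) < m := by exact_mod_cast (by omega : 0 < m)
  have hKS : K - (S.card - 1) = K - S.card + 1 := by omega
  -- the per-user block random vector
  set W : Fin K → Ω → (Fin K × Fin F' → Fin m) :=
    fun k ω jg => U (jg.1, d k, jg.2) ω with hW
  have hW_meas : ∀ k, Measurable (W k) :=
    fun k => measurable_pi_lambda _ (fun jg => hU_meas _)
  set ψ : Fin K → (Fin K × Fin F' → Fin m) → ℕ := fun k y =>
    (univ.filter (fun p : Fin F' × Fin m =>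
      ∀ jj : Fin K, (y (jj, p.1) = p.2 ↔ jj ∈ S.erase k))).card with hψ
  have hVW : ∀ (ω : Ω) (k : Fin K), V ω S k = ψ k (W k ω) := fun ω k => hV ω S k
  have hρinj : ∀ k : Fin K,
      Function.Injective (fun jg : Fin K × Fin F' => ((jg.1, d k, jg.2) : Fin K × Fin N × Fin F')) := by
    intro k jg jg' h
    have h1 : jg.1 = jg'.1 := congrArg (fun x => x.1) h
    have h2 : jg.2 = jg'.2 := congrArg (fun x => x.2.2) h
    exact Prod.ext h1 h2
  -- measure of atoms
  have hatom : ∀ (k : Fin K) (y : Fin K × Fin F' → Fin m),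
      μ {ω | W k ω = y} = ((m : ℝ≥0∞))⁻¹ ^ (K * F') := by
    intro k y
    have hset : {ω | W k ω = y}
        = ⋂ i ∈ Finset.image (fun jg : Fin K × Fin F' => ((jg.1, d k, jg.2) : Fin K × Fin N × Fin F')) univ,
            U i ⁻¹' {y (i.1, i.2.2)} := by
      ext ω
      simp only [Set.mem_setOf_eq, funext_iff, Set.mem_iInter, Finset.mem_image,
        Finset.mem_univ, true_and, Set.mem_preimage, Set.mem_singleton_iff]
      constructor
      · rintro h i ⟨jg, rfl⟩
        exact h jg
      · intro h jg
        exact h _ ⟨jg, rfl⟩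
    rw [hset, hU_indep.measure_inter_preimage_eq_mul _ (fun i _ => measurableSet_singleton _),
      Finset.prod_image (fun a _ b _ h => hρinj k h)]
    have hterm : ∀ jg : Fin K × Fin F',
        μ (U (jg.1, d k, jg.2) ⁻¹' {y jg}) = ((m : ℝ≥0∞))⁻¹ := fun jg => hU_unif _ _
    rw [Finset.prod_congr rfl (fun jg _ => hterm jg), Finset.prod_const, Finset.card_univ,
      Fintype.card_prod, Fintype.card_fin, Fintype.card_fin]
  -- measure of the V-event
  have hmeasV : ∀ (k : Fin K) (j : ℕ),
      μ {ω | V ω S k = j}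
        = ((univ.filter (fun y : Fin K × Fin F' → Fin m => ψ k y = j)).card : ℝ≥0∞)
            * ((m : ℝ≥0∞))⁻¹ ^ (K * F') := by
    intro k j
    have hev : {ω | V ω S k = j}
        = ⋃ y ∈ (univ.filter (fun y : Fin K × Fin F' → Fin m => ψ k y = j)),
            {ω | W k ω = y} := by
      ext ω
      simp only [Set.mem_setOf_eq, Set.mem_iUnion, Finset.mem_filter, Finset.mem_univ, true_and,
        hVW ω k]
      constructor
      · intro h
        exact ⟨W k ω, h, rfl⟩
      · rintro ⟨y, hy, hw⟩
        rw [hw]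
        exact hy
    rw [hev, measure_biUnion_finset ?_ ?_]
    · rw [Finset.sum_congr rfl (fun y _ => hatom k y), Finset.sum_const, nsmul_eq_mul]
    · intro y hy y' hy' hne
      rw [Function.onFun_apply, Set.disjoint_left]
      rintro ω h h'
      exact hne (h.symm.trans h')
    · exact fun y _ => (hW_meas k) (measurableSet_singleton y)
  -- counting
  have hcount : ∀ k ∈ S, ∀ j : ℕ,
      (univ.filter (fun y : Fin K × Fin F' → Fin m => ψ k y = j)).card
        = F'.choose j * (m * (m-1)^(K - S.card + 1))^j
            * (m^K - m * (m-1)^(K - S.card + 1))^(F' - j) := by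
    intro k hk j
    obtain ⟨j0, hj0⟩ : ∃ j0, j0 ∈ S.erase k := by
      refine Finset.card_pos.mp ?_
      rw [Finset.card_erase_of_mem hk]
      omega
    set G : Finset (Fin K → Fin m) :=
      univ.filter (fun v => ∃ f, ∀ jj, (v jj = f ↔ jj ∈ S.erase k)) with hG
    have hψG : ∀ y : Fin K × Fin F' → Fin m,
        ψ k y = (univ.filter (fun g : Fin F' => (fun jj => y (jj, g)) ∈ G)).card := by
      intro y
      rw [hψ]
      dsimp only
      rw [Finset.card_filter, Finset.card_filter, Fintype.sum_prod_type]
      refine Finset.sum_congr rfl fun g _ => ?_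
      by_cases hvg : ∃ f, ∀ jj, (y (jj, g) = f ↔ jj ∈ S.erase k)
      · obtain ⟨f0, hf0⟩ := hvg
        have huniq : ∀ f : Fin m, (∀ jj, (y (jj, g) = f ↔ jj ∈ S.erase k)) ↔ f = f0 := by
          intro f
          constructor
          · intro hf
            exact ((hf j0).mpr hj0).symm.trans ((hf0 j0).mpr hj0)
          · rintro rfl
            exact hf0
        rw [Finset.sum_congr rfl (fun f _ => by rw [if_congr (huniq f) rfl rfl]),
          Finset.sum_ite_eq' univ f0 (fun _ => 1), if_pos (Finset.mem_univ f0),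
          if_pos (by simp only [hG, Finset.mem_filter, Finset.mem_univ, true_and]; exact ⟨f0, hf0⟩)]
      · rw [Finset.sum_eq_zero (fun f _ => if_neg (fun h => hvg ⟨f, h⟩)),
          if_neg (by simp only [hG, Finset.mem_filter, Finset.mem_univ, true_and]; exact hvg)]
    -- bijection to curried functions
    have hbij : (univ.filter (fun y : Fin K × Fin F' → Fin m => ψ k y = j)).card
        = (univ.filter (fun w : Fin F' → (Fin K → Fin m) =>
            (univ.filter (fun g => w g ∈ G)).card = j)).card := by
      refine Finset.card_bij' (fun y _ => fun g jj => y (jj, g))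
        (fun w _ => fun p => w p.2 p.1) ?_ ?_ ?_ ?_
      · intro y hy
        simp only [Finset.mem_filter, Finset.mem_univ, true_and] at hy ⊢
        rw [← hy, hψG y]
      · intro w hw
        simp only [Finset.mem_filter, Finset.mem_univ, true_and] at hw ⊢
        rw [hψG (fun p => w p.2 p.1)]
        exact hw
      · intro y _
        rfl
      · intro w _
        rfl
    -- cardinality of G
    have hGcard : G.card = m * (m-1)^(K - S.card + 1) := by
      have hGU : G = univ.biUnion (fun f : Fin m =>
          Fintype.piFinset (fun jj => if jj ∈ S.erase k then ({f} : Finset (Fin m)) else {f}ᶜ)) := by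
        ext v
        simp only [hG, Finset.mem_filter, Finset.mem_univ, true_and, Finset.mem_biUnion,
          Fintype.mem_piFinset]
        refine exists_congr fun f => ?_
        refine forall_congr' fun jj => ?_
        by_cases hjj : jj ∈ S.erase k <;> simp [hjj]
      have hpiece : ∀ f : Fin m,
          (Fintype.piFinset (fun jj => if jj ∈ S.erase k then ({f} : Finset (Fin m)) else {f}ᶜ)).card
            = (m-1)^(K - S.card + 1) := by
        intro f
        rw [Fintype.card_piFinset,
          ← Finset.prod_filter_mul_prod_filter_not univ (· ∈ S.erase k)]
        have h1 : univ.filter (fun jj => jj ∈ S.erase k) = S.erase k := by ext a; simp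
        have h2 : (univ.filter (fun jj => ¬ jj ∈ S.erase k)).card = K - S.card + 1 := by
          have hc : univ.filter (fun jj => ¬ jj ∈ S.erase k) = univ \ S.erase k := by
            ext a; simp
          rw [hc, Finset.card_sdiff_of_subset (Finset.subset_univ (S.erase k)),
            Finset.card_univ, Fintype.card_fin, Finset.card_erase_of_mem hk]
          exact hKS
        have hA : ∀ a ∈ univ.filter (fun jj => jj ∈ S.erase k),
            (if a ∈ S.erase k then ({f} : Finset (Fin m)) else {f}ᶜ).card = 1 := fun a ha => by
          rw [if_pos (Finset.mem_filter.mp ha).2, Finset.card_singleton]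
        have hB : ∀ a ∈ univ.filter (fun jj => ¬ jj ∈ S.erase k),
            (if a ∈ S.erase k then ({f} : Finset (Fin m)) else {f}ᶜ).card = m - 1 := fun a ha => by
          rw [if_neg (Finset.mem_filter.mp ha).2, Finset.card_compl, Finset.card_singleton,
            Fintype.card_fin]
        rw [Finset.prod_congr rfl hA, Finset.prod_congr rfl hB, Finset.prod_const_one,
          Finset.prod_const, h2, one_mul]
      rw [hGU, Finset.card_biUnion ?_]
      · rw [Finset.sum_congr rfl (fun f _ => hpiece f), Finset.sum_const, Finset.card_univ,
          Fintype.card_fin, smul_eq_mul]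
      · intro f _ f' _ hne
        rw [Function.onFun_apply, Finset.disjoint_left]
        intro v hv hv'
        rw [Fintype.mem_piFinset] at hv hv'
        have h1 := hv j0
        have h2 := hv' j0
        rw [if_pos hj0] at h1
        rw [if_pos hj0] at h2
        exact hne ((Finset.mem_singleton.mp h1).symm.trans (Finset.mem_singleton.mp h2))
    have hGcc : Gᶜ.card = m^K - m * (m-1)^(K - S.card + 1) := by
      rw [Finset.card_compl, hGcard]
      congr 1
      rw [Fintype.card_fun, Fintype.card_fin, Fintype.card_fin]
    rw [hbij, aux_count G j, hGcard, hGcc, Fintype.card_fin]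
  refine ⟨?_, ?_⟩
  · -- marginal distribution
    intro k hk j
    rw [hmeasV k j, hcount k hk j]
    have hc1le : m * (m-1)^(K - S.card + 1) ≤ m ^ K := by
      calc m * (m-1)^(K - S.card + 1) ≤ m * m^(K - S.card + 1) :=
            Nat.mul_le_mul_left _ (Nat.pow_le_pow_left (by omega) _)
        _ = m^(K - S.card + 1 + 1) := by ring
        _ ≤ m^K := Nat.pow_le_pow_right (by omega) (by omega)
    have hminv : ((m : ℝ≥0∞))⁻¹ = ENNReal.ofReal ((m:ℝ)⁻¹) := by
      rw [ENNReal.ofReal_inv_of_pos hmR, ENNReal.ofReal_natCast]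
    rw [hminv, ← ENNReal.ofReal_pow (by positivity), ← ENNReal.ofReal_natCast,
      ← ENNReal.ofReal_mul (by positivity)]
    congr 1
    -- a real identity
    by_cases hj : j ≤ F'
    · obtain ⟨r, hr⟩ : ∃ r, F' = j + r := ⟨F' - j, by omega⟩
      have hrj : F' - j = r := by omega
      have hmne : (m:ℝ) ≠ 0 := ne_of_gt hmR
      have hmKne : ((m:ℝ)^K) ≠ 0 := pow_ne_zero _ hmne
      have hcast : ((m * (m-1)^(K - S.card + 1) : ℕ) : ℝ)
          = (m:ℝ) * ((m:ℝ)-1)^(K - S.card + 1) := by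
        push_cast [Nat.cast_sub (by omega : 1 ≤ m)]
        ring
      have hcast2 : ((m^K - m * (m-1)^(K - S.card + 1) : ℕ) : ℝ)
          = (m:ℝ)^K - (m:ℝ) * ((m:ℝ)-1)^(K - S.card + 1) := by
        rw [Nat.cast_sub hc1le, hcast]
        push_cast
        ring
      have hp : (m : ℝ) * (1 / (m : ℝ)) ^ (S.card - 1) * (1 - 1 / (m : ℝ)) ^ (K - S.card + 1)
          = (m:ℝ) * ((m:ℝ)-1)^(K - S.card + 1) / (m:ℝ)^K := by
        have h1m : (1:ℝ) - 1/m = ((m:ℝ) - 1)/m := by field_simp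
        have hmk : ((m:ℝ))^K = (m:ℝ)^(S.card - 1) * (m:ℝ)^(K - S.card + 1) := by
          rw [← pow_add]
          congr 1
          omega
        rw [h1m, div_pow, div_pow, one_pow, hmk]
        field_simp
      have h1p : 1 - (m : ℝ) * (1 / (m : ℝ)) ^ (S.card - 1) * (1 - 1 / (m : ℝ)) ^ (K - S.card + 1)
          = ((m:ℝ)^K - (m:ℝ) * ((m:ℝ)-1)^(K - S.card + 1)) / (m:ℝ)^K := by
        rw [hp]
        field_simp
      rw [h1p, hp, hrj]
      push_cast [hcast, hcast2]
      rw [div_pow, div_pow]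
      have hKF : (m:ℝ)⁻¹ ^ (K * F') = (((m:ℝ)^K)⁻¹)^(F') := by
        rw [← inv_pow, ← pow_mul]
      rw [hKF, hr]
      field_simp
      rw [one_div, inv_pow, pow_add]
      field_simp
      ring
    · have h0 : F'.choose j = 0 := Nat.choose_eq_zero_of_lt (by omega)
      rw [h0]
      norm_num
  · -- independence
    have hJdisj : ∀ k k' : {x : Fin K // x ∈ S}, k ≠ k' →
        Disjoint (Set.range (fun jg : Fin K × Fin F' => ((jg.1, d k.1, jg.2) : Fin K × Fin N × Fin F')))
          (Set.range (fun jg : Fin K × Fin F' => ((jg.1, d k'.1, jg.2) : Fin K × Fin N × Fin F'))) := by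
      intro k k' hne
      rw [Set.disjoint_left]
      rintro i ⟨jg, rfl⟩ ⟨jg', heq⟩
      apply hne
      have hdd : d k'.1 = d k.1 := congrArg (fun x => x.2.1) heq
      exact Subtype.ext (hd hdd).symm
    have hgroup := aux_grouping hU_meas hU_indep
      (fun k : {x : Fin K // x ∈ S} =>
        Set.range (fun jg : Fin K × Fin F' => ((jg.1, d k.1, jg.2) : Fin K × Fin N × Fin F')))
      hJdisj
    refine aux_iIndep_mono hgroup ?_
    intro k
    have hfun : (fun ω => V ω S k.1) = ψ k.1 ∘ W k.1 := funext fun ω => hVW ω k.1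
    show MeasurableSpace.comap (fun ω => V ω S k.1) inferInstance ≤ _
    rw [hfun, ← MeasurableSpace.comap_comp]
    refine le_trans (MeasurableSpace.comap_mono
      (measurable_iff_comap_le.mp (measurable_of_countable (ψ k.1)))) ?_
    have hpi : (MeasurableSpace.pi : MeasurableSpace (Fin K × Fin F' → Fin m))
        = ⨆ jg : Fin K × Fin F', MeasurableSpace.comap (fun y => y jg) inferInstance := rfl
    rw [hpi, MeasurableSpace.comap_iSup]
    refine iSup_le fun jg => ?_
    rw [MeasurableSpace.comap_comp]
    exact le_iSup₂ (f := fun i (_ : i ∈ Set.range fun jg : Fin K × Fin F' =>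
      ((jg.1, d k.1, jg.2) : Fin K × Fin N × Fin F')) =>
        MeasurableSpace.comap (U i) inferInstance) (jg.1, d k.1, jg.2) ⟨jg, rfl⟩
end

section
/- Fix integers K ≥ 1 and m ≥ 2, set q := 1/m and μ(s) := m·q^{s−1}·(1−q)^{K−s+1} for 1 ≤ s ≤ K, and assume μ(1) = m·(1−q)^K ≤ 1. For each positive integer F' and each nonempty S ⊆ {1,…,K}, let (Y^{F'}_{k,S})_{k∈S} be independent Binomial(F', μ(|S|)) random variables. Then lim_{F'→∞} (1/(m·F')) · Σ_{∅≠S⊆{1,…,K}} E[ max_{k∈S} Y^{F'}_{k,S} ] = ((1−q)/q)·(1 − (1−q)^K). -/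
open MeasureTheory ProbabilityTheory Finset
open scoped ENNReal

noncomputable def bpmf (n : ℕ) (p : ℝ) (j : ℕ) : ℝ := (n.choose j : ℝ) * p ^ j * (1 - p) ^ (n - j)

lemma bpmf_nonneg {n : ℕ} {p : ℝ} (h0 : 0 ≤ p) (h1 : p ≤ 1) (j : ℕ) : 0 ≤ bpmf n p j := by
  unfold bpmf
  have : (0:ℝ) ≤ 1 - p := by linarith
  positivity

lemma bpmf_sum (n : ℕ) (p : ℝ) : ∑ j ∈ range (n+1), bpmf n p j = 1 := by
  have h2 : ∑ j ∈ range (n+1), bpmf n p j = (p + (1-p))^n := by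
    rw [add_pow]
    exact Finset.sum_congr rfl fun j _ => by unfold bpmf; ring
  rw [h2]
  norm_num

lemma bpmf_mean (n : ℕ) (p : ℝ) : ∑ j ∈ range (n+1), (j:ℝ) * bpmf n p j = n * p := by
  cases n with
  | zero => simp
  | succ d =>
    rw [Finset.sum_range_succ']
    simp only [Nat.cast_zero, zero_mul, add_zero]
    have key : ∀ i ∈ range (d+1), ((i+1 : ℕ):ℝ) * bpmf (d+1) p (i+1)
        = ((d+1:ℕ):ℝ) * p * bpmf d p i := by
      intro i hi
      unfold bpmf
      have hc : (d+1) * (d.choose i) = (d+1).choose (i+1) * (i+1) := Nat.add_one_mul_choose_eq d i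
      have hc' : ((d+1 : ℕ):ℝ) * (d.choose i : ℝ) = ((d+1).choose (i+1) : ℝ) * ((i+1:ℕ):ℝ) := by
        exact_mod_cast congrArg (Nat.cast : ℕ → ℝ) hc
      have hsub : d + 1 - (i + 1) = d - i := by omega
      rw [hsub]
      push_cast at hc' ⊢
      linear_combination (-(p ^ (i+1) * (1-p)^(d-i))) * hc'
    rw [Finset.sum_congr rfl key, ← Finset.mul_sum, bpmf_sum d p]
    push_cast
    ring

lemma bpmf_second (n : ℕ) (p : ℝ) :
    ∑ j ∈ range (n+1), (j:ℝ) * ((j:ℝ) - 1) * bpmf n p j = n * ((n:ℝ) - 1) * p^2 := by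
  match n with
  | 0 => simp
  | 1 => norm_num [Finset.sum_range_succ, bpmf]
  | (d+2) =>
    rw [Finset.sum_range_succ']
    rw [Finset.sum_range_succ']
    simp only [Nat.cast_zero, Nat.cast_one, zero_mul, mul_zero, add_zero]
    have key : ∀ i ∈ range (d+1),
        ((i+1+1 : ℕ):ℝ) * (((i+1+1 : ℕ):ℝ) - 1) * bpmf (d+2) p (i+1+1)
        = ((d+2:ℕ):ℝ) * ((d+1:ℕ):ℝ) * p^2 * bpmf d p i := by
      intro i hi
      unfold bpmf
      have h1 : (d+1) * (d.choose i) = (d+1).choose (i+1) * (i+1) := Nat.add_one_mul_choose_eq d i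
      have h2 : (d+2) * ((d+1).choose (i+1)) = (d+2).choose (i+2) * (i+2) :=
        Nat.add_one_mul_choose_eq (d+1) (i+1)
      have hc : (d+2) * (d+1) * (d.choose i) = (d+2).choose (i+2) * (i+2) * (i+1) := by
        calc (d+2) * (d+1) * (d.choose i) = (d+2) * ((d+1) * (d.choose i)) := by ring
        _ = (d+2) * ((d+1).choose (i+1) * (i+1)) := by rw [h1]
        _ = (d+2) * ((d+1).choose (i+1)) * (i+1) := by ring
        _ = (d+2).choose (i+2) * (i+2) * (i+1) := by rw [h2]
      have hc' : ((d:ℝ)+2) * ((d:ℝ)+1) * (d.choose i : ℝ)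
          = ((d+2).choose (i+2) : ℝ) * ((i:ℝ)+2) * ((i:ℝ)+1) := by exact_mod_cast hc
      have hsub : d + 2 - (i + 1 + 1) = d - i := by omega
      rw [hsub]
      push_cast
      linear_combination (-(p ^ (i+2) * (1-p)^(d-i))) * hc'
    rw [Finset.sum_congr rfl key, ← Finset.mul_sum, bpmf_sum d p]
    push_cast
    ring

lemma bpmf_var (n : ℕ) (p : ℝ) :
    ∑ j ∈ range (n+1), ((j:ℝ) - n*p)^2 * bpmf n p j = n * p * (1 - p) := by
  have expand : ∀ j ∈ range (n+1), ((j:ℝ) - n*p)^2 * bpmf n p j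
      = (j:ℝ) * ((j:ℝ)-1) * bpmf n p j + (1 - 2*(n*p)) * ((j:ℝ) * bpmf n p j)
        + (n*p)^2 * bpmf n p j := fun j _ => by ring
  rw [Finset.sum_congr rfl expand]
  rw [Finset.sum_add_distrib, Finset.sum_add_distrib, ← Finset.mul_sum, ← Finset.mul_sum,
    bpmf_second, bpmf_mean, bpmf_sum]
  ring

open MeasureTheory

lemma tail_null {Ω : Type*} [MeasurableSpace Ω] (μ : Measure Ω) {X : Ω → ℕ} {n : ℕ}
    (h0 : ∀ j, n < j → μ {ω | X ω = j} = 0) : μ {ω | n < X ω} = 0 := by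
  have hsub : {ω | n < X ω} ⊆ ⋃ j : ℕ, {ω | X ω = n + 1 + j} := by
    intro ω hω
    have h : n < X ω := hω
    exact Set.mem_iUnion.2 ⟨X ω - (n+1), by simp only [Set.mem_setOf_eq]; omega⟩
  exact measure_mono_null hsub (measure_iUnion_null fun j => h0 _ (by omega))

lemma key_integral {Ω : Type*} [MeasurableSpace Ω] (μ : Measure Ω) [IsProbabilityMeasure μ]
    {X : Ω → ℕ} (hX : Measurable X) {n : ℕ}
    (h0 : ∀ j, n < j → μ {ω | X ω = j} = 0) (f : ℕ → ℝ) :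
    Integrable (fun ω => f (X ω)) μ ∧
      ∫ ω, f (X ω) ∂μ = ∑ j ∈ range (n+1), f j * (μ {ω | X ω = j}).toReal := by
  have hmeas : ∀ j : ℕ, MeasurableSet {ω | X ω = j} := fun j => hX (measurableSet_singleton j)
  set g : Ω → ℝ := fun ω => ∑ j ∈ range (n+1), Set.indicator {ω | X ω = j} (fun _ => f j) ω
    with hg
  have hint_j : ∀ j ∈ range (n+1),
      Integrable (fun ω => Set.indicator {ω | X ω = j} (fun _ => f j) ω) μ :=
    fun j _ => (integrable_const (f j)).indicator (hmeas j)
  have hg_int : Integrable g μ := integrable_finset_sum _ hint_j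
  have h_ae : (fun ω => f (X ω)) =ᵐ[μ] g := by
    have hae : ∀ᵐ ω ∂μ, X ω ≤ n := by
      rw [ae_iff]
      have : {ω | ¬ X ω ≤ n} = {ω | n < X ω} := by ext ω; simp
      rw [this]
      exact tail_null μ h0
    filter_upwards [hae] with ω hω
    rw [hg]
    simp only [Set.indicator_apply, Set.mem_setOf_eq]
    rw [Finset.sum_ite_eq (range (n+1)) (X ω) f]
    simp [Nat.lt_succ_iff, hω]
  constructor
  · exact hg_int.congr h_ae.symm
  · rw [integral_congr_ae h_ae, hg, integral_finset_sum _ hint_j]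
    exact Finset.sum_congr rfl fun j _ => by
      rw [integral_indicator_const (f j) (hmeas j)]
      simp [mul_comm, measureReal_def]

lemma maxbound {x t : ℝ} (ht : 0 < t) : max x 0 ≤ x^2/(4*t) + t := by
  have h1 : x ≤ x^2/(4*t) + t := by
    rw [div_add' _ _ _ (by positivity)]
    rw [le_div_iff₀ (by positivity)]
    nlinarith [sq_nonneg (x - 2*t)]
  have h2 : (0:ℝ) ≤ x^2/(4*t) + t := by positivity
  exact max_le h1 h2

lemma binom_moments {Ω : Type*} [MeasurableSpace Ω] (μ : Measure Ω) [IsProbabilityMeasure μ]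
    {X : Ω → ℕ} (hX : Measurable X) {n : ℕ} (hn : 1 ≤ n) {p : ℝ} (hp0 : 0 ≤ p) (hp1 : p ≤ 1)
    (hlaw : ∀ j, μ {ω | X ω = j} = ENNReal.ofReal (bpmf n p j)) :
    Integrable (fun ω => ((X ω : ℕ) : ℝ)) μ ∧ (∫ ω, ((X ω : ℕ) : ℝ) ∂μ = n * p) ∧
    Integrable (fun ω => max (((X ω : ℕ) : ℝ) - n*p) 0) μ ∧
    (∫ ω, max (((X ω : ℕ) : ℝ) - n*p) 0 ∂μ ≤ Real.sqrt n) ∧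
    μ {ω | n < X ω} = 0 := by
  have htail : ∀ j, n < j → μ {ω | X ω = j} = 0 := by
    intro j hj
    rw [hlaw j]
    unfold bpmf
    rw [Nat.choose_eq_zero_of_lt hj]
    simp
  have htoReal : ∀ j, (μ {ω | X ω = j}).toReal = bpmf n p j := by
    intro j
    rw [hlaw j, ENNReal.toReal_ofReal (bpmf_nonneg hp0 hp1 j)]
  obtain ⟨hint1, heq1⟩ := key_integral μ hX htail (fun j => (j:ℝ))
  obtain ⟨hint2, heq2⟩ := key_integral μ hX htail (fun j => max ((j:ℝ) - n*p) 0)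
  refine ⟨hint1, ?_, hint2, ?_, tail_null μ htail⟩
  · rw [heq1]
    simp only [htoReal]
    exact bpmf_mean n p
  · rw [heq2]
    simp only [htoReal]
    set s := Real.sqrt n with hs
    have hspos : 0 < s := Real.sqrt_pos.2 (by exact_mod_cast hn)
    have hss : s * s = n := Real.mul_self_sqrt (by positivity)
    set t := s/2 with hts
    have htpos : 0 < t := by positivity
    calc ∑ j ∈ range (n+1), max ((j:ℝ) - n*p) 0 * bpmf n p j
        ≤ ∑ j ∈ range (n+1), (((j:ℝ) - n*p)^2/(4*t) + t) * bpmf n p j := by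
          refine Finset.sum_le_sum fun j _ => ?_
          exact mul_le_mul_of_nonneg_right (maxbound htpos) (bpmf_nonneg hp0 hp1 j)
      _ = (∑ j ∈ range (n+1), ((j:ℝ) - n*p)^2 * bpmf n p j)/(4*t)
            + t * (∑ j ∈ range (n+1), bpmf n p j) := by
          rw [Finset.sum_div, Finset.mul_sum, ← Finset.sum_add_distrib]
          exact Finset.sum_congr rfl fun j _ => by ring
      _ = (n * p * (1-p))/(4*t) + t := by rw [bpmf_var, bpmf_sum]; ring
      _ ≤ s := by
          have hq : (n:ℝ) * p * (1-p) / (4*t) ≤ s/2 := by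
            rw [hts]
            rw [div_le_div_iff₀ (by positivity) (by norm_num)]
            have hple : p * (1-p) ≤ 1 := by nlinarith
            have hn0 : (0:ℝ) ≤ (n:ℝ) := by positivity
            nlinarith [hss, mul_le_mul_of_nonneg_left hple hn0]
          linarith [hq]

lemma measurable_finset_sup {Ω : Type*} [MeasurableSpace Ω] {ι : Type*} [DecidableEq ι]
    (S : Finset ι) {Y : ι → Ω → ℕ} (hmeas : ∀ k, Measurable (Y k)) :
    Measurable (fun ω => (S.sup fun k => Y k ω : ℕ)) := by
  induction S using Finset.induction with
  | empty => simpa using measurable_const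
  | insert _ _ h ih =>
    simp only [Finset.sup_insert]
    exact Measurable.sup (hmeas _) ih

lemma sup_integral_bounds {Ω : Type*} [MeasurableSpace Ω] (μ : Measure Ω)
    [IsProbabilityMeasure μ] {ι : Type*} [DecidableEq ι]
    {S : Finset ι} (hS : S.Nonempty) {Y : ι → Ω → ℕ} (hmeas : ∀ k, Measurable (Y k))
    {n : ℕ} (hn : 1 ≤ n) {p : ℝ} (hp0 : 0 ≤ p) (hp1 : p ≤ 1)
    (hlaw : ∀ k ∈ S, ∀ j, μ {ω | Y k ω = j} = ENNReal.ofReal (bpmf n p j)) :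
    (n:ℝ) * p ≤ (∫ ω, ((S.sup fun k => Y k ω : ℕ) : ℝ) ∂μ) ∧
    (∫ ω, ((S.sup fun k => Y k ω : ℕ) : ℝ) ∂μ) ≤ (n:ℝ) * p + S.card * Real.sqrt n := by
  classical
  have hmom := fun k (hk : k ∈ S) => binom_moments μ (hmeas k) hn hp0 hp1 (hlaw k hk)
  have hMmeas : Measurable (fun ω => (S.sup fun k => Y k ω : ℕ)) :=
    measurable_finset_sup S hmeas
  have hMae : ∀ᵐ ω ∂μ, (S.sup fun k => Y k ω) ≤ n := by
    rw [ae_iff]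
    have hsub : {ω | ¬ (S.sup fun k => Y k ω) ≤ n} ⊆ ⋃ k ∈ S, {ω | n < Y k ω} := by
      intro ω hω
      have h : n < S.sup fun k => Y k ω := by
        have h2 : ¬ (S.sup fun k => Y k ω) ≤ n := hω
        omega
      obtain ⟨k, hk, hlt⟩ := Finset.lt_sup_iff.1 h
      exact Set.mem_biUnion hk hlt
    refine measure_mono_null hsub ?_
    exact (measure_biUnion_null_iff S.countable_toSet).2 fun k hk => (hmom k hk).2.2.2.2
  have hMint : Integrable (fun ω => ((S.sup fun k => Y k ω : ℕ) : ℝ)) μ := by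
    refine Integrable.mono' (integrable_const (n:ℝ))
      (Measurable.aestronglyMeasurable (measurable_from_nat.comp hMmeas)) ?_
    filter_upwards [hMae] with ω hω
    rw [Real.norm_eq_abs, abs_of_nonneg (Nat.cast_nonneg _)]
    exact_mod_cast hω
  obtain ⟨k0, hk0⟩ := hS
  constructor
  · -- lower bound
    have hle : ∀ ω, ((Y k0 ω : ℕ) : ℝ) ≤ ((S.sup fun k => Y k ω : ℕ) : ℝ) := fun ω => by
      exact_mod_cast Nat.cast_le.2 (Finset.le_sup (f := fun k => Y k ω) hk0)
    have := integral_mono (hmom k0 hk0).1 hMint hle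
    rw [(hmom k0 hk0).2.1] at this
    exact this
  · -- upper bound
    have hptwise : ∀ ω, ((S.sup fun k => Y k ω : ℕ) : ℝ)
        ≤ (n:ℝ) * p + ∑ k ∈ S, max (((Y k ω : ℕ) : ℝ) - n*p) 0 := by
      intro ω
      obtain ⟨ks, hks, hEq⟩ := Finset.exists_mem_eq_sup S ⟨k0, hk0⟩ (fun k => Y k ω)
      rw [hEq]
      have h1 : ((Y ks ω : ℕ) : ℝ) ≤ (n:ℝ)*p + max (((Y ks ω : ℕ) : ℝ) - n*p) 0 := by
        have := le_max_left (((Y ks ω : ℕ) : ℝ) - n*p) 0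
        linarith
      have h2 : max (((Y ks ω : ℕ) : ℝ) - n*p) 0
          ≤ ∑ k ∈ S, max (((Y k ω : ℕ) : ℝ) - n*p) 0 :=
        Finset.single_le_sum (f := fun k => max (((Y k ω : ℕ) : ℝ) - n*p) 0)
          (fun k _ => le_max_right _ _) hks
      linarith
    have hRint : Integrable
        (fun ω => (n:ℝ) * p + ∑ k ∈ S, max (((Y k ω : ℕ) : ℝ) - n*p) 0) μ := by
      exact (integrable_const _).add (integrable_finset_sum _ fun k hk => (hmom k hk).2.2.1)
    have hmono := integral_mono hMint hRint hptwise
    have hval : ∫ ω, ((n:ℝ) * p + ∑ k ∈ S, max (((Y k ω : ℕ) : ℝ) - n*p) 0) ∂μ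
        = (n:ℝ)*p + ∑ k ∈ S, ∫ ω, max (((Y k ω : ℕ) : ℝ) - n*p) 0 ∂μ := by
      rw [integral_add (integrable_const _) (integrable_finset_sum _ fun k hk => (hmom k hk).2.2.1),
        integral_const, integral_finset_sum _ fun k hk => (hmom k hk).2.2.1]
      simp
    rw [hval] at hmono
    refine hmono.trans ?_
    have hsum : ∑ k ∈ S, ∫ ω, max (((Y k ω : ℕ) : ℝ) - n*p) 0 ∂μ
        ≤ ∑ k ∈ S, Real.sqrt n := Finset.sum_le_sum fun k hk => (hmom k hk).2.2.2.1
    rw [Finset.sum_const, nsmul_eq_mul] at hsum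
    linarith

lemma sqrt_nat_tendsto : Filter.Tendsto (fun n : ℕ => Real.sqrt n) Filter.atTop Filter.atTop := by
  refine Filter.tendsto_atTop_atTop.2 fun b => ⟨Nat.ceil (b^2), fun n hn => ?_⟩
  rcases le_or_gt b 0 with hb | hb
  · exact hb.trans (Real.sqrt_nonneg _)
  · have h1 : b^2 ≤ (n:ℝ) := by
      calc b^2 ≤ (Nat.ceil (b^2) : ℝ) := Nat.le_ceil _
        _ ≤ (n:ℝ) := by exact_mod_cast hn
    calc b = Real.sqrt (b^2) := (Real.sqrt_sq hb.le).symm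
      _ ≤ Real.sqrt n := Real.sqrt_le_sqrt h1

lemma sum_identity (K m : ℕ) (hK : 1 ≤ K) (hm : 2 ≤ m) (q : ℝ) (hq : q = 1 / (m:ℝ))
    (μval : ℕ → ℝ)
    (hμval : ∀ s, μval s = (m : ℝ) * q ^ (s - 1) * (1 - q) ^ (K - s + 1)) :
    ∑ S ∈ Finset.univ.filter (fun S : Finset (Fin K) => S.Nonempty), (1/(m:ℝ)) * μval S.card
      = ((1 - q) / q) * (1 - (1 - q) ^ K) := by
  classical
  have hm0 : (0:ℝ) < m := by positivity
  have hq0 : 0 < q := by rw [hq]; positivity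
  set f : ℕ → ℝ := fun s => (1/(m:ℝ)) * μval s with hf
  have hsplit : ∑ S ∈ Finset.univ.filter (fun S : Finset (Fin K) => S.Nonempty), f S.card
      = (∑ S ∈ (Finset.univ : Finset (Finset (Fin K))), f S.card) - f 0 := by
    rw [← Finset.sum_filter_add_sum_filter_not Finset.univ (fun S : Finset (Fin K) => S.Nonempty)
      (fun S => f S.card)]
    have hempty : Finset.univ.filter (fun S : Finset (Fin K) => ¬ S.Nonempty) = {∅} := by
      ext S
      simp [Finset.not_nonempty_iff_eq_empty]
    rw [hempty]
    simp
  have hgroup : (∑ S ∈ (Finset.univ : Finset (Finset (Fin K))), f S.card)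
      = ∑ j ∈ range (K+1), (K.choose j : ℝ) * f j := by
    rw [← Finset.powerset_univ, Finset.sum_powerset_apply_card]
    simp only [Finset.card_univ, Fintype.card_fin, nsmul_eq_mul]
  have hpeel : ∑ j ∈ range (K+1), (K.choose j : ℝ) * f j
      = (∑ i ∈ range K, (K.choose (i+1) : ℝ) * f (i+1)) + f 0 := by
    rw [Finset.sum_range_succ']
    simp
  have hfval : ∀ i ∈ range K, (K.choose (i+1) : ℝ) * f (i+1)
      = (K.choose (i+1) : ℝ) * (q^i * (1-q)^(K-i)) := by
    intro i hi
    rw [hf]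
    simp only []
    rw [hμval (i+1)]
    have h1 : i + 1 - 1 = i := by omega
    have h2 : K - (i+1) + 1 = K - i := by
      have : i < K := Finset.mem_range.1 hi
      omega
    rw [h1, h2]
    field_simp
  have hqsum : q * (∑ i ∈ range K, (K.choose (i+1) : ℝ) * (q^i * (1-q)^(K-i)))
      = (1-q) * (1 - (1-q)^K) := by
    have hterm : ∀ i ∈ range K, q * ((K.choose (i+1) : ℝ) * (q^i * (1-q)^(K-i)))
        = (1-q) * bpmf K q (i+1) := by
      intro i hi
      have hik : i < K := Finset.mem_range.1 hi
      unfold bpmf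
      have h3 : K - i = (K - (i+1)) + 1 := by omega
      rw [h3]
      ring
    rw [Finset.mul_sum, Finset.sum_congr rfl hterm, ← Finset.mul_sum]
    have hb : ∑ i ∈ range K, bpmf K q (i+1) = 1 - (1-q)^K := by
      have h4 := bpmf_sum K q
      rw [Finset.sum_range_succ'] at h4
      have h5 : bpmf K q 0 = (1-q)^K := by unfold bpmf; simp
      rw [h5] at h4
      linarith
    rw [hb]
  rw [hsplit, hgroup, hpeel]
  rw [Finset.sum_congr rfl hfval]
  have := hqsum
  field_simp
  simp only [add_sub_cancel_right, mul_assoc] at hqsum ⊢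
  nlinarith [hqsum]

/-- Fix integers `K ≥ 1` and `m ≥ 2`, set `q := 1/m` and
`μval s := m·q^(s−1)·(1−q)^(K−s+1)` for `1 ≤ s ≤ K`, and assume
`μval 1 = m·(1−q)^K ≤ 1`.  For each positive integer `F'` and each nonempty
`S ⊆ [K]`, let `(Y F' S k)_{k ∈ S}` be independent `Binomial(F', μval |S|)` random
variables.  Then
`lim_{F'→∞} (1/(m·F')) · ∑_{∅≠S⊆[K]} E[max_{k∈S} Y F' S k] = ((1−q)/q)·(1−(1−q)^K)`. -/
theorem stmt11
    {Ω : Type*} [MeasurableSpace Ω] (μ : Measure Ω) [IsProbabilityMeasure μ]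
    (K m : ℕ) (hK : 1 ≤ K) (hm : 2 ≤ m)
    (q : ℝ) (hq : q = 1 / (m : ℝ))
    (μval : ℕ → ℝ) (hμval : ∀ s, μval s = (m : ℝ) * q ^ (s - 1) * (1 - q) ^ (K - s + 1))
    (hμ1 : μval 1 ≤ 1)
    (Y : ℕ → Finset (Fin K) → Fin K → Ω → ℕ)
    (hY_meas : ∀ F' S k, Measurable (Y F' S k))
    (hY_indep : ∀ F' : ℕ, 1 ≤ F' → ∀ S : Finset (Fin K), S.Nonempty →
      iIndepFun (fun k : {x : Fin K // x ∈ S} => Y F' S k.1) μ)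
    (hY_binom : ∀ F' : ℕ, 1 ≤ F' → ∀ S : Finset (Fin K), S.Nonempty → ∀ k ∈ S, ∀ j : ℕ,
      μ {ω | Y F' S k ω = j} =
        ENNReal.ofReal ((F'.choose j : ℝ) * μval S.card ^ j *
          (1 - μval S.card) ^ (F' - j))) :
    Filter.Tendsto
      (fun F' : ℕ => (1 / ((m : ℝ) * (F' : ℝ))) *
        ∑ S ∈ Finset.univ.filter (fun S : Finset (Fin K) => S.Nonempty),
          ∫ ω, ((S.sup (fun k => Y F' S k ω) : ℕ) : ℝ) ∂μ)
      Filter.atTop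
      (nhds (((1 - q) / q) * (1 - (1 - q) ^ K))) := by
  classical
  have hm0 : (0:ℝ) < m := by positivity
  have hq0 : 0 < q := by rw [hq]; positivity
  have hqhalf : q ≤ 1/2 := by
    rw [hq]
    rw [div_le_div_iff₀ (by positivity) (by norm_num)]
    have : (2:ℝ) ≤ m := by exact_mod_cast hm
    linarith
  have h1q : 0 < 1 - q := by linarith
  have hp0 : ∀ s, 0 ≤ μval s := by
    intro s
    rw [hμval s]
    positivity
  have hμ1eq : μval 1 = (m:ℝ) * (1-q)^K := by
    rw [hμval 1]
    have h1 : 1 - 1 = 0 := rfl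
    have h2 : K - 1 + 1 = K := by omega
    rw [h1, h2]
    simp
  have hple : ∀ S : Finset (Fin K), S.Nonempty → μval S.card ≤ 1 := by
    intro S hS
    set s := S.card with hscard
    have hs1 : 1 ≤ s := Finset.card_pos.2 hS
    have hsK : s ≤ K := by
      have := Finset.card_le_univ S
      simpa using this
    have hmono : μval s ≤ μval 1 := by
      rw [hμval s, hμ1eq]
      have hqp : q ^ (s-1) ≤ (1-q) ^ (s-1) := by
        refine pow_le_pow_left₀ hq0.le (by linarith) _
      have hpow : (1-q) ^ (s-1) * (1-q) ^ (K - s + 1) = (1-q)^K := by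
        rw [← pow_add]
        congr 1
        omega
      calc (m:ℝ) * q ^ (s-1) * (1-q) ^ (K-s+1)
          ≤ (m:ℝ) * (1-q) ^ (s-1) * (1-q) ^ (K-s+1) := by
            have := mul_le_mul_of_nonneg_right
              (mul_le_mul_of_nonneg_left hqp hm0.le) (by positivity : (0:ℝ) ≤ (1-q)^(K-s+1))
            linarith [this]
        _ = (m:ℝ) * (1-q)^K := by rw [mul_assoc, hpow]
    exact hmono.trans hμ1
  -- per-S tendsto
  have hTendS : ∀ S : Finset (Fin K), S.Nonempty →
      Filter.Tendsto (fun F' : ℕ => (1/(F':ℝ)) *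
        ∫ ω, ((S.sup (fun k => Y F' S k ω) : ℕ) : ℝ) ∂μ)
        Filter.atTop (nhds (μval S.card)) := by
    intro S hS
    set p := μval S.card with hp
    have hbounds : ∀ F' : ℕ, 1 ≤ F' →
        (F':ℝ) * p ≤ (∫ ω, ((S.sup (fun k => Y F' S k ω) : ℕ) : ℝ) ∂μ) ∧
        (∫ ω, ((S.sup (fun k => Y F' S k ω) : ℕ) : ℝ) ∂μ)
          ≤ (F':ℝ) * p + S.card * Real.sqrt F' := by
      intro F' hF'
      refine sup_integral_bounds μ hS (hY_meas F' S) hF' (hp0 _) (hple S hS) ?_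
      intro k hk j
      rw [hY_binom F' hF' S hS k hk j]
      rfl
    have hKcard : (S.card : ℝ) ≤ K := by
      have := Finset.card_le_univ S
      have h2 : S.card ≤ K := by simpa using this
      exact_mod_cast h2
    have hupperlim : Filter.Tendsto (fun F' : ℕ => p + (K:ℝ) / Real.sqrt F')
        Filter.atTop (nhds p) := by
      have h0 : Filter.Tendsto (fun F' : ℕ => (K:ℝ) / Real.sqrt F')
          Filter.atTop (nhds 0) :=
        Filter.Tendsto.div_atTop tendsto_const_nhds sqrt_nat_tendsto
      have := Filter.Tendsto.add (tendsto_const_nhds (x := p) (f := Filter.atTop)) h0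
      simpa using this
    refine tendsto_of_tendsto_of_tendsto_of_le_of_le' tendsto_const_nhds hupperlim ?_ ?_
    · filter_upwards [Filter.eventually_ge_atTop 1] with F' hF'
      have hF'pos : (0:ℝ) < F' := by exact_mod_cast hF'
      have h := (hbounds F' hF').1
      calc p = (1/(F':ℝ)) * ((F':ℝ) * p) := by field_simp
        _ ≤ (1/(F':ℝ)) * (∫ ω, ((S.sup (fun k => Y F' S k ω) : ℕ) : ℝ) ∂μ) :=
          mul_le_mul_of_nonneg_left h (by positivity)
    · filter_upwards [Filter.eventually_ge_atTop 1] with F' hF'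
      have hF'pos : (0:ℝ) < F' := by exact_mod_cast hF'
      have hsq : Real.sqrt F' / F' = 1 / Real.sqrt F' := Real.sqrt_div_self'
      have hsqpos : 0 < Real.sqrt F' := Real.sqrt_pos.2 hF'pos
      have h := (hbounds F' hF').2
      have h2 : (1/(F':ℝ)) * (∫ ω, ((S.sup (fun k => Y F' S k ω) : ℕ) : ℝ) ∂μ)
          ≤ (1/(F':ℝ)) * ((F':ℝ) * p + S.card * Real.sqrt F') := by
        exact mul_le_mul_of_nonneg_left h (by positivity)
      refine h2.trans ?_
      have h3 : (1/(F':ℝ)) * ((F':ℝ) * p + S.card * Real.sqrt F')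
          = p + (S.card:ℝ) * (Real.sqrt F' / F') := by
        field_simp
      rw [h3, hsq]
      have h4 : (S.card:ℝ) * (1 / Real.sqrt F') ≤ (K:ℝ) * (1 / Real.sqrt F') :=
        mul_le_mul_of_nonneg_right hKcard (by positivity)
      calc p + (S.card:ℝ) * (1 / Real.sqrt F') ≤ p + (K:ℝ) * (1 / Real.sqrt F') := by linarith
        _ = p + (K:ℝ) / Real.sqrt F' := by rw [mul_one_div]
  -- assemble
  have hrw : ∀ F' : ℕ, (1 / ((m : ℝ) * (F' : ℝ))) *
        ∑ S ∈ Finset.univ.filter (fun S : Finset (Fin K) => S.Nonempty),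
          ∫ ω, ((S.sup (fun k => Y F' S k ω) : ℕ) : ℝ) ∂μ
      = ∑ S ∈ Finset.univ.filter (fun S : Finset (Fin K) => S.Nonempty),
          (1/(m:ℝ)) * ((1/(F':ℝ)) * ∫ ω, ((S.sup (fun k => Y F' S k ω) : ℕ) : ℝ) ∂μ) := by
    intro F'
    rw [Finset.mul_sum]
    refine Finset.sum_congr rfl fun S _ => ?_
    rw [one_div, mul_inv, one_div, one_div]
    ring
  have hsum := sum_identity K m hK hm q hq μval hμval
  have hfinal : Filter.Tendsto
      (fun F' : ℕ => ∑ S ∈ Finset.univ.filter (fun S : Finset (Fin K) => S.Nonempty),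
          (1/(m:ℝ)) * ((1/(F':ℝ)) * ∫ ω, ((S.sup (fun k => Y F' S k ω) : ℕ) : ℝ) ∂μ))
      Filter.atTop
      (nhds (∑ S ∈ Finset.univ.filter (fun S : Finset (Fin K) => S.Nonempty),
          (1/(m:ℝ)) * μval S.card)) := by
    refine tendsto_finset_sum _ fun S hSmem => ?_
    have hSne : S.Nonempty := (Finset.mem_filter.1 hSmem).2
    exact (hTendS S hSne).const_mul _
  rw [hsum] at hfinal
  exact hfinal.congr fun F' => (hrw F').symm
end
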